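/- arXiv:1610.03999 — 6 statements merged into one kernel-verified Lean document; each statement's English description precedes it below -/
import Mathlib

section
/- Let k ≥ 1 and let p, q, r be integers with 1 ≤ p, q, r ≤ k and p + q + r odd. Then the graph T_{2k+1}(p,q,r) — obtained from three vertices u, v, w by joining u to v by two internally disjoint paths of lengths p and 2k+1−p, u to w by two internally disjoint paths of lengths q and 2k+1−q, and v to w by two internally disjoint paths of lengths r and 2k+1−r — has odd-girth at least 2k+1 if and only if p + q + r ≥ 2k+1. -/
open SimpleGraph

/-- `G` has odd-girth at least `n`: every odd cycle has length at least `n`. -/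
def oddGirthAtLeast {V : Type*} (G : SimpleGraph V) (n : ℕ) : Prop :=
  ∀ (x : V) (w : G.Walk x x), w.IsCycle → Odd w.length → n ≤ w.length

/-- The lengths of the six paths of `T_{2k+1}(p,q,r)`. -/
def pathLen (k p q r : ℕ) : Fin 6 → ℕ :=
  ![p, 2*k+1-p, q, 2*k+1-q, r, 2*k+1-r]

/-- The endpoints (among `u,v,w`, numbered `0,1,2`) of the six paths:
paths `0,1` join `u,v`, paths `2,3` join `u,w`, paths `4,5` join `v,w`. -/
def pathEnds : Fin 6 → Fin 3 × Fin 3 :=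
  ![(0,1), (0,1), (0,2), (0,2), (1,2), (1,2)]

/-- Vertices of `T_{2k+1}(p,q,r)`: the three main vertices `u,v,w` together with
the internal vertices of the six paths (a path of length `L` has `L-1` internal
vertices). -/
def TVert (k p q r : ℕ) : Type :=
  Fin 3 ⊕ Σ i : Fin 6, Fin (pathLen k p q r i - 1)

/-- Base adjacency relation for `T_{2k+1}(p,q,r)`. -/
def TAdjBase (k p q r : ℕ) : TVert k p q r → TVert k p q r → Prop
  | Sum.inl a, Sum.inl b =>
      ∃ i, pathLen k p q r i = 1 ∧ pathEnds i = (a, b)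
  | Sum.inl a, Sum.inr ⟨i, j⟩ =>
      ((j : ℕ) = 0 ∧ (pathEnds i).1 = a) ∨
      ((j : ℕ) + 2 = pathLen k p q r i ∧ (pathEnds i).2 = a)
  | Sum.inr ⟨i, j⟩, Sum.inr ⟨i', j'⟩ =>
      ∃ _ : i = i', (j' : ℕ) = (j : ℕ) + 1
  | _, _ => False

/-- The graph `T_{2k+1}(p,q,r)`: three vertices `u,v,w`, with `u,v` joined by two
internally disjoint paths of lengths `p` and `2k+1-p`, `u,w` by paths of lengths
`q` and `2k+1-q`, and `v,w` by paths of lengths `r` and `2k+1-r`. -/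
def TGraph (k p q r : ℕ) : SimpleGraph (TVert k p q r) :=
  SimpleGraph.fromRel (TAdjBase k p q r)


def walkOfFn {V : Type*} (G : SimpleGraph V) (f : ℕ → V) :
    ∀ n, (∀ t, t < n → G.Adj (f t) (f (t+1))) → G.Walk (f 0) (f n)
  | 0, _ => Walk.nil
  | n+1, h => (walkOfFn G f n (fun t ht => h t (by omega))).concat (h n (by omega))

lemma walkOfFn_length {V : Type*} (G : SimpleGraph V) (f : ℕ → V) (n : ℕ)
    (h : ∀ t, t < n → G.Adj (f t) (f (t+1))) : (walkOfFn G f n h).length = n := by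
  induction n with
  | zero => rfl
  | succ n ih => rw [walkOfFn, Walk.length_concat, ih]

lemma walkOfFn_support {V : Type*} (G : SimpleGraph V) (f : ℕ → V) (n : ℕ)
    (h : ∀ t, t < n → G.Adj (f t) (f (t+1))) :
    (walkOfFn G f n h).support = (List.range (n+1)).map f := by
  induction n with
  | zero => rfl
  | succ n ih =>
      rw [walkOfFn, Walk.support_concat, ih]
      simp only [List.concat_eq_append, List.range_succ, List.map_append]
      simp

lemma walkOfFn_edges {V : Type*} (G : SimpleGraph V) (f : ℕ → V) (n : ℕ)
    (h : ∀ t, t < n → G.Adj (f t) (f (t+1))) :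
    (walkOfFn G f n h).edges = (List.range n).map (fun t => s(f t, f (t+1))) := by
  induction n with
  | zero => rfl
  | succ n ih =>
      rw [walkOfFn, Walk.edges_concat, ih, List.range_succ]
      simp

section Flow
variable (k p q r : ℕ)

def Lz : Fin 6 → ℤ := fun i => (pathLen k p q r i : ℤ)

def relVec : Fin 4 → (Fin 6 → ℤ) :=
  ![Pi.single 0 (Lz k p q r 0) - Pi.single 1 (Lz k p q r 1),
    Pi.single 2 (Lz k p q r 2) - Pi.single 3 (Lz k p q r 3),
    Pi.single 4 (Lz k p q r 4) - Pi.single 5 (Lz k p q r 5),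
    Pi.single 0 (Lz k p q r 0) - Pi.single 2 (Lz k p q r 2) + Pi.single 4 (Lz k p q r 4)]

def TSpan : Submodule ℤ (Fin 6 → ℤ) := Submodule.span ℤ (Set.range (relVec k p q r))

abbrev QMod := (Fin 6 → ℤ) ⧸ TSpan k p q r

def baseVec : Fin 3 → (Fin 6 → ℤ) :=
  ![0, Pi.single 0 (Lz k p q r 0), Pi.single 2 (Lz k p q r 2)]

def phi : TVert k p q r → QMod k p q r
  | Sum.inl a => Submodule.Quotient.mk (baseVec k p q r a)
  | Sum.inr ⟨i, j⟩ =>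
      Submodule.Quotient.mk (baseVec k p q r (pathEnds i).1 + Pi.single i ((j : ℤ) + 1))

lemma relVec_mem (j : Fin 4) : relVec k p q r j ∈ TSpan k p q r :=
  Submodule.subset_span (Set.mem_range_self j)

lemma relVec_eval2 : relVec k p q r 2 =
    Pi.single 4 (Lz k p q r 4) - Pi.single 5 (Lz k p q r 5) := rfl

lemma relVec_eval3 : relVec k p q r 3 =
    Pi.single 0 (Lz k p q r 0) - Pi.single 2 (Lz k p q r 2) + Pi.single 4 (Lz k p q r 4) := rfl

lemma endpoint_consistent (i : Fin 6) :
    (Submodule.Quotient.mk (baseVec k p q r (pathEnds i).2) : QMod k p q r) =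
      Submodule.Quotient.mk (baseVec k p q r (pathEnds i).1 + Pi.single i (Lz k p q r i)) := by
  have mem := relVec_mem k p q r
  fin_cases i <;> rw [Submodule.Quotient.eq]
  · show Pi.single (0 : Fin 6) (Lz k p q r 0) - ((0 : Fin 6 → ℤ) + Pi.single (0 : Fin 6) (Lz k p q r 0)) ∈
      TSpan k p q r
    have h : Pi.single (0 : Fin 6) (Lz k p q r 0) - ((0 : Fin 6 → ℤ) + Pi.single (0 : Fin 6) (Lz k p q r 0)) =
        0 := by abel
    rw [h]; exact zero_mem _
  · show Pi.single (0 : Fin 6) (Lz k p q r 0) - ((0 : Fin 6 → ℤ) + Pi.single (1 : Fin 6) (Lz k p q r 1)) ∈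
      TSpan k p q r
    have h : Pi.single (0 : Fin 6) (Lz k p q r 0) - ((0 : Fin 6 → ℤ) + Pi.single (1 : Fin 6) (Lz k p q r 1)) =
        relVec k p q r 0 := by
      show Pi.single (0 : Fin 6) (Lz k p q r 0) - ((0 : Fin 6 → ℤ) + Pi.single (1 : Fin 6) (Lz k p q r 1)) =
        Pi.single (0 : Fin 6) (Lz k p q r 0) - Pi.single (1 : Fin 6) (Lz k p q r 1)
      abel
    rw [h]; exact mem 0
  · show Pi.single (2 : Fin 6) (Lz k p q r 2) - ((0 : Fin 6 → ℤ) + Pi.single (2 : Fin 6) (Lz k p q r 2)) ∈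
      TSpan k p q r
    have h : Pi.single (2 : Fin 6) (Lz k p q r 2) - ((0 : Fin 6 → ℤ) + Pi.single (2 : Fin 6) (Lz k p q r 2)) =
        0 := by abel
    rw [h]; exact zero_mem _
  · show Pi.single (2 : Fin 6) (Lz k p q r 2) - ((0 : Fin 6 → ℤ) + Pi.single (3 : Fin 6) (Lz k p q r 3)) ∈
      TSpan k p q r
    have h : Pi.single (2 : Fin 6) (Lz k p q r 2) - ((0 : Fin 6 → ℤ) + Pi.single (3 : Fin 6) (Lz k p q r 3)) =
        relVec k p q r 1 := by
      show Pi.single (2 : Fin 6) (Lz k p q r 2) - ((0 : Fin 6 → ℤ) + Pi.single (3 : Fin 6) (Lz k p q r 3)) =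
        Pi.single (2 : Fin 6) (Lz k p q r 2) - Pi.single (3 : Fin 6) (Lz k p q r 3)
      abel
    rw [h]; exact mem 1
  · show Pi.single (2 : Fin 6) (Lz k p q r 2) -
        (Pi.single (0 : Fin 6) (Lz k p q r 0) + Pi.single (4 : Fin 6) (Lz k p q r 4)) ∈ TSpan k p q r
    have h : Pi.single (2 : Fin 6) (Lz k p q r 2) -
        (Pi.single (0 : Fin 6) (Lz k p q r 0) + Pi.single (4 : Fin 6) (Lz k p q r 4)) = -relVec k p q r 3 := by
      rw [relVec_eval3]; abel
    rw [h]; exact neg_mem (mem 3)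
  · show Pi.single (2 : Fin 6) (Lz k p q r 2) -
        (Pi.single (0 : Fin 6) (Lz k p q r 0) + Pi.single (5 : Fin 6) (Lz k p q r 5)) ∈ TSpan k p q r
    have h : Pi.single (2 : Fin 6) (Lz k p q r 2) -
        (Pi.single (0 : Fin 6) (Lz k p q r 0) + Pi.single (5 : Fin 6) (Lz k p q r 5)) =
        relVec k p q r 2 - relVec k p q r 3 := by
      rw [relVec_eval2, relVec_eval3]; abel
    rw [h]; exact sub_mem (mem 2) (mem 3)

end Flow

section Flow2
variable (k p q r : ℕ)

lemma base_step {x y : TVert k p q r} (h : TAdjBase k p q r x y) :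
    ∃ (i : Fin 6) (ε : ℤ), (ε = 1 ∨ ε = -1) ∧
      phi k p q r y = phi k p q r x + Submodule.Quotient.mk (Pi.single i ε) := by
  rcases x with a | ⟨i, j⟩ <;> rcases y with b | ⟨i', j'⟩
  · obtain ⟨i, hL, hends⟩ := h
    have ha : (pathEnds i).1 = a := by rw [hends]
    have hb : (pathEnds i).2 = b := by rw [hends]
    refine ⟨i, 1, Or.inl rfl, ?_⟩
    have hLz : Lz k p q r i = 1 := by simp [Lz, hL]
    show (Submodule.Quotient.mk (baseVec k p q r b) : QMod k p q r) = _
    rw [← hb, ← ha, endpoint_consistent, hLz, Submodule.Quotient.mk_add]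
    rfl
  · rcases h with ⟨hj, ha⟩ | ⟨hj, ha⟩
    · refine ⟨i', 1, Or.inl rfl, ?_⟩
      show (Submodule.Quotient.mk
          (baseVec k p q r (pathEnds i').1 + Pi.single i' ((j' : ℤ) + 1)) : QMod k p q r) = _
      rw [ha]
      have : ((j' : ℤ) + 1) = 1 := by rw [hj]; norm_num
      rw [this, Submodule.Quotient.mk_add]
      rfl
    · refine ⟨i', -1, Or.inr rfl, ?_⟩
      have hcast : Lz k p q r i' + (-1) = (j' : ℤ) + 1 := by
        have : ((j' : ℕ) : ℤ) + 2 = Lz k p q r i' := by exact_mod_cast congrArg Nat.cast hj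
        omega
      show (Submodule.Quotient.mk
          (baseVec k p q r (pathEnds i').1 + Pi.single i' ((j' : ℤ) + 1)) : QMod k p q r) = _
      rw [← hcast, Pi.single_add, ← add_assoc, Submodule.Quotient.mk_add,
        ← endpoint_consistent, ha]
      rfl
  · exact h.elim
  · obtain ⟨hi, hj⟩ := h
    subst hi
    refine ⟨i, 1, Or.inl rfl, ?_⟩
    have : ((j' : ℤ) + 1) = ((j : ℤ) + 1) + 1 := by
      have : ((j' : ℕ) : ℤ) = (j : ℕ) + 1 := by exact_mod_cast congrArg Nat.cast hj
      omega
    show (Submodule.Quotient.mk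
        (baseVec k p q r (pathEnds i).1 + Pi.single i ((j' : ℤ) + 1)) : QMod k p q r) = _
    rw [this, Pi.single_add, ← add_assoc, Submodule.Quotient.mk_add]
    rfl

lemma edge_step {x y : TVert k p q r} (h : (TGraph k p q r).Adj x y) :
    ∃ (i : Fin 6) (ε : ℤ), (ε = 1 ∨ ε = -1) ∧
      phi k p q r y = phi k p q r x + Submodule.Quotient.mk (Pi.single i ε) := by
  rw [TGraph, fromRel_adj] at h
  rcases h with ⟨-, hb | hb⟩
  · exact base_step k p q r hb
  · obtain ⟨i, ε, hε, heq⟩ := base_step k p q r hb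
    refine ⟨i, -ε, by rcases hε with h | h <;> simp [h], ?_⟩
    have hneg : Pi.single i (-ε) = -(Pi.single i ε : Fin 6 → ℤ) := by
      funext t; by_cases ht : t = i <;> simp [Pi.single_apply, ht]
    rw [hneg, Submodule.Quotient.mk_neg, heq]
    abel

lemma walk_flow {x y : TVert k p q r} (W : (TGraph k p q r).Walk x y) :
    ∃ z : Fin 6 → ℤ, (∑ i, |z i|) ≤ W.length ∧ (2:ℤ) ∣ (∑ i, z i) - W.length ∧
      (Submodule.Quotient.mk z : QMod k p q r) = phi k p q r y - phi k p q r x := by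
  induction W with
  | nil => exact ⟨0, by simp, by simp, by simp⟩
  | @cons x c y h W ih =>
      obtain ⟨z, hle, hpar, hmk⟩ := ih
      obtain ⟨i, ε, hε, heq⟩ := edge_step k p q r h
      have hε1 : |ε| = 1 := by rcases hε with h | h <;> rw [h] <;> norm_num
      refine ⟨z + (Pi.single i ε : Fin 6 → ℤ), ?_, ?_, ?_⟩
      · have hone : (∑ t, |(Pi.single i ε : Fin 6 → ℤ) t|) = 1 := by
          have h1 : ∀ t, |(Pi.single i ε : Fin 6 → ℤ) t| =
              (Pi.single i (1:ℤ) : Fin 6 → ℤ) t := by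
            intro t
            by_cases ht : t = i <;> simp [Pi.single_apply, ht, hε1]
          rw [Finset.sum_congr rfl (fun t _ => h1 t), Finset.sum_pi_single']
          simp
        calc (∑ t, |(z + (Pi.single i ε : Fin 6 → ℤ)) t|)
            ≤ ∑ t, (|z t| + |(Pi.single i ε : Fin 6 → ℤ) t|) :=
              Finset.sum_le_sum (fun t _ => by rw [Pi.add_apply]; exact abs_add_le _ _)
          _ = (∑ t, |z t|) + ∑ t, |(Pi.single i ε : Fin 6 → ℤ) t| := Finset.sum_add_distrib
          _ ≤ W.length + 1 := by rw [hone]; exact add_le_add_left hle 1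
          _ = ((Walk.cons h W).length : ℤ) := by rw [Walk.length_cons]; push_cast; ring
      · have hsum : (∑ t, (z + (Pi.single i ε : Fin 6 → ℤ)) t) = (∑ t, z t) + ε := by
          simp only [Pi.add_apply]
          rw [Finset.sum_add_distrib, Finset.sum_pi_single']
          simp
        rw [hsum, Walk.length_cons]
        push_cast
        have : (∑ t, z t) + ε - (W.length + 1) = ((∑ t, z t) - W.length) + (ε - 1) := by ring
        rw [this]
        refine dvd_add hpar ?_
        rcases hε with h | h <;> rw [h] <;> norm_num
      · rw [Submodule.Quotient.mk_add, hmk, heq]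
        abel

end Flow2

lemma key_arith (P Q R K : ℤ) (hp : 1 ≤ P) (hp' : P ≤ K) (hq : 1 ≤ Q) (hq' : Q ≤ K)
    (hr : 1 ≤ R) (hr' : R ≤ K) (hsum : 2*K+1 ≤ P+Q+R) (a b c d : ℤ)
    (hodd : ¬ (2 ∣ (|a+d| * P + |a| * (2*K+1-P) + |b-d| * Q + |b| * (2*K+1-Q)
      + |c+d| * R + |c| * (2*K+1-R)))) :
    2*K+1 ≤ |a+d| * P + |a| * (2*K+1-P) + |b-d| * Q + |b| * (2*K+1-Q)
      + |c+d| * R + |c| * (2*K+1-R) := by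
  by_cases hd : d = 0
  · subst hd
    simp only [add_zero, sub_zero] at *
    by_cases hz : |a| + |b| + |c| = 0
    · exfalso
      apply hodd
      have hna := abs_nonneg a; have hnb := abs_nonneg b; have hnc := abs_nonneg c
      have ha : |a| = 0 := by omega
      have hb : |b| = 0 := by omega
      have hc : |c| = 0 := by omega
      rw [ha, hb, hc]
      simp
    · have h1 : 1 ≤ |a| + |b| + |c| := by
        have := abs_nonneg a; have := abs_nonneg b; have := abs_nonneg c; omega
      nlinarith [abs_nonneg a, abs_nonneg b, abs_nonneg c]
  · have hd1 : 1 ≤ |d| := by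
      rcases lt_or_ge d 0 with h | h
      · rw [abs_of_neg h]; omega
      · rw [abs_of_nonneg h]; omega
    have e1 : |d| ≤ |a+d| + |a| := by
      calc |d| = |(a+d) + (-a)| := by ring_nf
        _ ≤ |a+d| + |(-a)| := abs_add_le _ _
        _ = |a+d| + |a| := by rw [abs_neg]
    have e2 : |d| ≤ |b-d| + |b| := by
      calc |d| = |(b - (b-d))| := by ring_nf
        _ ≤ |b| + |b-d| := abs_sub _ _
        _ = |b-d| + |b| := by ring
    have e3 : |d| ≤ |c+d| + |c| := by
      calc |d| = |(c+d) + (-c)| := by ring_nf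
        _ ≤ |c+d| + |(-c)| := abs_add_le _ _
        _ = |c+d| + |c| := by rw [abs_neg]
    have f1 : |a| * P ≤ |a| * (2*K+1-P) :=
      mul_le_mul_of_nonneg_left (by linarith) (abs_nonneg a)
    have f2 : |b| * Q ≤ |b| * (2*K+1-Q) :=
      mul_le_mul_of_nonneg_left (by linarith) (abs_nonneg b)
    have f3 : |c| * R ≤ |c| * (2*K+1-R) :=
      mul_le_mul_of_nonneg_left (by linarith) (abs_nonneg c)
    have g1 : |d| * P ≤ (|a+d| + |a|) * P :=
      mul_le_mul_of_nonneg_right e1 (by linarith)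
    have g2 : |d| * Q ≤ (|b-d| + |b|) * Q :=
      mul_le_mul_of_nonneg_right e2 (by linarith)
    have g3 : |d| * R ≤ (|c+d| + |c|) * R :=
      mul_le_mul_of_nonneg_right e3 (by linarith)
    have hdP : P + Q + R ≤ |d| * (P + Q + R) := by
      nlinarith
    nlinarith [abs_nonneg (a+d), abs_nonneg (b-d), abs_nonneg (c+d)]

section Back
variable (k p q r : ℕ)

lemma relVec_eval0 (k p q r : ℕ) : relVec k p q r 0 =
    Pi.single 0 (Lz k p q r 0) - Pi.single 1 (Lz k p q r 1) := rfl

lemma relVec_eval1 (k p q r : ℕ) : relVec k p q r 1 =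
    Pi.single 2 (Lz k p q r 2) - Pi.single 3 (Lz k p q r 3) := rfl

lemma backward (hp : 1 ≤ p) (hp' : p ≤ k) (hq : 1 ≤ q) (hq' : q ≤ k)
    (hr : 1 ≤ r) (hr' : r ≤ k) (hsum : 2*k+1 ≤ p + q + r) :
    oddGirthAtLeast (TGraph k p q r) (2*k+1) := by
  intro x w hcyc hwodd
  obtain ⟨z, hle, hpar, hmk⟩ := walk_flow k p q r w
  rw [sub_self, Submodule.Quotient.mk_eq_zero] at hmk
  obtain ⟨c, hc⟩ := (Submodule.mem_span_range_iff_exists_fun ℤ).mp hmk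
  have hz : ∀ i, z i = ∑ j, (c j • relVec k p q r j) i := by
    intro i; rw [← hc]; exact (Finset.sum_apply i Finset.univ _)
  have h0 : z 0 = (c 0 + c 3) * Lz k p q r 0 := by
    rw [hz 0, Fin.sum_univ_four]
    simp [relVec_eval0, relVec_eval1, relVec_eval2, relVec_eval3, Pi.single_apply]
    ring
  have h1 : z 1 = -(c 0) * Lz k p q r 1 := by
    rw [hz 1, Fin.sum_univ_four]
    simp [relVec_eval0, relVec_eval1, relVec_eval2, relVec_eval3, Pi.single_apply]
  have h2 : z 2 = (c 1 - c 3) * Lz k p q r 2 := by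
    rw [hz 2, Fin.sum_univ_four]
    simp [relVec_eval0, relVec_eval1, relVec_eval2, relVec_eval3, Pi.single_apply]
    ring
  have h3 : z 3 = -(c 1) * Lz k p q r 3 := by
    rw [hz 3, Fin.sum_univ_four]
    simp [relVec_eval0, relVec_eval1, relVec_eval2, relVec_eval3, Pi.single_apply]
  have h4 : z 4 = (c 2 + c 3) * Lz k p q r 4 := by
    rw [hz 4, Fin.sum_univ_four]
    simp [relVec_eval0, relVec_eval1, relVec_eval2, relVec_eval3, Pi.single_apply]
    ring
  have h5 : z 5 = -(c 2) * Lz k p q r 5 := by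
    rw [hz 5, Fin.sum_univ_four]
    simp [relVec_eval0, relVec_eval1, relVec_eval2, relVec_eval3, Pi.single_apply]
  -- lengths as integers
  have L0 : Lz k p q r 0 = (p : ℤ) := rfl
  have L1 : Lz k p q r 1 = 2*(k:ℤ)+1-(p:ℤ) := by
    show ((2*k+1-p : ℕ) : ℤ) = 2*(k:ℤ)+1-(p:ℤ); omega
  have L2 : Lz k p q r 2 = (q : ℤ) := rfl
  have L3 : Lz k p q r 3 = 2*(k:ℤ)+1-(q:ℤ) := by
    show ((2*k+1-q : ℕ) : ℤ) = 2*(k:ℤ)+1-(q:ℤ); omega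
  have L4 : Lz k p q r 4 = (r : ℤ) := rfl
  have L5 : Lz k p q r 5 = 2*(k:ℤ)+1-(r:ℤ) := by
    show ((2*k+1-r : ℕ) : ℤ) = 2*(k:ℤ)+1-(r:ℤ); omega
  have hS : (∑ i, |z i|) = |c 0 + c 3| * (p:ℤ) + |c 0| * (2*(k:ℤ)+1-(p:ℤ))
      + |c 1 - c 3| * (q:ℤ) + |c 1| * (2*(k:ℤ)+1-(q:ℤ))
      + |c 2 + c 3| * (r:ℤ) + |c 2| * (2*(k:ℤ)+1-(r:ℤ)) := by
    rw [Fin.sum_univ_six, h0, h1, h2, h3, h4, h5, L0, L1, L2, L3, L4, L5]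
    rw [abs_mul, abs_mul, abs_mul, abs_mul, abs_mul, abs_mul]
    rw [abs_of_nonneg (by omega : (0:ℤ) ≤ (p:ℤ)),
      abs_of_nonneg (by omega : (0:ℤ) ≤ 2*(k:ℤ)+1-(p:ℤ)),
      abs_of_nonneg (by omega : (0:ℤ) ≤ (q:ℤ)),
      abs_of_nonneg (by omega : (0:ℤ) ≤ 2*(k:ℤ)+1-(q:ℤ)),
      abs_of_nonneg (by omega : (0:ℤ) ≤ (r:ℤ)),
      abs_of_nonneg (by omega : (0:ℤ) ≤ 2*(k:ℤ)+1-(r:ℤ)), abs_neg, abs_neg, abs_neg]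
  -- parity : sum of abs has same parity as walk length
  have habsz : ∀ t : ℤ, (2:ℤ) ∣ (|t| - t) := by
    intro t
    rcases abs_cases t with ⟨h, -⟩ | ⟨h, -⟩
    · rw [h]; simp
    · rw [h]; exact ⟨-t, by ring⟩
  have hpar2 : (2:ℤ) ∣ ((∑ i, |z i|) - (∑ i, z i)) := by
    rw [← Finset.sum_sub_distrib]
    exact Finset.dvd_sum (fun t _ => habsz (z t))
  have hoddS : ¬ (2:ℤ) ∣ (∑ i, |z i|) := by
    intro hdvd
    have hL : (2:ℤ) ∣ ((∑ i, |z i|) - ((w.length : ℤ))) := by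
      have := dvd_add hpar2 hpar
      simpa using this
    have : (2:ℤ) ∣ (w.length : ℤ) := by
      have := dvd_sub hdvd hL
      simpa using this
    obtain ⟨m, hm⟩ := hwodd
    omega
  rw [hS] at hoddS hle
  have hkey := key_arith (p:ℤ) (q:ℤ) (r:ℤ) (k:ℤ)
    (by omega) (by omega) (by omega) (by omega) (by omega) (by omega) (by omega)
    (c 0) (c 1) (c 2) (c 3) hoddS
  omega

end Back

section Tri
variable (k p q r : ℕ)

def triF (t : ℕ) : TVert k p q r :=
  if h1 : t = 0 ∨ p + r + q ≤ t then Sum.inl 0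
  else if h2 : t < p then Sum.inr ⟨0, ⟨t - 1, by
    show t - 1 < p - 1; push_neg at h1; omega⟩⟩
  else if h3 : t = p then Sum.inl 1
  else if h4 : t < p + r then Sum.inr ⟨4, ⟨t - p - 1, by
    show t - p - 1 < r - 1; push_neg at h1; omega⟩⟩
  else if h5 : t = p + r then Sum.inl 2
  else Sum.inr ⟨2, ⟨p + r + q - t - 1, by
    show p + r + q - t - 1 < q - 1; push_neg at h1; omega⟩⟩

lemma triF_0 : triF k p q r 0 = Sum.inl 0 := by
  erw [triF, dif_pos (Or.inl rfl)]

lemma triF_last {t : ℕ} (h : p + r + q ≤ t) : triF k p q r t = Sum.inl 0 := by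
  erw [triF, dif_pos (Or.inr h)]

lemma triF_endv (hp : 1 ≤ p) (hrq : 1 ≤ r + q) : triF k p q r p = Sum.inl 1 := by
  erw [triF, dif_neg (show ¬(p = 0 ∨ p + r + q ≤ p) by omega),
    dif_neg (show ¬(p < p) by omega), dif_pos rfl]

lemma triF_endw (hp : 1 ≤ p) (hq : 1 ≤ q) (hr : 1 ≤ r) : triF k p q r (p + r) = Sum.inl 2 := by
  erw [triF, dif_neg (show ¬(p + r = 0 ∨ p + r + q ≤ p + r) by push_neg; omega),
    dif_neg (show ¬(p + r < p) by omega), dif_neg (show ¬(p + r = p) by omega),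
    dif_neg (show ¬(p + r < p + r) by omega), dif_pos rfl]

lemma triF_seg0 {t : ℕ} (h1 : 1 ≤ t) (h2 : t < p)
    (hpf : t - 1 < pathLen k p q r 0 - 1) :
    triF k p q r t = Sum.inr ⟨0, ⟨t - 1, hpf⟩⟩ := by
  erw [triF, dif_neg (show ¬(t = 0 ∨ p + r + q ≤ t) by omega), dif_pos h2]

lemma triF_seg4 {t : ℕ} (h1 : p < t) (h2 : t < p + r)
    (hpf : t - p - 1 < pathLen k p q r 4 - 1) :
    triF k p q r t = Sum.inr ⟨4, ⟨t - p - 1, hpf⟩⟩ := by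
  erw [triF, dif_neg (show ¬(t = 0 ∨ p + r + q ≤ t) by omega),
    dif_neg (show ¬(t < p) by omega), dif_neg (show ¬(t = p) by omega), dif_pos h2]

lemma triF_seg2 {t : ℕ} (h1 : p + r < t) (h2 : t < p + r + q)
    (hpf : p + r + q - t - 1 < pathLen k p q r 2 - 1) :
    triF k p q r t = Sum.inr ⟨2, ⟨p + r + q - t - 1, hpf⟩⟩ := by
  erw [triF, dif_neg (show ¬(t = 0 ∨ p + r + q ≤ t) by omega),
    dif_neg (show ¬(t < p) by omega), dif_neg (show ¬(t = p) by omega),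
    dif_neg (show ¬(t < p + r) by omega), dif_neg (show ¬(t = p + r) by omega)]

def triG : TVert k p q r → ℕ
  | Sum.inl a => if a = 0 then 0 else if a = 1 then p else p + r
  | Sum.inr ⟨i, j⟩ =>
      if i = 0 then (j : ℕ) + 1
      else if i = 4 then p + (j : ℕ) + 1
      else if i = 2 then p + r + q - (j : ℕ) - 1 else 0

lemma triG_triF (hp : 1 ≤ p) (hq : 1 ≤ q) (hr : 1 ≤ r) {t : ℕ} (ht : t < p + r + q) :
    triG k p q r (triF k p q r t) = t := by
  by_cases h1 : t = 0
  · subst h1; rw [triF_0]; rfl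
  · by_cases h2 : t < p
    · rw [triF_seg0 k p q r (by omega) h2 (by show t - 1 < p - 1; omega)]
      show (t - 1) + 1 = t
      omega
    · by_cases h3 : t = p
      · rw [h3, triF_endv k p q r hp (by omega)]; rfl
      · by_cases h4 : t < p + r
        · rw [triF_seg4 k p q r (by omega) h4 (by show t - p - 1 < r - 1; omega)]
          show p + (t - p - 1) + 1 = t
          omega
        · by_cases h5 : t = p + r
          · rw [h5, triF_endw k p q r hp hq hr]; rfl
          · rw [triF_seg2 k p q r (by omega) ht
              (by show p + r + q - t - 1 < q - 1; omega)]
            show p + r + q - (p + r + q - t - 1) - 1 = t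
            omega

end Tri

section Tri2
variable (k p q r : ℕ)

lemma inr_ne {i : Fin 6} {a b : Fin (pathLen k p q r i - 1)} (h : (a : ℕ) ≠ (b : ℕ)) :
    (Sum.inr ⟨i, a⟩ : TVert k p q r) ≠ Sum.inr ⟨i, b⟩ := by
  intro hc
  injection hc with h3
  injection h3 with h4 h5
  exact h (congrArg Fin.val h5)

lemma inl_ne {a b : Fin 3} (h : a ≠ b) : (Sum.inl a : TVert k p q r) ≠ Sum.inl b := by
  intro hc; injection hc with h2; exact h h2

lemma inl_ne_inr {a : Fin 3} {x : Σ i : Fin 6, Fin (pathLen k p q r i - 1)} :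
    (Sum.inl a : TVert k p q r) ≠ Sum.inr x := by
  intro hc; cases hc

lemma inr_ne_inl {a : Fin 3} {x : Σ i : Fin 6, Fin (pathLen k p q r i - 1)} :
    (Sum.inr x : TVert k p q r) ≠ Sum.inl a := by
  intro hc; cases hc

lemma triF_adj (hp : 1 ≤ p) (hq : 1 ≤ q) (hr : 1 ≤ r) (t : ℕ) (ht : t < p + r + q) :
    (TGraph k p q r).Adj (triF k p q r t) (triF k p q r (t+1)) := by
  by_cases h0 : t = 0
  · subst h0
    by_cases hp1 : p = 1
    · have hx := triF_0 k p q r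
      have hy : triF k p q r (0+1) = Sum.inl 1 := by
        rw [(by omega : (0:ℕ)+1 = p)]; exact triF_endv k p q r hp (by omega)
      rw [hx, hy]
      exact (fromRel_adj _ _ _).mpr
        ⟨inl_ne k p q r (by decide), Or.inl ⟨0, show p = 1 from hp1, rfl⟩⟩
    · have hy := triF_seg0 k p q r (le_refl 1) (by omega : 0+1 < p)
        (show 0+1-1 < pathLen k p q r 0 - 1 from by show 0+1-1 < p - 1; omega)
      rw [triF_0, hy]
      exact (fromRel_adj _ _ _).mpr
        ⟨inl_ne_inr k p q r, Or.inl (Or.inl ⟨rfl, rfl⟩)⟩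
  · have hx0 : 1 ≤ t := by omega
    by_cases hA : t + 1 < p
    · rw [triF_seg0 k p q r hx0 (by omega)
          (show t-1 < pathLen k p q r 0 - 1 from by show t-1 < p-1; omega),
        triF_seg0 k p q r (by omega) hA
          (show t+1-1 < pathLen k p q r 0 - 1 from by show t+1-1 < p-1; omega)]
      exact (fromRel_adj _ _ _).mpr
        ⟨inr_ne k p q r (by show t-1 ≠ t+1-1; omega),
         Or.inl ⟨rfl, by show t+1-1 = (t-1)+1; omega⟩⟩
    · by_cases hB : t + 1 = p
      · have hy : triF k p q r (t+1) = Sum.inl 1 := by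
          rw [hB]; exact triF_endv k p q r hp (by omega)
        rw [triF_seg0 k p q r hx0 (by omega)
            (show t-1 < pathLen k p q r 0 - 1 from by show t-1 < p-1; omega), hy]
        exact (fromRel_adj _ _ _).mpr
          ⟨inr_ne_inl k p q r, Or.inr (Or.inr ⟨show (t-1)+2 = p from by omega, rfl⟩)⟩
      · by_cases hC : t = p
        · have hx : triF k p q r t = Sum.inl 1 := by
            rw [hC]; exact triF_endv k p q r hp (by omega)
          by_cases hr1 : t + 1 = p + r
          · have hy : triF k p q r (t+1) = Sum.inl 2 := by
              rw [hr1]; exact triF_endw k p q r hp hq hr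
            rw [hx, hy]
            exact (fromRel_adj _ _ _).mpr
              ⟨inl_ne k p q r (by decide), Or.inl ⟨4, show r = 1 from by omega, rfl⟩⟩
          · have hy := triF_seg4 k p q r (by omega : p < t+1) (by omega : t+1 < p+r)
              (show t+1-p-1 < pathLen k p q r 4 - 1 from by show t+1-p-1 < r-1; omega)
            rw [hx, hy]
            exact (fromRel_adj _ _ _).mpr
              ⟨inl_ne_inr k p q r,
               Or.inl (Or.inl ⟨show t+1-p-1 = 0 from by omega, rfl⟩)⟩
        · by_cases hD : t + 1 < p + r
          · rw [triF_seg4 k p q r (by omega) (by omega)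
                (show t-p-1 < pathLen k p q r 4 - 1 from by show t-p-1 < r-1; omega),
              triF_seg4 k p q r (by omega) hD
                (show t+1-p-1 < pathLen k p q r 4 - 1 from by show t+1-p-1 < r-1; omega)]
            exact (fromRel_adj _ _ _).mpr
              ⟨inr_ne k p q r (by show t-p-1 ≠ t+1-p-1; omega),
               Or.inl ⟨rfl, by show t+1-p-1 = (t-p-1)+1; omega⟩⟩
          · by_cases hE : t + 1 = p + r
            · have hy : triF k p q r (t+1) = Sum.inl 2 := by
                rw [hE]; exact triF_endw k p q r hp hq hr
              rw [triF_seg4 k p q r (by omega) (by omega)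
                  (show t-p-1 < pathLen k p q r 4 - 1 from by show t-p-1 < r-1; omega),
                hy]
              exact (fromRel_adj _ _ _).mpr
                ⟨inr_ne_inl k p q r,
                 Or.inr (Or.inr ⟨show (t-p-1)+2 = r from by omega, rfl⟩)⟩
            · by_cases hF : t = p + r
              · have hx : triF k p q r t = Sum.inl 2 := by
                  rw [hF]; exact triF_endw k p q r hp hq hr
                by_cases hq1 : t + 1 = p + r + q
                · have hy : triF k p q r (t+1) = Sum.inl 0 :=
                    triF_last k p q r (by omega)
                  rw [hx, hy]
                  exact (fromRel_adj _ _ _).mpr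
                    ⟨inl_ne k p q r (by decide),
                     Or.inr ⟨2, show q = 1 from by omega, rfl⟩⟩
                · have hy := triF_seg2 k p q r (by omega : p+r < t+1)
                    (by omega : t+1 < p+r+q)
                    (show p+r+q-(t+1)-1 < pathLen k p q r 2 - 1 from by
                      show p+r+q-(t+1)-1 < q-1; omega)
                  rw [hx, hy]
                  exact (fromRel_adj _ _ _).mpr
                    ⟨inl_ne_inr k p q r,
                     Or.inl (Or.inr ⟨show (p+r+q-(t+1)-1)+2 = q from by omega, rfl⟩)⟩
              · by_cases hG : t + 1 = p + r + q
                · have hy : triF k p q r (t+1) = Sum.inl 0 :=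
                    triF_last k p q r (by omega)
                  rw [triF_seg2 k p q r (by omega) (by omega)
                      (show p+r+q-t-1 < pathLen k p q r 2 - 1 from by
                        show p+r+q-t-1 < q-1; omega), hy]
                  exact (fromRel_adj _ _ _).mpr
                    ⟨inr_ne_inl k p q r,
                     Or.inr (Or.inl ⟨show p+r+q-t-1 = 0 from by omega, rfl⟩)⟩
                · rw [triF_seg2 k p q r (by omega) (by omega)
                      (show p+r+q-t-1 < pathLen k p q r 2 - 1 from by
                        show p+r+q-t-1 < q-1; omega),
                    triF_seg2 k p q r (by omega) (by omega)
                      (show p+r+q-(t+1)-1 < pathLen k p q r 2 - 1 from by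
                        show p+r+q-(t+1)-1 < q-1; omega)]
                  exact (fromRel_adj _ _ _).mpr
                    ⟨inr_ne k p q r (by show p+r+q-t-1 ≠ p+r+q-(t+1)-1; omega),
                     Or.inr ⟨rfl, by show p+r+q-t-1 = (p+r+q-(t+1)-1)+1; omega⟩⟩

end Tri2

theorem odd_case_TGraph_oddGirth (k p q r : ℕ) (hk : 1 ≤ k)
    (hp : 1 ≤ p) (hp' : p ≤ k) (hq : 1 ≤ q) (hq' : q ≤ k)
    (hr : 1 ≤ r) (hr' : r ≤ k) (hodd : Odd (p + q + r)) :
    oddGirthAtLeast (TGraph k p q r) (2*k+1) ↔ 2*k+1 ≤ p + q + r := by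
  constructor
  · intro hOG
    by_contra hlt
    push_neg at hlt
    set n := p + r + q with hn
    have hn3 : 3 ≤ n := by omega
    have hadj : ∀ t, t < n → (TGraph k p q r).Adj (triF k p q r t) (triF k p q r (t+1)) :=
      fun t ht => triF_adj k p q r hp hq hr t ht
    set C : (TGraph k p q r).Walk (Sum.inl 0) (Sum.inl 0) :=
      (walkOfFn (TGraph k p q r) (triF k p q r) n hadj).copy
        (triF_0 k p q r) (triF_last k p q r (le_refl n)) with hC
    have hlen : C.length = n := by
      erw [hC, Walk.length_copy, walkOfFn_length]
    have hinj : ∀ s t, s < n → t < n →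
        triF k p q r s = triF k p q r t → s = t := by
      intro s t hs ht h
      have := congrArg (triG k p q r) h
      rwa [triG_triF k p q r hp hq hr hs, triG_triF k p q r hp hq hr ht] at this
    have hcyc : C.IsCycle := by
      refine ⟨⟨⟨?_⟩, ?_⟩, ?_⟩
      · -- edges nodup
        have hE : C.edges = (List.range n).map
            (fun t => s(triF k p q r t, triF k p q r (t+1))) := by
          erw [hC, Walk.edges_copy, walkOfFn_edges]
        rw [hE]
        refine List.Nodup.map_on ?_ (List.nodup_range (n := n))
        intro a ha b hb hab
        rw [List.mem_range] at ha hb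
        rcases Sym2.eq_iff.mp hab with ⟨h1, h2⟩ | ⟨h1, h2⟩
        · exact hinj a b ha hb h1
        · by_cases hb1 : b + 1 < n
          · have hab1 : a = b + 1 := hinj a (b+1) ha hb1 h1
            by_cases ha1 : a + 1 < n
            · have := hinj (a+1) b ha1 hb h2
              omega
            · have hb0 : b = 0 := by
                refine hinj b 0 hb (by omega) ?_
                rw [← h2, triF_last k p q r (by omega), triF_0]
              omega
          · have h1' : triF k p q r a = triF k p q r 0 := by
              rw [h1, triF_last k p q r (by omega), triF_0]
            have ha0 : a = 0 := hinj a 0 ha (by omega) h1'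
            have hb' : b = 1 := by
              refine hinj b 1 hb (by omega) ?_
              rw [← h2, ha0]
            omega
      · -- not nil
        intro hnil
        have := congrArg Walk.length hnil
        rw [hlen] at this
        change n = 0 at this
        omega
      · -- support tail nodup
        have hs : C.support.tail =
            (List.range n).map (triF k p q r ∘ Nat.succ) := by
          erw [hC, Walk.support_copy, walkOfFn_support, List.range_succ_eq_map,
            List.map_cons, List.tail_cons, List.map_map]
        rw [hs]
        refine List.Nodup.map_on ?_ (List.nodup_range (n := n))
        intro a ha b hb hab
        rw [List.mem_range] at ha hb
        simp only [Function.comp_apply, Nat.succ_eq_add_one] at hab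
        by_cases ha1 : a + 1 < n
        · by_cases hb1 : b + 1 < n
          · have := hinj (a+1) (b+1) ha1 hb1 hab
            omega
          · exfalso
            have h1' : triF k p q r (a+1) = triF k p q r 0 := by
              rw [hab, triF_last k p q r (by omega), triF_0]
            have := hinj (a+1) 0 ha1 (by omega) h1'
            omega
        · by_cases hb1 : b + 1 < n
          · exfalso
            have h1' : triF k p q r (b+1) = triF k p q r 0 := by
              rw [← hab, triF_last k p q r (by omega), triF_0]
            have := hinj (b+1) 0 hb1 (by omega) h1'
            omega
          · omega
    have hoddlen : Odd C.length := by
      rw [hlen, show n = p + q + r from by omega]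
      exact hodd
    have := hOG (Sum.inl 0) C hcyc hoddlen
    rw [hlen] at this
    omega
  · intro hsum
    exact backward k p q r hp hp' hq hq' hr hr' hsum
end

section
/- Let k ≥ 1 and let p, q, r be integers with 1 ≤ p, q, r ≤ k and p + q + r even. Then the graph T_{2k+1}(p,q,r) has odd-girth at least 2k+1 if and only if p, q, r satisfy the triangular inequalities p ≤ q + r, q ≤ p + r, and r ≤ p + q. -/
open SimpleGraph

namespace TWork

variable {k p q r : ℕ}

instance : DecidableEq (TVert k p q r) := by unfold TVert; infer_instance

/-- the `t`-th vertex along path `i`, for `0 ≤ t ≤ pathLen i` (junk = far end beyond). -/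
def vtx (k p q r : ℕ) (i : Fin 6) (t : ℕ) : TVert k p q r :=
  if h : 0 < t ∧ t < pathLen k p q r i then
    Sum.inr ⟨i, ⟨t - 1, by omega⟩⟩
  else if t = 0 then Sum.inl (pathEnds i).1 else Sum.inl (pathEnds i).2

lemma vtx_zero (i : Fin 6) : vtx k p q r i 0 = Sum.inl (pathEnds i).1 := by
  simp [vtx]; rfl

lemma vtx_last {i : Fin 6} {t : ℕ} (h : pathLen k p q r i ≤ t) (h1 : 1 ≤ t) :
    vtx k p q r i t = Sum.inl (pathEnds i).2 := by
  erw [vtx, dif_neg (by omega), if_neg (by omega)]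

lemma vtx_internal {i : Fin 6} {t : ℕ} (h1 : 1 ≤ t) (h2 : t < pathLen k p q r i) :
    vtx k p q r i t = Sum.inr ⟨i, ⟨t - 1, by omega⟩⟩ := by
  erw [vtx, dif_pos ⟨by omega, h2⟩]

/-- extract the internal position (junk 4242 on branch vertices). -/
def jval (k p q r : ℕ) : TVert k p q r → ℕ
  | Sum.inl _ => 4242
  | Sum.inr ⟨_, j⟩ => (j : ℕ)

lemma ends_ne (i : Fin 6) : (pathEnds i).1 ≠ (pathEnds i).2 := by
  fin_cases i <;> decide

lemma tgraph_adj {x y : TVert k p q r} :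
    (TGraph k p q r).Adj x y ↔ x ≠ y ∧ (TAdjBase k p q r x y ∨ TAdjBase k p q r y x) := by
  rfl

lemma adj_vtx {i : Fin 6} {t : ℕ} (h : t + 1 ≤ pathLen k p q r i) :
    (TGraph k p q r).Adj (vtx k p q r i t) (vtx k p q r i (t+1)) := by
  rcases Nat.eq_zero_or_pos t with rfl | ht
  · rw [vtx_zero]
    rcases eq_or_lt_of_le h with h1 | h1
    · rw [vtx_last (by omega) (by omega)]
      refine ⟨fun hc => ends_ne i (Sum.inl.inj hc), Or.inl ⟨i, by omega, rfl⟩⟩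
    · rw [vtx_internal (by omega) (by omega)]
      exact ⟨Sum.inl_ne_inr, Or.inl (Or.inl ⟨rfl, rfl⟩)⟩
  · rcases eq_or_lt_of_le h with h1 | h1
    · rw [vtx_internal ht (by omega), vtx_last (by omega) (by omega)]
      refine ⟨Sum.inr_ne_inl, Or.inr (Or.inr ⟨by simp; omega, rfl⟩)⟩
    · rw [vtx_internal ht (by omega), vtx_internal (by omega) h1]
      refine ⟨?_, Or.inl ⟨rfl, by simp; omega⟩⟩
      intro hc
      have := congrArg (jval k p q r) hc
      simp [jval] at this
      omega


def ival (k p q r : ℕ) : TVert k p q r → ℕ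
  | Sum.inl _ => 7
  | Sum.inr ⟨i, _⟩ => (i : ℕ)

/-- the `t`-th edge of path `i`, for `t + 1 ≤ pathLen i`. -/
def pathEdge (k p q r : ℕ) (i : Fin 6) (t : ℕ) : Sym2 (TVert k p q r) :=
  s(vtx k p q r i t, vtx k p q r i (t+1))

lemma inr_eq_vtx {i : Fin 6} (j : Fin (pathLen k p q r i - 1)) :
    Sum.inr ⟨i, j⟩ = vtx k p q r i ((j : ℕ) + 1) := by
  have hj : (j : ℕ) < pathLen k p q r i - 1 := j.2
  rw [vtx_internal (by omega) (by omega)]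
  simp

lemma nbrs {i : Fin 6} {j : Fin (pathLen k p q r i - 1)} {y : TVert k p q r}
    (h : (TGraph k p q r).Adj (Sum.inr ⟨i, j⟩) y) :
    y = vtx k p q r i (j : ℕ) ∨ y = vtx k p q r i ((j : ℕ) + 2) := by
  have hj : (j : ℕ) < pathLen k p q r i - 1 := j.2
  erw [tgraph_adj] at h
  obtain ⟨hne, hb | hb⟩ := h
  · match y with
    | Sum.inl a => exact absurd hb (by simp [TAdjBase])
    | Sum.inr ⟨i', j'⟩ =>
      obtain ⟨rfl, hj'⟩ := hb
      right
      rw [inr_eq_vtx j', hj']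
  · match y with
    | Sum.inl a =>
      simp only [TAdjBase] at hb
      rcases hb with ⟨h0, rfl⟩ | ⟨h2, rfl⟩
      · left; rw [h0, vtx_zero]
      · right; rw [vtx_last (by omega) (by omega)]
    | Sum.inr ⟨i', j'⟩ =>
      obtain ⟨rfl, hj'⟩ := hb
      left
      rw [inr_eq_vtx j', ← hj']

lemma edge_surj {x y : TVert k p q r} (h : (TGraph k p q r).Adj x y) :
    ∃ i t, t + 1 ≤ pathLen k p q r i ∧ s(x, y) = pathEdge k p q r i t := by
  have main : ∀ (i : Fin 6) (j : Fin (pathLen k p q r i - 1)) (z : TVert k p q r),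
      (TGraph k p q r).Adj (Sum.inr ⟨i, j⟩) z →
      ∃ i' t, t + 1 ≤ pathLen k p q r i' ∧ s(Sum.inr (⟨i, j⟩ : Σ i : Fin 6, Fin (pathLen k p q r i - 1)), z) = pathEdge k p q r i' t := by
    intro i j z hz
    have hj : (j : ℕ) < pathLen k p q r i - 1 := j.2
    rcases nbrs hz with rfl | rfl
    · exact ⟨i, (j : ℕ), by omega, by rw [inr_eq_vtx, pathEdge, Sym2.eq_swap]; rfl⟩
    · exact ⟨i, (j : ℕ) + 1, by omega, by rw [inr_eq_vtx]; rfl⟩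
  match x, y with
  | Sum.inr ⟨i, j⟩, y => exact main i j y h
  | Sum.inl a, Sum.inr ⟨i, j⟩ =>
    obtain ⟨i', t, ht, he⟩ := main i j _ h.symm
    exact ⟨i', t, ht, by rw [Sym2.eq_swap] at he; exact he⟩
  | Sum.inl a, Sum.inl b =>
    erw [tgraph_adj] at h
    obtain ⟨hne, hb | hb⟩ := h
    · obtain ⟨i, h1, he⟩ := hb
      refine ⟨i, 0, by omega, ?_⟩
      rw [pathEdge, vtx_zero, vtx_last (by omega) (by omega), he]
    · obtain ⟨i, h1, he⟩ := hb
      refine ⟨i, 0, by omega, ?_⟩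
      erw [pathEdge, vtx_zero, vtx_last (by omega) (by omega), he, Sym2.eq_swap]


lemma fin_ne_of_val_ne {n : ℕ} {a b : Fin n} (h : (a:ℕ) ≠ (b:ℕ)) : a ≠ b :=
  fun hc => h (congrArg Fin.val hc)

lemma vtx_inj_t {i : Fin 6} {s t : ℕ} (hs : s ≤ pathLen k p q r i)
    (ht : t ≤ pathLen k p q r i) (h : vtx k p q r i s = vtx k p q r i t) : s = t := by
  rcases Nat.eq_zero_or_pos s with rfl | hs1 <;> rcases Nat.eq_zero_or_pos t with rfl | ht1
  · rfl
  · rcases eq_or_lt_of_le ht with rfl | ht2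
    · rw [vtx_zero, vtx_last le_rfl ht1] at h
      exact absurd (Sum.inl.inj h) (ends_ne i)
    · rw [vtx_zero, vtx_internal ht1 ht2] at h
      simp at h
  · rcases eq_or_lt_of_le hs with rfl | hs2
    · rw [vtx_zero, vtx_last le_rfl hs1] at h
      exact absurd (Sum.inl.inj h.symm) (ends_ne i)
    · rw [vtx_zero, vtx_internal hs1 hs2] at h
      simp at h
  · rcases eq_or_lt_of_le hs with rfl | hs2 <;> rcases eq_or_lt_of_le ht with h' | ht2
    · omega
    · rw [vtx_last le_rfl hs1, vtx_internal ht1 ht2] at h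
      simp at h
    · rw [vtx_last (by omega) ht1, vtx_internal hs1 hs2] at h
      simp at h
    · rw [vtx_internal hs1 hs2, vtx_internal ht1 ht2] at h
      have := congrArg (jval k p q r) h
      simp [jval] at this
      omega

lemma endpoint_of_vtx_eq {i i' : Fin 6} (hi : (i:ℕ) ≠ (i':ℕ)) {a b : ℕ}
    (h : vtx k p q r i a = vtx k p q r i' b) :
    (a = 0 ∨ pathLen k p q r i ≤ a) ∧ (b = 0 ∨ pathLen k p q r i' ≤ b) := by
  constructor
  · by_contra hc
    push_neg at hc
    obtain ⟨ha0, haL⟩ := hc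
    rw [vtx_internal (by omega) (by omega)] at h
    rcases Nat.eq_zero_or_pos b with rfl | hb1
    · rw [vtx_zero] at h; simp at h
    · rcases Nat.lt_or_ge b (pathLen k p q r i') with hb2 | hb2
      · rw [vtx_internal hb1 hb2] at h
        have := congrArg (ival k p q r) h
        simp [ival] at this
        exact hi this
      · rw [vtx_last hb2 hb1] at h; simp at h
  · by_contra hc
    push_neg at hc
    obtain ⟨hb0, hbL⟩ := hc
    rw [vtx_internal (i := i') (t := b) (by omega) (by omega)] at h
    rcases Nat.eq_zero_or_pos a with rfl | ha1
    · rw [vtx_zero] at h; simp at h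
    · rcases Nat.lt_or_ge a (pathLen k p q r i) with ha2 | ha2
      · rw [vtx_internal ha1 ha2] at h
        have := congrArg (ival k p q r) h
        simp [ival] at this
        exact hi this
      · rw [vtx_last ha2 ha1] at h; simp at h

lemma pair_sum (hk : 1 ≤ k) (hp' : p ≤ k) (hq' : q ≤ k) (hr' : r ≤ k)
    {i i' : Fin 6} (hi : i ≠ i')
    (hends : pathEnds i = pathEnds i' ∨ pathEnds i = ((pathEnds i').2, (pathEnds i').1)) :
    pathLen k p q r i + pathLen k p q r i' = 2*k+1 := by
  fin_cases i <;> fin_cases i' <;>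
    first
      | exact absurd rfl hi
      | exact absurd hends (by decide)
      | (show p + (2*k+1-p) = 2*k+1; omega)
      | (show (2*k+1-p) + p = 2*k+1; omega)
      | (show q + (2*k+1-q) = 2*k+1; omega)
      | (show (2*k+1-q) + q = 2*k+1; omega)
      | (show r + (2*k+1-r) = 2*k+1; omega)
      | (show (2*k+1-r) + r = 2*k+1; omega)

lemma len1_unique (hk : 1 ≤ k) (hp' : p ≤ k) (hq' : q ≤ k) (hr' : r ≤ k)
    {i i' : Fin 6} (h1 : pathLen k p q r i = 1) (h1' : pathLen k p q r i' = 1)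
    (hends : pathEnds i = pathEnds i' ∨ pathEnds i = ((pathEnds i').2, (pathEnds i').1)) :
    i = i' := by
  by_contra hi
  have := pair_sum hk hp' hq' hr' hi hends
  omega

lemma edge_inj (hk : 1 ≤ k) (hp' : p ≤ k) (hq' : q ≤ k) (hr' : r ≤ k)
    {i i' : Fin 6} {t t' : ℕ} (ht : t + 1 ≤ pathLen k p q r i)
    (ht' : t' + 1 ≤ pathLen k p q r i')
    (he : pathEdge k p q r i t = pathEdge k p q r i' t') : i = i' ∧ t = t' := by
  rw [pathEdge, pathEdge, Sym2.eq_iff] at he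
  by_cases hi : i = i'
  · subst hi
    refine ⟨rfl, ?_⟩
    rcases he with ⟨h1, h2⟩ | ⟨h1, h2⟩
    · exact vtx_inj_t (by omega) (by omega) h1
    · have e1 := vtx_inj_t (by omega) (by omega) h1
      have e2 := vtx_inj_t (by omega) (by omega) h2
      omega
  · exfalso
    have hiv : (i : ℕ) ≠ (i' : ℕ) := fun hc => hi (Fin.ext hc)
    have key : t = 0 ∧ pathLen k p q r i = 1 ∧ t' = 0 ∧ pathLen k p q r i' = 1 := by
      rcases he with ⟨h1, h2⟩ | ⟨h1, h2⟩
      · have c1 := endpoint_of_vtx_eq hiv h1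
        have c2 := endpoint_of_vtx_eq hiv h2
        omega
      · have c1 := endpoint_of_vtx_eq hiv h1
        have c2 := endpoint_of_vtx_eq hiv h2
        omega
    obtain ⟨rfl, hL, rfl, hL'⟩ := key
    rw [vtx_zero, vtx_zero, vtx_last (by omega) (by omega),
      vtx_last (by omega) (by omega)] at he
    apply hi
    refine len1_unique hk hp' hq' hr' hL hL' ?_
    rcases he with ⟨h1, h2⟩ | ⟨h1, h2⟩
    · exact Or.inl (Prod.ext (Sum.inl.inj h1) (Sum.inl.inj h2))
    · exact Or.inr (Prod.ext (Sum.inl.inj h1) (Sum.inl.inj h2))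


lemma countP_edges_parity {x y : TVert k p q r} (w : (TGraph k p q r).Walk x y)
    (v : TVert k p q r) :
    (w.edges.countP (fun e => decide (v ∈ e))) % 2
      = ((if v = x then 1 else 0) + (if v = y then 1 else 0)) % 2 := by
  induction w with
  | nil => simp; omega
  | @cons x' y' z' h w ih =>
    rw [SimpleGraph.Walk.edges_cons, List.countP_cons]
    have hne : x' ≠ y' := h.ne
    by_cases h1 : v = x' <;> by_cases h2 : v = y' <;>
      simp only [h1, h2, Sym2.mem_iff, decide_eq_true_eq, if_pos, if_neg, eq_self_iff_true,
        true_or, or_true] <;>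
      simp_all <;> omega

lemma L_pos (hk : 1 ≤ k) (hp : 1 ≤ p) (hp' : p ≤ k) (hq : 1 ≤ q) (hq' : q ≤ k)
    (hr : 1 ≤ r) (hr' : r ≤ k) (i : Fin 6) : 1 ≤ pathLen k p q r i := by
  fin_cases i <;>
    first
      | (show 1 ≤ p; omega) | (show 1 ≤ 2*k+1-p; omega)
      | (show 1 ≤ q; omega) | (show 1 ≤ 2*k+1-q; omega)
      | (show 1 ≤ r; omega) | (show 1 ≤ 2*k+1-r; omega)

section Cycle

variable {x : TVert k p q r} {c : (TGraph k p q r).Walk x x}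

/-- every closed trail uses an even number of edges at each vertex. -/
lemma filter_incident_card_even (hc : c.IsTrail) (v : TVert k p q r) :
    Even ((c.edges.toFinset.filter (fun e => v ∈ e)).card) := by
  have h1 := countP_edges_parity c v
  have hset : c.edges.toFinset.filter (fun e => v ∈ e)
      = (c.edges.filter (fun e => decide (v ∈ e))).toFinset := by
    ext e
    simp [List.mem_filter]
  have h2 : (c.edges.toFinset.filter (fun e => v ∈ e)).card
      = c.edges.countP (fun e => decide (v ∈ e)) := by
    rw [hset, List.card_toFinset, List.Nodup.dedup (hc.edges_nodup.filter _),
      ← List.countP_eq_length_filter]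
  rw [Nat.even_iff, h2, h1]
  split_ifs <;> omega

lemma mem_edges_of_adj {e : Sym2 (TVert k p q r)}
    (he : e ∈ c.edges) : e ∈ (TGraph k p q r).edgeSet :=
  c.edges_subset_edgeSet he

/-- the two edges at an internal vertex: any cycle edge through `vtx i (t+1)`
(with `t+2 ≤ pathLen i`) is `pathEdge i t` or `pathEdge i (t+1)`. -/
lemma edge_at_internal {i : Fin 6} {t : ℕ} (ht : t + 2 ≤ pathLen k p q r i)
    {e : Sym2 (TVert k p q r)} (he : e ∈ (TGraph k p q r).edgeSet)
    (hv : vtx k p q r i (t+1) ∈ e) :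
    e = pathEdge k p q r i t ∨ e = pathEdge k p q r i (t+1) := by
  obtain ⟨y, rfl⟩ := Sym2.mem_iff_exists.1 hv
  rw [SimpleGraph.mem_edgeSet] at he
  rw [vtx_internal (by omega) (by omega)] at he hv ⊢
  rcases nbrs he with rfl | rfl
  · left
    rw [pathEdge, Sym2.eq_swap]
    congr 1
    exact inr_eq_vtx _
  · right
    rw [pathEdge]
    congr 1
    exact inr_eq_vtx _

lemma step_mem (hk : 1 ≤ k) (hp' : p ≤ k) (hq' : q ≤ k) (hr' : r ≤ k) (hc : c.IsTrail) {i : Fin 6} {t : ℕ} (ht : t + 2 ≤ pathLen k p q r i)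
    (h : pathEdge k p q r i t ∈ c.edges) : pathEdge k p q r i (t+1) ∈ c.edges := by
  classical
  set F := c.edges.toFinset with hF
  set S := F.filter (fun e => vtx k p q r i (t+1) ∈ e) with hS
  have hsub : S ⊆ {pathEdge k p q r i t, pathEdge k p q r i (t+1)} := by
    intro e heS
    rw [hS, Finset.mem_filter] at heS
    obtain ⟨heF, hev⟩ := heS
    rcases edge_at_internal ht (mem_edges_of_adj (List.mem_toFinset.1 heF)) hev with rfl | rfl
    · simp
    · simp
  have h1 : pathEdge k p q r i t ∈ S := by
    rw [hS, Finset.mem_filter]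
    refine ⟨List.mem_toFinset.2 h, ?_⟩
    rw [pathEdge]
    exact Sym2.mem_mk_right _ _
  have hne : pathEdge k p q r i t ≠ pathEdge k p q r i (t+1) := by
    intro hcon
    have := (edge_inj hk hp' hq' hr' (by omega) (by omega) hcon).2
    omega
  have heven : Even S.card := filter_incident_card_even hc _
  have hcard2 : S.card = 2 := by
    have hle : S.card ≤ 2 := le_trans (Finset.card_le_card hsub)
      (le_trans (Finset.card_insert_le _ _) (by simp))
    have hge : 1 ≤ S.card := Finset.card_pos.2 ⟨_, h1⟩
    rcases heven with ⟨m, hm⟩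
    omega
  have hSeq : S = {pathEdge k p q r i t, pathEdge k p q r i (t+1)} := by
    apply Finset.eq_of_subset_of_card_le hsub
    rw [hcard2, Finset.card_insert_of_notMem (by simpa using hne), Finset.card_singleton]
  have h2 : pathEdge k p q r i (t+1) ∈ S := by
    rw [hSeq]; simp
  rw [hS, Finset.mem_filter] at h2
  exact List.mem_toFinset.1 h2.1

lemma step_mem_down (hk : 1 ≤ k) (hp' : p ≤ k) (hq' : q ≤ k) (hr' : r ≤ k) (hc : c.IsTrail) {i : Fin 6} {t : ℕ} (ht : t + 2 ≤ pathLen k p q r i)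
    (h : pathEdge k p q r i (t+1) ∈ c.edges) : pathEdge k p q r i t ∈ c.edges := by
  classical
  set F := c.edges.toFinset with hF
  set S := F.filter (fun e => vtx k p q r i (t+1) ∈ e) with hS
  have hsub : S ⊆ {pathEdge k p q r i t, pathEdge k p q r i (t+1)} := by
    intro e heS
    rw [hS, Finset.mem_filter] at heS
    obtain ⟨heF, hev⟩ := heS
    rcases edge_at_internal ht (mem_edges_of_adj (List.mem_toFinset.1 heF)) hev with rfl | rfl
    · simp
    · simp
  have h1 : pathEdge k p q r i (t+1) ∈ S := by
    rw [hS, Finset.mem_filter]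
    refine ⟨List.mem_toFinset.2 h, ?_⟩
    rw [pathEdge]
    exact Sym2.mem_mk_left _ _
  have hne : pathEdge k p q r i t ≠ pathEdge k p q r i (t+1) := by
    intro hcon
    have := (edge_inj hk hp' hq' hr' (by omega) (by omega) hcon).2
    omega
  have heven : Even S.card := filter_incident_card_even hc _
  have hcard2 : S.card = 2 := by
    have hle : S.card ≤ 2 := le_trans (Finset.card_le_card hsub)
      (le_trans (Finset.card_insert_le _ _) (by simp))
    have hge : 1 ≤ S.card := Finset.card_pos.2 ⟨_, h1⟩
    rcases heven with ⟨m, hm⟩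
    omega
  have hSeq : S = {pathEdge k p q r i t, pathEdge k p q r i (t+1)} := by
    apply Finset.eq_of_subset_of_card_le hsub
    rw [hcard2, Finset.card_insert_of_notMem (by simpa using hne), Finset.card_singleton]
  have h2 : pathEdge k p q r i t ∈ S := by
    rw [hSeq]; simp
  rw [hS, Finset.mem_filter] at h2
  exact List.mem_toFinset.1 h2.1

lemma prop_up (hk : 1 ≤ k) (hp' : p ≤ k) (hq' : q ≤ k) (hr' : r ≤ k) (hc : c.IsTrail) {i : Fin 6} (n : ℕ) : ∀ {t : ℕ},
    t + n + 1 ≤ pathLen k p q r i → pathEdge k p q r i t ∈ c.edges →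
    pathEdge k p q r i (t + n) ∈ c.edges := by
  induction n with
  | zero => intro t _ h; exact h
  | succ m ih =>
    intro t hb h
    have := ih (t := t) (by omega) h
    have := step_mem hk hp' hq' hr' hc (t := t + m) (by omega) this
    rwa [show t + (m+1) = t + m + 1 by omega]

lemma prop_down (hk : 1 ≤ k) (hp' : p ≤ k) (hq' : q ≤ k) (hr' : r ≤ k) (hc : c.IsTrail) {i : Fin 6} (n : ℕ) : ∀ {t : ℕ},
    t + n + 1 ≤ pathLen k p q r i → pathEdge k p q r i (t + n) ∈ c.edges →
    pathEdge k p q r i t ∈ c.edges := by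
  induction n with
  | zero => intro t _ h; exact h
  | succ m ih =>
    intro t hb h
    apply ih (t := t) (by omega)
    apply step_mem_down hk hp' hq' hr' hc (t := t + m) (by omega)
    rwa [show t + m + 1 = t + (m+1) by omega]

lemma prop_zero (hk : 1 ≤ k) (hp' : p ≤ k) (hq' : q ≤ k) (hr' : r ≤ k) (hc : c.IsTrail) {i : Fin 6} {t : ℕ} (ht : t + 1 ≤ pathLen k p q r i)
    (h : pathEdge k p q r i t ∈ c.edges) : pathEdge k p q r i 0 ∈ c.edges := by
  exact prop_down hk hp' hq' hr' hc (i := i) t (t := 0) (by omega)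
    (by rw [Nat.zero_add]; exact h)

lemma prop_all (hk : 1 ≤ k) (hp' : p ≤ k) (hq' : q ≤ k) (hr' : r ≤ k) (hc : c.IsTrail) {i : Fin 6} {t : ℕ} (ht : t + 1 ≤ pathLen k p q r i)
    (h : pathEdge k p q r i 0 ∈ c.edges) : pathEdge k p q r i t ∈ c.edges := by
  have h2 := prop_up hk hp' hq' hr' hc (i := i) t (t := 0) (by omega) h
  rwa [Nat.zero_add] at h2

end Cycle


noncomputable def cls (k p q r : ℕ) (e : Sym2 (TVert k p q r)) : Fin 6 := by
  classical
  exact if h : ∃ i t, t + 1 ≤ pathLen k p q r i ∧ e = pathEdge k p q r i t then h.choose else 0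

lemma cls_eq (hk : 1 ≤ k) (hp' : p ≤ k) (hq' : q ≤ k) (hr' : r ≤ k) {i : Fin 6} {t : ℕ}
    (ht : t + 1 ≤ pathLen k p q r i) : cls k p q r (pathEdge k p q r i t) = i := by
  have hex : ∃ i' t', t' + 1 ≤ pathLen k p q r i' ∧
      pathEdge k p q r i t = pathEdge k p q r i' t' := ⟨i, t, ht, rfl⟩
  rw [cls]
  rw [dif_pos hex]
  obtain ⟨t', ht', he⟩ := hex.choose_spec
  exact ((edge_inj hk hp' hq' hr' ht ht' he).1).symm

lemma decomp {e : Sym2 (TVert k p q r)} (he : e ∈ (TGraph k p q r).edgeSet) :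
    ∃ i t, t + 1 ≤ pathLen k p q r i ∧ e = pathEdge k p q r i t := by
  induction e with
  | _ a b => exact edge_surj ((SimpleGraph.mem_edgeSet _).1 he)

lemma inl_mem_pathEdge {a : Fin 3} {i : Fin 6} {t : ℕ} (ht : t + 1 ≤ pathLen k p q r i) :
    (Sum.inl a : TVert k p q r) ∈ pathEdge k p q r i t ↔
      (t = 0 ∧ a = (pathEnds i).1) ∨ (t + 1 = pathLen k p q r i ∧ a = (pathEnds i).2) := by
  erw [pathEdge, Sym2.mem_iff]
  constructor
  · rintro (h | h)
    · rcases Nat.eq_zero_or_pos t with rfl | ht1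
      · rw [vtx_zero] at h
        exact Or.inl ⟨rfl, Sum.inl.inj h⟩
      · rw [vtx_internal ht1 (by omega)] at h
        simp at h
    · rcases eq_or_lt_of_le ht with h2 | h2
      · rw [vtx_last (by omega) (by omega)] at h
        exact Or.inr ⟨h2, Sum.inl.inj h⟩
      · rw [vtx_internal (by omega) h2] at h
        simp at h
  · rintro (⟨rfl, rfl⟩ | ⟨h2, rfl⟩)
    · left
      rw [vtx_zero]
    · right
      rw [vtx_last (by omega) (by omega)]

noncomputable def edgeAt (k p q r : ℕ) (a : Fin 3) (i : Fin 6) : Sym2 (TVert k p q r) := by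
  classical
  exact if a = (pathEnds i).1 then pathEdge k p q r i 0
    else pathEdge k p q r i (pathLen k p q r i - 1)

section Count

variable {x : TVert k p q r} {c : (TGraph k p q r).Walk x x}

lemma length_eq_sum (hk : 1 ≤ k) (hp' : p ≤ k) (hq' : q ≤ k) (hr' : r ≤ k)
    (hc : c.IsTrail) :
    c.length = ∑ i : Fin 6,
      if pathEdge k p q r i 0 ∈ c.edges then pathLen k p q r i else 0 := by
  classical
  have hlen : c.length = c.edges.toFinset.card := by
    rw [List.card_toFinset, List.Nodup.dedup hc.edges_nodup, c.length_edges]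
  rw [hlen, Finset.card_eq_sum_card_fiberwise (f := cls k p q r) (t := Finset.univ)
    (fun e _ => Finset.mem_univ _)]
  apply Finset.sum_congr rfl
  intro i _
  by_cases hb : pathEdge k p q r i 0 ∈ c.edges
  · rw [if_pos hb]
    have hfe : c.edges.toFinset.filter (fun e => cls k p q r e = i)
        = (Finset.range (pathLen k p q r i)).image (fun t => pathEdge k p q r i t) := by
      ext e
      simp only [Finset.mem_filter, List.mem_toFinset, Finset.mem_image, Finset.mem_range]
      constructor
      · rintro ⟨heF, hcls⟩
        obtain ⟨i', t, ht, rfl⟩ := decomp (c.edges_subset_edgeSet heF)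
        rw [cls_eq hk hp' hq' hr' ht] at hcls
        subst hcls
        exact ⟨t, by omega, rfl⟩
      · rintro ⟨t, ht, rfl⟩
        exact ⟨prop_all hk hp' hq' hr' hc (by omega) hb, cls_eq hk hp' hq' hr' (by omega)⟩
    rw [hfe, Finset.card_image_of_injOn, Finset.card_range]
    intro a ha b hb' hab
    simp only [Finset.coe_range, Set.mem_Iio] at ha hb'
    exact (edge_inj hk hp' hq' hr' (by omega) (by omega) hab).2
  · rw [if_neg hb, Finset.card_eq_zero, Finset.filter_eq_empty_iff]
    intro e heF
    simp only [List.mem_toFinset] at heF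
    intro hcls
    obtain ⟨i', t, ht, rfl⟩ := decomp (c.edges_subset_edgeSet heF)
    rw [cls_eq hk hp' hq' hr' ht] at hcls
    subst hcls
    exact hb (prop_zero hk hp' hq' hr' hc ht heF)

lemma deg_even (hk : 1 ≤ k) (hp : 1 ≤ p) (hp' : p ≤ k) (hq : 1 ≤ q) (hq' : q ≤ k)
    (hr : 1 ≤ r) (hr' : r ≤ k) (hc : c.IsTrail) (a : Fin 3) :
    Even ((Finset.univ.filter (fun i : Fin 6 => pathEdge k p q r i 0 ∈ c.edges ∧
      (a = (pathEnds i).1 ∨ a = (pathEnds i).2))).card) := by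
  classical
  have hL : ∀ i : Fin 6, 1 ≤ pathLen k p q r i := L_pos hk hp hp' hq hq' hr hr'
  have hD := filter_incident_card_even hc (Sum.inl a)
  have himg : c.edges.toFinset.filter (fun e => (Sum.inl a : TVert k p q r) ∈ e)
      = (Finset.univ.filter (fun i : Fin 6 => pathEdge k p q r i 0 ∈ c.edges ∧
        (a = (pathEnds i).1 ∨ a = (pathEnds i).2))).image (edgeAt k p q r a) := by
    ext e
    simp only [Finset.mem_filter, List.mem_toFinset, Finset.mem_image, Finset.mem_univ, true_and]
    constructor
    · rintro ⟨heF, hev⟩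
      obtain ⟨i, t, ht, rfl⟩ := decomp (c.edges_subset_edgeSet heF)
      rcases (inl_mem_pathEdge ht).1 hev with ⟨rfl, rfl⟩ | ⟨hLi, rfl⟩
      · refine ⟨i, ⟨heF, Or.inl rfl⟩, ?_⟩
        rw [edgeAt, if_pos rfl]
      · refine ⟨i, ⟨prop_zero hk hp' hq' hr' hc ht heF, Or.inr rfl⟩, ?_⟩
        rw [edgeAt]
        have hne : (pathEnds i).2 ≠ (pathEnds i).1 := (ends_ne i).symm
        rw [if_neg hne]
        congr 1
        omega
    · rintro ⟨i, ⟨hB, hinc⟩, rfl⟩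
      by_cases ha : a = (pathEnds i).1
      · rw [edgeAt, if_pos ha]
        exact ⟨hB, (inl_mem_pathEdge (by have := hL i; omega)).2 (Or.inl ⟨rfl, ha⟩)⟩
      · have ha2 : a = (pathEnds i).2 := by
          rcases hinc with h | h
          · exact absurd h ha
          · exact h
        rw [edgeAt, if_neg ha]
        refine ⟨prop_all hk hp' hq' hr' hc (t := pathLen k p q r i - 1)
            (by have := hL i; omega) hB,
          (inl_mem_pathEdge (by have := hL i; omega)).2
            (Or.inr ⟨by have := hL i; omega, ha2⟩)⟩
  replace hD : Even ((Finset.univ.filter (fun i : Fin 6 => pathEdge k p q r i 0 ∈ c.edges ∧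
      (a = (pathEnds i).1 ∨ a = (pathEnds i).2))).image (edgeAt k p q r a)).card := by
    convert hD using 2; convert himg.symm; exact Iff.rfl
  rw [Finset.card_image_of_injOn] at hD
  · exact hD
  · intro i hi i' hi' hii
    have hcl : ∀ j : Fin 6, cls k p q r (edgeAt k p q r a j) = j := by
      intro j
      rw [edgeAt]
      split_ifs
      · exact cls_eq hk hp' hq' hr' (by have := hL j; omega)
      · exact cls_eq hk hp' hq' hr' (by have := hL j; omega)
    rw [← hcl i, ← hcl i', hii]

end Count


lemma lower_bound (hk : 1 ≤ k) (hp : 1 ≤ p) (hp' : p ≤ k) (hq : 1 ≤ q) (hq' : q ≤ k)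
    (hr : 1 ≤ r) (hr' : r ≤ k) (heven : Even (p + q + r))
    (h1 : p ≤ q + r) (h2 : q ≤ p + r) (h3 : r ≤ p + q) :
    oddGirthAtLeast (TGraph k p q r) (2*k+1) := by
  intro x c hc hodd
  classical
  have hct : c.IsTrail := hc.isCircuit.isTrail
  have hlen := length_eq_sum hk hp' hq' hr' hct
  have hd0 := deg_even hk hp hp' hq hq' hr hr' hct 0
  have hd1 := deg_even hk hp hp' hq hq' hr hr' hct 1
  have hd2 := deg_even hk hp hp' hq hq' hr hr' hct 2
  rw [Finset.card_filter, Fin.sum_univ_six] at hd0 hd1 hd2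
  rw [Fin.sum_univ_six] at hlen
  have t00 : ((0:Fin 3) = (pathEnds 0).1 ∨ (0:Fin 3) = (pathEnds 0).2) := by decide
  have t01 : ((0:Fin 3) = (pathEnds 1).1 ∨ (0:Fin 3) = (pathEnds 1).2) := by decide
  have t02 : ((0:Fin 3) = (pathEnds 2).1 ∨ (0:Fin 3) = (pathEnds 2).2) := by decide
  have t03 : ((0:Fin 3) = (pathEnds 3).1 ∨ (0:Fin 3) = (pathEnds 3).2) := by decide
  have f04 : ¬((0:Fin 3) = (pathEnds 4).1 ∨ (0:Fin 3) = (pathEnds 4).2) := by decide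
  have f05 : ¬((0:Fin 3) = (pathEnds 5).1 ∨ (0:Fin 3) = (pathEnds 5).2) := by decide
  have t10 : ((1:Fin 3) = (pathEnds 0).1 ∨ (1:Fin 3) = (pathEnds 0).2) := by decide
  have t11 : ((1:Fin 3) = (pathEnds 1).1 ∨ (1:Fin 3) = (pathEnds 1).2) := by decide
  have f12 : ¬((1:Fin 3) = (pathEnds 2).1 ∨ (1:Fin 3) = (pathEnds 2).2) := by decide
  have f13 : ¬((1:Fin 3) = (pathEnds 3).1 ∨ (1:Fin 3) = (pathEnds 3).2) := by decide
  have t14 : ((1:Fin 3) = (pathEnds 4).1 ∨ (1:Fin 3) = (pathEnds 4).2) := by decide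
  have t15 : ((1:Fin 3) = (pathEnds 5).1 ∨ (1:Fin 3) = (pathEnds 5).2) := by decide
  have f20 : ¬((2:Fin 3) = (pathEnds 0).1 ∨ (2:Fin 3) = (pathEnds 0).2) := by decide
  have f21 : ¬((2:Fin 3) = (pathEnds 1).1 ∨ (2:Fin 3) = (pathEnds 1).2) := by decide
  have t22 : ((2:Fin 3) = (pathEnds 2).1 ∨ (2:Fin 3) = (pathEnds 2).2) := by decide
  have t23 : ((2:Fin 3) = (pathEnds 3).1 ∨ (2:Fin 3) = (pathEnds 3).2) := by decide
  have t24 : ((2:Fin 3) = (pathEnds 4).1 ∨ (2:Fin 3) = (pathEnds 4).2) := by decide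
  have t25 : ((2:Fin 3) = (pathEnds 5).1 ∨ (2:Fin 3) = (pathEnds 5).2) := by decide
  simp only [t00, t01, t02, t03, f04, f05, and_true, and_false, if_false,
    iff_true, iff_false, ite_false] at hd0
  simp only [t10, t11, f12, f13, t14, t15, and_true, and_false, if_false,
    iff_true, iff_false, ite_false] at hd1
  simp only [f20, f21, t22, t23, t24, t25, and_true, and_false, if_false,
    iff_true, iff_false, ite_false] at hd2
  have L0 : pathLen k p q r 0 = p := rfl
  have L1 : pathLen k p q r 1 = 2*k+1-p := rfl
  have L2 : pathLen k p q r 2 = q := rfl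
  have L3 : pathLen k p q r 3 = 2*k+1-q := rfl
  have L4 : pathLen k p q r 4 = r := rfl
  have L5 : pathLen k p q r 5 = 2*k+1-r := rfl
  rw [L0, L1, L2, L3, L4, L5] at hlen
  obtain ⟨m, hm⟩ := hodd
  obtain ⟨m0, hm0⟩ := hd0
  obtain ⟨m1, hm1⟩ := hd1
  obtain ⟨m2, hm2⟩ := hd2
  obtain ⟨n, hn⟩ := heven
  by_cases hb0 : pathEdge k p q r 0 0 ∈ c.edges <;>
    by_cases hb1 : pathEdge k p q r 1 0 ∈ c.edges <;>
    by_cases hb2 : pathEdge k p q r 2 0 ∈ c.edges <;>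
    by_cases hb3 : pathEdge k p q r 3 0 ∈ c.edges <;>
    by_cases hb4 : pathEdge k p q r 4 0 ∈ c.edges <;>
    by_cases hb5 : pathEdge k p q r 5 0 ∈ c.edges <;>
    simp only [hb0, hb1, hb2, hb3, hb4, hb5, if_true, if_false, ite_true, ite_false,
      not_false_iff, if_pos, if_neg] at hlen hm0 hm1 hm2 <;>
    omega


def seg (k p q r : ℕ) (i : Fin 6) : (n : ℕ) → (t : ℕ) → (t + n = pathLen k p q r i) →
    (TGraph k p q r).Walk (vtx k p q r i t) (vtx k p q r i (pathLen k p q r i))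
  | 0, t, h => Walk.nil.copy (by rw [← h, Nat.add_zero]) rfl
  | (n+1), t, h => Walk.cons (adj_vtx (by omega)) (seg k p q r i n (t+1) (by omega))

lemma seg_length (i : Fin 6) : ∀ (n t : ℕ) (h : t + n = pathLen k p q r i),
    (seg k p q r i n t h).length = n := by
  intro n
  induction n with
  | zero => intro t h; simp [seg]
  | succ m ih =>
    intro t h
    rw [seg, Walk.length_cons, ih]

lemma seg_support (i : Fin 6) : ∀ (n t : ℕ) (h : t + n = pathLen k p q r i),
    (seg k p q r i n t h).support = (List.range' t (n+1)).map (vtx k p q r i) := by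
  intro n
  induction n with
  | zero =>
    intro t h
    rw [seg, Walk.support_copy, Walk.support_nil, List.range'_one, List.map_singleton, ← h,
      Nat.add_zero]
  | succ m ih =>
    intro t h
    rw [seg, Walk.support_cons, ih]
    conv_rhs => rw [List.range'_succ]
    rw [List.map_cons]

lemma seg_edges (i : Fin 6) : ∀ (n t : ℕ) (h : t + n = pathLen k p q r i),
    (seg k p q r i n t h).edges = (List.range' t n).map (pathEdge k p q r i) := by
  intro n
  induction n with
  | zero => intro t h; simp [seg]
  | succ m ih =>
    intro t h
    rw [seg, Walk.edges_cons, ih]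
    conv_rhs => rw [List.range'_succ]
    rw [List.map_cons]
    rfl

def full (k p q r : ℕ) (i : Fin 6) :
    (TGraph k p q r).Walk (vtx k p q r i 0) (vtx k p q r i (pathLen k p q r i)) :=
  seg k p q r i (pathLen k p q r i) 0 (by omega)

lemma cycle_exists (hk : 1 ≤ k) (hp : 1 ≤ p) (hp' : p ≤ k) (hq : 1 ≤ q) (hq' : q ≤ k)
    (hr : 1 ≤ r) (hr' : r ≤ k) {i1 i2 i3 : Fin 6}
    (he1 : pathEnds i1 = (0,1)) (he2 : pathEnds i2 = (0,2)) (he3 : pathEnds i3 = (1,2)) :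
    ∃ c : (TGraph k p q r).Walk (Sum.inl 0) (Sum.inl 0), c.IsCycle ∧
      c.length = pathLen k p q r i1 + pathLen k p q r i3 + pathLen k p q r i2 := by
  classical
  have hL : ∀ i : Fin 6, 1 ≤ pathLen k p q r i := L_pos hk hp hp' hq hq' hr hr'
  have h12 : i1 ≠ i2 := fun h => by rw [h, he2] at he1; exact absurd he1 (by decide)
  have h13 : i1 ≠ i3 := fun h => by rw [h, he3] at he1; exact absurd he1 (by decide)
  have h23 : i2 ≠ i3 := fun h => by rw [h, he3] at he2; exact absurd he2 (by decide)
  set L1 := pathLen k p q r i1 with hL1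
  set L2 := pathLen k p q r i2 with hL2
  set L3 := pathLen k p q r i3 with hL3
  have c1z : vtx k p q r i1 0 = Sum.inl 0 := by rw [vtx_zero, he1]
  have c1l : vtx k p q r i1 L1 = Sum.inl 1 := by rw [vtx_last le_rfl (hL i1), he1]
  have c2z : vtx k p q r i2 0 = Sum.inl 0 := by rw [vtx_zero, he2]
  have c2l : vtx k p q r i2 L2 = Sum.inl 2 := by rw [vtx_last le_rfl (hL i2), he2]
  have c3z : vtx k p q r i3 0 = Sum.inl 1 := by rw [vtx_zero, he3]
  have c3l : vtx k p q r i3 L3 = Sum.inl 2 := by rw [vtx_last le_rfl (hL i3), he3]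
  let W1 : (TGraph k p q r).Walk (Sum.inl 0) (Sum.inl 1) := (full k p q r i1).copy c1z c1l
  let W2 : (TGraph k p q r).Walk (Sum.inl 0) (Sum.inl 2) := (full k p q r i2).copy c2z c2l
  let W3 : (TGraph k p q r).Walk (Sum.inl 1) (Sum.inl 2) := (full k p q r i3).copy c3z c3l
  refine ⟨(W1.append W3).append W2.reverse, ⟨⟨?_, ?_⟩, ?_⟩, ?_⟩
  · -- IsTrail : edges nodup
    constructor
    erw [Walk.edges_append, Walk.edges_append, Walk.edges_reverse]
    have hw1 : W1.edges = (List.range' 0 L1).map (pathEdge k p q r i1) := by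
      erw [Walk.edges_copy, full, seg_edges]
    have hw2 : W2.edges = (List.range' 0 L2).map (pathEdge k p q r i2) := by
      erw [Walk.edges_copy, full, seg_edges]
    have hw3 : W3.edges = (List.range' 0 L3).map (pathEdge k p q r i3) := by
      erw [Walk.edges_copy, full, seg_edges]
    have hnd : ∀ (j : Fin 6) (n : ℕ), n ≤ pathLen k p q r j →
        ((List.range' 0 n).map (pathEdge k p q r j)).Nodup := by
      intro j n hn
      refine List.Nodup.map_on ?_ (List.nodup_range' 1 Nat.one_pos)
      intro s hs t ht hst
      rw [List.mem_range'_1] at hs ht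
      exact (edge_inj hk hp' hq' hr' (by omega) (by omega) hst).2
    have hdisj : ∀ (j j' : Fin 6), j ≠ j' →
        ((List.range' 0 (pathLen k p q r j)).map (pathEdge k p q r j)).Disjoint
          ((List.range' 0 (pathLen k p q r j')).map (pathEdge k p q r j')) := by
      intro j j' hjj e hej hej'
      rw [List.mem_map] at hej hej'
      obtain ⟨s, hs, rfl⟩ := hej
      obtain ⟨t, ht, hst⟩ := hej'
      rw [List.mem_range'_1] at hs ht
      exact hjj ((edge_inj hk hp' hq' hr' (by omega) (by omega) hst.symm).1)
    rw [hw1, hw2, hw3]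
    refine List.Nodup.append (List.Nodup.append (hnd i1 L1 le_rfl) (hnd i3 L3 le_rfl)
      (hdisj i1 i3 h13)) (List.nodup_reverse.2 (hnd i2 L2 le_rfl)) ?_
    intro e he hc
    rw [List.mem_reverse] at hc
    rw [List.mem_append] at he
    rcases he with he | he
    · exact hdisj i1 i2 h12 he hc
    · exact hdisj i3 i2 (Ne.symm h23) he hc
  · -- ne nil
    intro hnil
    have := congrArg Walk.length hnil
    erw [Walk.length_append, Walk.length_append, Walk.length_nil] at this
    have hl3 : W3.length = L3 := by erw [Walk.length_copy, full, seg_length]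
    have := hL i3
    omega
  · -- support tail nodup
    erw [Walk.tail_support_append, Walk.tail_support_append]
    have hs1 : W1.support.tail = (List.range' 1 L1).map (vtx k p q r i1) := by
      erw [Walk.support_copy, full, seg_support, show List.range' 0 (L1+1) = 0 :: List.range' 1 L1 by rw [List.range'_succ], List.map_cons, List.tail_cons]
    have hs3 : W3.support.tail = (List.range' 1 L3).map (vtx k p q r i3) := by
      erw [Walk.support_copy, full, seg_support, show List.range' 0 (L3+1) = 0 :: List.range' 1 L3 by rw [List.range'_succ], List.map_cons, List.tail_cons]
    have hs2 : W2.reverse.support.tail = ((List.range' 0 L2).map (vtx k p q r i2)).reverse := by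
      erw [Walk.support_reverse, Walk.support_copy, full, seg_support]
      rw [show List.range' 0 (L2+1) = List.range' 0 L2 ++ [L2] from by
        rw [List.range'_1_concat]; norm_num]
      rw [List.map_append, List.reverse_append]
      simp [c2l]; rfl
    rw [hs1, hs3, hs2]
    have hvnd : ∀ (j : Fin 6) (a n : ℕ), a + n ≤ pathLen k p q r j + 1 →
        ((List.range' a n).map (vtx k p q r j)).Nodup := by
      intro j a n hn
      refine List.Nodup.map_on ?_ (List.nodup_range' 1 Nat.one_pos)
      intro s hs t ht hst
      rw [List.mem_range'_1] at hs ht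
      exact vtx_inj_t (by omega) (by omega) hst
    have key : ∀ (j j' : Fin 6), j ≠ j' → ∀ s t : ℕ, vtx k p q r j s = vtx k p q r j' t →
        ((s = 0 ∨ pathLen k p q r j ≤ s) ∧ (t = 0 ∨ pathLen k p q r j' ≤ t)) :=
      fun j j' hjj s t h => endpoint_of_vtx_eq (fun hc => hjj (Fin.ext hc)) h
    have d13 : ((List.range' 1 L1).map (vtx k p q r i1)).Disjoint
        ((List.range' 1 L3).map (vtx k p q r i3)) := by
      intro e he1 he3
      rw [List.mem_map] at he1 he3
      obtain ⟨s, hs, rfl⟩ := he1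
      obtain ⟨t, ht, h⟩ := he3
      rw [List.mem_range'_1] at hs ht
      obtain ⟨hc1, hc2⟩ := key i3 i1 (Ne.symm h13) t s h
      have hsL : s = L1 := by omega
      have htL : t = L3 := by omega
      rw [hsL, htL, c1l, c3l] at h
      exact absurd (Sum.inl.inj h) (by decide)
    have d12 : ((List.range' 1 L1).map (vtx k p q r i1)).Disjoint
        ((List.range' 0 L2).map (vtx k p q r i2)) := by
      intro e he1 he2'
      rw [List.mem_map] at he1 he2'
      obtain ⟨s, hs, rfl⟩ := he1
      obtain ⟨t, ht, h⟩ := he2'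
      rw [List.mem_range'_1] at hs ht
      obtain ⟨hc1, hc2⟩ := key i2 i1 (Ne.symm h12) t s h
      have hsL : s = L1 := by omega
      have htL : t = 0 := by omega
      rw [hsL, htL, c1l, c2z] at h
      exact absurd (Sum.inl.inj h) (by decide)
    have d32 : ((List.range' 1 L3).map (vtx k p q r i3)).Disjoint
        ((List.range' 0 L2).map (vtx k p q r i2)) := by
      intro e he3 he2'
      rw [List.mem_map] at he3 he2'
      obtain ⟨s, hs, rfl⟩ := he3
      obtain ⟨t, ht, h⟩ := he2'
      rw [List.mem_range'_1] at hs ht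
      obtain ⟨hc1, hc2⟩ := key i2 i3 h23 t s h
      have hsL : s = L3 := by omega
      have htL : t = 0 := by omega
      rw [hsL, htL, c3l, c2z] at h
      exact absurd (Sum.inl.inj h) (by decide)
    refine List.Nodup.append (List.Nodup.append ?_ ?_ d13) (List.nodup_reverse.2 ?_) ?_
    · exact hvnd i1 1 L1 (by omega)
    · exact hvnd i3 1 L3 (by omega)
    · exact hvnd i2 0 L2 (by omega)
    · intro e he hc
      rw [List.mem_reverse] at hc
      rw [List.mem_append] at he
      rcases he with he | he
      · exact d12 he hc
      · exact d32 he hc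
  · erw [Walk.length_append, Walk.length_append, Walk.length_reverse]
    have hl1 : W1.length = L1 := by erw [Walk.length_copy, full, seg_length]
    have hl2 : W2.length = L2 := by erw [Walk.length_copy, full, seg_length]
    have hl3 : W3.length = L3 := by erw [Walk.length_copy, full, seg_length]
    omega

end TWork

theorem even_case_TGraph_oddGirth (k p q r : ℕ) (hk : 1 ≤ k)
    (hp : 1 ≤ p) (hp' : p ≤ k) (hq : 1 ≤ q) (hq' : q ≤ k)
    (hr : 1 ≤ r) (hr' : r ≤ k) (heven : Even (p + q + r)) :
    oddGirthAtLeast (TGraph k p q r) (2*k+1) ↔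
      (p ≤ q + r ∧ q ≤ p + r ∧ r ≤ p + q) := by
  obtain ⟨n, hn⟩ := heven
  constructor
  · intro hg
    refine ⟨?_, ?_, ?_⟩
    · by_contra hcon
      push_neg at hcon
      obtain ⟨c, hc, hlen⟩ := TWork.cycle_exists hk hp hp' hq hq' hr hr'
        (i1 := 1) (i2 := 2) (i3 := 4) rfl rfl rfl
      have hL : c.length = (2*k+1-p) + r + q := hlen
      have hodd : Odd c.length := by
        rw [Nat.odd_iff, hL]
        omega
      have := hg _ c hc hodd
      omega
    · by_contra hcon
      push_neg at hcon
      obtain ⟨c, hc, hlen⟩ := TWork.cycle_exists hk hp hp' hq hq' hr hr'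
        (i1 := 0) (i2 := 3) (i3 := 4) rfl rfl rfl
      have hL : c.length = p + r + (2*k+1-q) := hlen
      have hodd : Odd c.length := by
        rw [Nat.odd_iff, hL]
        omega
      have := hg _ c hc hodd
      omega
    · by_contra hcon
      push_neg at hcon
      obtain ⟨c, hc, hlen⟩ := TWork.cycle_exists hk hp hp' hq hq' hr hr'
        (i1 := 0) (i2 := 2) (i3 := 5) rfl rfl rfl
      have hL : c.length = p + (2*k+1-r) + q := hlen
      have hodd : Odd c.length := by
        rw [Nat.odd_iff, hL]
        omega
      have := hg _ c hc hodd
      omega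
  · rintro ⟨h1, h2, h3⟩
    exact TWork.lower_bound hk hp hp' hq hq' hr hr' ⟨n, hn⟩ h1 h2 h3
end

section
/- Let G and H be graphs, both of odd-girth 2k+1, and let φ : G → H be a graph homomorphism. If u and v are two vertices of G lying on a common cycle of length 2k+1 in G, then d_H(φ(u), φ(v)) = d_G(u, v). -/
open SimpleGraph

/-- `G` has odd-girth exactly `n`. -/
def hasOddGirth {V : Type*} (G : SimpleGraph V) (n : ℕ) : Prop :=
  oddGirthAtLeast G n ∧ ∃ (x : V) (w : G.Walk x x), w.IsCycle ∧ w.length = n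

section Aux

variable {V : Type*} {G : SimpleGraph V}

lemma aux_length_rotate [DecidableEq V] {x y : V} (w : G.Walk x x) (h : y ∈ w.support) :
    (w.rotate y h).length = w.length := by
  have := congrArg SimpleGraph.Walk.length (w.take_spec h)
  rw [SimpleGraph.Walk.length_append] at this
  rw [SimpleGraph.Walk.rotate, SimpleGraph.Walk.length_append]
  omega

/-- In a path from `z` to `x` of length at least 2, the edge `s(x,z)` does not occur. -/
lemma aux_edge_not_mem {z x : V} (p : G.Walk z x) (hp : p.IsPath) (hl : 2 ≤ p.length) :
    s(x, z) ∉ p.edges := by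
  cases p with
  | nil => simp
  | cons h q =>
    rename_i wv
    intro he
    rw [SimpleGraph.Walk.edges_cons, List.mem_cons] at he
    rcases he with he | he
    · have hxw : x = wv := by
        rcases Sym2.eq_iff.mp he with ⟨h1, h2⟩ | ⟨h1, h2⟩
        · exact h1.trans h2
        · exact h1
      subst hxw
      have hq : q.IsPath := hp.of_cons
      have : q = SimpleGraph.Walk.nil := (SimpleGraph.Walk.isPath_iff_eq_nil (p := q)).mp hq
      subst this
      simp at hl
    · have hz : z ∈ q.support := q.snd_mem_support_of_mem_edges he
      have : z ∉ q.support := by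
        have := hp.support_nodup
        rw [SimpleGraph.Walk.support_cons, List.nodup_cons] at this
        exact this.1
      exact this hz

/-- In a graph of odd girth at least `n`, every closed walk of odd length has
length at least `n`. -/
lemma aux_odd_closed_walk (n : ℕ) (hG : oddGirthAtLeast G n) :
    ∀ (m : ℕ) (x : V) (w : G.Walk x x), w.length = m → Odd w.length → n ≤ w.length := by
  intro m
  induction m using Nat.strong_induction_on with
  | _ m ih =>
  intro x w hwm hodd
  classical
  by_cases hnd : w.support.tail.Nodup
  · -- show `w` is a cycle
    cases w with
    | nil => simp [Nat.odd_iff] at hodd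
    | cons h p =>
      rename_i z
      have hps : p.support.Nodup := by simpa using hnd
      have hp : p.IsPath := SimpleGraph.Walk.IsPath.mk' hps
      have hodd' : Odd (p.length + 1) := by simpa using hodd
      have hne1 : p.length ≠ 0 := by
        intro h0
        have hx : x ∈ p.support := p.end_mem_support
        have hz : z ∈ p.support := p.start_mem_support
        have hlen : p.support.length = 1 := by
          rw [SimpleGraph.Walk.length_support, h0]
        obtain ⟨a, ha⟩ := List.length_eq_one_iff.mp hlen
        rw [ha, List.mem_singleton] at hx hz
        exact h.ne (hx.trans hz.symm)
      have hne2 : p.length ≠ 1 := by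
        intro h1
        rw [Nat.odd_iff, h1] at hodd'
        simp at hodd'
      have hl2 : 2 ≤ p.length := by omega
      have hedge : s(x, z) ∉ p.edges := aux_edge_not_mem p hp hl2
      have hcyc : (SimpleGraph.Walk.cons h p).IsCycle :=
        (SimpleGraph.Walk.cons_isCycle_iff p h).mpr ⟨hp, hedge⟩
      exact hG x (SimpleGraph.Walk.cons h p) hcyc hodd
  · -- split the walk at a repeated vertex
    rw [List.nodup_iff_count_le_one] at hnd
    push_neg at hnd
    obtain ⟨y, hy2⟩ := hnd
    have hyt : y ∈ w.support.tail := by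
      apply List.count_pos_iff.mp; omega
    have hy : y ∈ w.support := List.mem_of_mem_tail hyt
    have hlen1 : (w.rotate y hy).length = w.length := aux_length_rotate w hy
    have hcount1 : 2 ≤ (w.rotate y hy).support.tail.count y := by
      have := (SimpleGraph.Walk.support_rotate w y hy).perm.count_eq y
      omega
    have hnn : ¬ (w.rotate y hy).Nil := by
      rw [SimpleGraph.Walk.not_nil_iff_lt_length, hlen1]
      have := hodd
      rw [Nat.odd_iff] at this
      omega
    obtain ⟨z, hadj, p, hpeq⟩ := SimpleGraph.Walk.not_nil_iff.mp hnn
    have hcp : 2 ≤ p.support.count y := by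
      rw [hpeq] at hcount1
      simpa using hcount1
    have hyp : y ∈ p.support := by
      apply List.count_pos_iff.mp; omega
    set q := p.takeUntil y hyp with hq
    set r := p.dropUntil y hyp with hr
    have hspec : q.append r = p := p.take_spec hyp
    have hlenqr : q.length + r.length = p.length := by
      have := congrArg SimpleGraph.Walk.length hspec
      rwa [SimpleGraph.Walk.length_append] at this
    have hcq : q.support.count y = 1 := p.count_support_takeUntil_eq_one hyp
    have hcr : 1 ≤ r.support.tail.count y := by
      have := congrArg (List.count y) (congrArg SimpleGraph.Walk.support hspec)
      rw [SimpleGraph.Walk.support_append, List.count_append] at this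
      omega
    have hrlen : 1 ≤ r.length := by
      have hmem : y ∈ r.support.tail := by
        apply List.count_pos_iff.mp; omega
      have h1 : 0 < r.support.tail.length := List.length_pos_iff.mpr (List.ne_nil_of_mem hmem)
      have h2 : r.support.length = r.length + 1 := SimpleGraph.Walk.length_support r
      rw [List.length_tail] at h1
      omega
    -- the two closed subwalks
    have hlenp : (w.rotate y hy).length = p.length + 1 := by rw [hpeq]; simp
    have hmsum : (q.length + 1) + r.length = m := by omega
    have hoddm : m % 2 = 1 := by rw [← hwm, ← Nat.odd_iff]; exact hodd
    have hsplit : (q.length + 1) % 2 = 1 ∨ r.length % 2 = 1 := by omega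
    rcases hsplit with hodd1 | hodd2
    · have hlt : (SimpleGraph.Walk.cons hadj q).length < m := by
        simp only [SimpleGraph.Walk.length_cons]; omega
      have := ih _ hlt y (SimpleGraph.Walk.cons hadj q) rfl
        (by rw [Nat.odd_iff]; simpa using hodd1)
      simp only [SimpleGraph.Walk.length_cons] at this
      omega
    · have hlt : r.length < m := by omega
      have := ih _ hlt y r rfl (by rwa [Nat.odd_iff])
      omega

/-- If a pair of walks `p : u → v` and `q : v → u` together form a closed walk of
length `2k+1` in a graph of odd girth at least `2k+1`, then
`dist u v = min p.length q.length`. -/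
lemma aux_dist_eq_min {k : ℕ} (hG : oddGirthAtLeast G (2*k+1)) {u v : V}
    (p : G.Walk u v) (q : G.Walk v u) (hpq : p.length + q.length = 2*k+1) :
    G.dist u v = min p.length q.length := by
  have hreach : G.Reachable u v := ⟨p⟩
  obtain ⟨r, hr⟩ := hreach.exists_walk_length_eq_dist
  have hdp : G.dist u v ≤ p.length := SimpleGraph.dist_le p
  have hdq : G.dist u v ≤ q.length := by
    have := SimpleGraph.dist_le q
    rwa [SimpleGraph.dist_comm] at this
  set d := G.dist u v with hd
  have hparity : (d + p.length) % 2 = 1 ∨ (d + q.length) % 2 = 1 := by omega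
  rcases hparity with hodd | hodd
  · -- closed walk p.append r.reverse of length p.length + d
    have hwalk := aux_odd_closed_walk (2*k+1) hG (p.append r.reverse).length u
      (p.append r.reverse) rfl
      (by
        rw [Nat.odd_iff, SimpleGraph.Walk.length_append,
          SimpleGraph.Walk.length_reverse, hr]
        omega)
    rw [SimpleGraph.Walk.length_append, SimpleGraph.Walk.length_reverse, hr] at hwalk
    omega
  · -- closed walk r.append q of length d + q.length
    have hwalk := aux_odd_closed_walk (2*k+1) hG (r.append q).length u
      (r.append q) rfl
      (by
        rw [Nat.odd_iff, SimpleGraph.Walk.length_append, hr]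
        omega)
    rw [SimpleGraph.Walk.length_append, hr] at hwalk
    omega

lemma aux_mem_tail {x y : V} (w : G.Walk x x) (hw : ¬ w.Nil) (h : y ∈ w.support) :
    y ∈ w.support.tail := by
  cases w with
  | nil => simp at hw
  | cons hadj p =>
    rw [SimpleGraph.Walk.support_cons, List.mem_cons] at h
    rw [SimpleGraph.Walk.support_cons, List.tail_cons]
    rcases h with rfl | h
    · exact p.end_mem_support
    · exact h

end Aux

/-- If `G` and `H` both have odd-girth `2k+1`, `φ : G → H` is a homomorphism and
`u, v` lie on a common `(2k+1)`-cycle of `G`, then `d_H(φ u, φ v) = d_G(u, v)`. -/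
theorem hom_preserves_dist_on_cycle {V W : Type*}
    (G : SimpleGraph V) (H : SimpleGraph W) (k : ℕ) (hk : 1 ≤ k)
    (hG : hasOddGirth G (2*k+1)) (hH : hasOddGirth H (2*k+1))
    (φ : G →g H) (u v : V)
    (hcyc : ∃ (x : V) (w : G.Walk x x),
      w.IsCycle ∧ w.length = 2*k+1 ∧ u ∈ w.support ∧ v ∈ w.support) :
    H.dist (φ u) (φ v) = G.dist u v := by
  classical
  obtain ⟨x, w, hwc, hwl, hu, hv⟩ := hcyc
  have hwn : ¬ w.Nil := by
    rw [SimpleGraph.Walk.not_nil_iff_lt_length, hwl]; omega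
  set w1 := w.rotate u hu with hw1
  have hlen1 : w1.length = 2*k+1 := by
    rw [hw1, aux_length_rotate w hu, hwl]
  have hv1 : v ∈ w1.support := by
    have hvt : v ∈ w.support.tail := aux_mem_tail w hwn hv
    have : v ∈ w1.support.tail :=
      ((SimpleGraph.Walk.support_rotate w u hu).perm.mem_iff).mpr hvt
    exact List.mem_of_mem_tail this
  set p := w1.takeUntil v hv1 with hp
  set q := w1.dropUntil v hv1 with hq
  have hspec : p.append q = w1 := w1.take_spec hv1
  have hsum : p.length + q.length = 2*k+1 := by
    have := congrArg SimpleGraph.Walk.length hspec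
    rw [SimpleGraph.Walk.length_append] at this
    omega
  have hsumH : (p.map φ).length + (q.map φ).length = 2*k+1 := by
    rwa [SimpleGraph.Walk.length_map, SimpleGraph.Walk.length_map]
  rw [aux_dist_eq_min hG.1 p q hsum, aux_dist_eq_min hH.1 (p.map φ) (q.map φ) hsumH,
    SimpleGraph.Walk.length_map, SimpleGraph.Walk.length_map]
end

section
/- A graph is K_4-minor-free if and only if it is a subgraph of some 2-tree. -/
open SimpleGraph

/-- `G` has a `K₄` minor: there are four nonempty, pairwise disjoint, connected
branch sets with an edge of `G` between every two of them. -/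
def HasK4Minor {V : Type*} (G : SimpleGraph V) : Prop :=
  ∃ S : Fin 4 → Set V,
    (∀ i, (S i).Nonempty) ∧
    (∀ i, (G.induce (S i)).Connected) ∧
    (Pairwise fun i j => Disjoint (S i) (S j)) ∧
    (Pairwise fun i j => ∃ a ∈ S i, ∃ b ∈ S j, G.Adj a b)

/-- A graph is a 2-tree if its vertices can be enumerated `v₀, v₁, …, v_{n-1}` so that
`v₀v₁` is an edge and each `vᵢ` (`i ≥ 2`) is adjacent, among the earlier vertices,
to exactly two vertices, which are themselves adjacent. -/
def IsTwoTree {V : Type*} (G : SimpleGraph V) : Prop :=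
  ∃ (n : ℕ) (hn : 2 ≤ n) (e : Fin n ≃ V),
    G.Adj (e ⟨0, by omega⟩) (e ⟨1, by omega⟩) ∧
    ∀ i : Fin n, 2 ≤ (i : ℕ) →
      ∃ j l : Fin n, j < i ∧ l < i ∧ j ≠ l ∧ G.Adj (e j) (e l) ∧
        ∀ m : Fin n, m < i → (G.Adj (e m) (e i) ↔ m = j ∨ m = l)

section Reach
variable {V : Type*} {W : Type*}

/-- Reachability inside a vertex set `S`. -/
inductive ReachIn (G : SimpleGraph V) (S : Set V) : V → V → Prop
  | refl {x : V} (hx : x ∈ S) : ReachIn G S x x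
  | cons {x y z : V} (hx : x ∈ S) (hxy : G.Adj x y) (h : ReachIn G S y z) : ReachIn G S x z

namespace ReachIn

lemma mem_left {G : SimpleGraph V} {S : Set V} {x y : V} (h : ReachIn G S x y) : x ∈ S := by
  cases h <;> assumption

lemma mem_right {G : SimpleGraph V} {S : Set V} {x y : V} (h : ReachIn G S x y) : y ∈ S := by
  induction h with
  | refl hx => exact hx
  | cons hx hxy h ih => exact ih

lemma trans {G : SimpleGraph V} {S : Set V} {x y z : V}
    (h : ReachIn G S x y) (h' : ReachIn G S y z) : ReachIn G S x z := by
  induction h with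
  | refl hx => exact h'
  | cons hx hxy h ih => exact .cons hx hxy (ih h')

lemma symm {G : SimpleGraph V} {S : Set V} {x y : V}
    (h : ReachIn G S x y) : ReachIn G S y x := by
  induction h with
  | refl hx => exact .refl hx
  | cons hx hxy h ih => exact ih.trans (.cons h.mem_left hxy.symm (.refl hx))

lemma mono {G : SimpleGraph V} {S S' : Set V} (hSS : S ⊆ S') {x y : V}
    (h : ReachIn G S x y) : ReachIn G S' x y := by
  induction h with
  | refl hx => exact .refl (hSS hx)
  | cons hx hxy h ih => exact .cons (hSS hx) hxy ih

end ReachIn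

lemma induce_adj' {G : SimpleGraph V} {S : Set V} {a b : S} :
    (G.induce S).Adj a b ↔ G.Adj a b := by
  simp [SimpleGraph.comap]

/-- Connectivity of an induced subgraph in terms of `ReachIn`. -/
lemma connIn_iff (G : SimpleGraph V) (S : Set V) :
    (G.induce S).Connected ↔ S.Nonempty ∧ ∀ x ∈ S, ∀ y ∈ S, ReachIn G S x y := by
  constructor
  · intro hc
    obtain ⟨⟨x0, hx0⟩⟩ := hc.nonempty
    refine ⟨⟨x0, hx0⟩, ?_⟩
    intro x hx y hy
    obtain ⟨w⟩ := hc.preconnected ⟨x, hx⟩ ⟨y, hy⟩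
    have : ∀ (A B : S) (_ : (G.induce S).Walk A B), ReachIn G S A B := by
      intro A B w
      induction w with
      | nil => exact .refl (Subtype.coe_prop _)
      | cons h p ih =>
        exact .cons (Subtype.coe_prop _) (induce_adj'.mp h) ih
    exact this ⟨x, hx⟩ ⟨y, hy⟩ w
  · rintro ⟨⟨x0, hx0⟩, hreach⟩
    have key : ∀ x y, ReachIn G S x y → ∀ (hx : x ∈ S) (hy : y ∈ S),
        (G.induce S).Reachable ⟨x, hx⟩ ⟨y, hy⟩ := by
      intro x y h
      induction h with
      | refl hx => intro _ _; rfl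
      | @cons x y z hx hxy h ih =>
        intro hx' hz
        have hmem : y ∈ S := h.mem_left
        have hadj : (G.induce S).Adj ⟨x, hx'⟩ ⟨y, hmem⟩ := induce_adj'.mpr hxy
        exact (hadj.reachable).trans (ih hmem hz)
    haveI : Nonempty S := ⟨⟨x0, hx0⟩⟩
    refine Connected.mk ?_
    intro ⟨x, hx⟩ ⟨y, hy⟩
    exact key x y (hreach x hx y hy) hx hy

/-- Transfer of `K₄` minors along injective graph homomorphisms. -/
lemma HasK4Minor.mono {G : SimpleGraph V} {H : SimpleGraph W} (f : V → W)
    (hinj : Function.Injective f) (hadj : ∀ a b, G.Adj a b → H.Adj (f a) (f b)) :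
    HasK4Minor G → HasK4Minor H := by
  rintro ⟨S, hne, hconn, hdisj, hedge⟩
  refine ⟨fun i => f '' S i, fun i => (hne i).image f, ?_, ?_, ?_⟩
  · intro i
    rw [connIn_iff H (f '' S i)]
    obtain ⟨hne', hreach⟩ := (connIn_iff G (S i)).mp (hconn i)
    refine ⟨hne'.image f, ?_⟩
    rintro _ ⟨x, hx, rfl⟩ _ ⟨y, hy, rfl⟩
    have : ∀ x y, ReachIn G (S i) x y → ReachIn H (f '' S i) (f x) (f y) := by
      intro x y h
      induction h with
      | refl hx => exact .refl ⟨_, hx, rfl⟩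
      | cons hx hxy h ih => exact .cons ⟨_, hx, rfl⟩ (hadj _ _ hxy) ih
    exact this x y (hreach x hx y hy)
  · intro i j hij
    rw [Set.disjoint_image_iff hinj]
    exact hdisj hij
  · intro i j hij
    obtain ⟨a, ha, b, hb, hab⟩ := hedge hij
    exact ⟨f a, ⟨a, ha, rfl⟩, f b, ⟨b, hb, rfl⟩, hadj _ _ hab⟩

end Reach
section Lift
variable {V : Type*} {W : Type*}

/-- Lifting a `K₄` minor from a graph `H` whose edges are either genuine `G`-edges
(through `φ`) or edges routed through a fixed extra vertex `v`, all routed edges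
having the endpoint `w₀` (which is `G`-adjacent to `v`). -/
lemma HasK4Minor.lift {G : SimpleGraph V} {H : SimpleGraph W} (φ : W → V)
    (hinj : Function.Injective φ) (v : V) (hv : v ∉ Set.range φ) (w₀ : W)
    (hvw : G.Adj v (φ w₀))
    (hedge : ∀ x y, H.Adj x y →
      G.Adj (φ x) (φ y) ∨ (x = w₀ ∧ G.Adj v (φ y)) ∨ (y = w₀ ∧ G.Adj v (φ x))) :
    HasK4Minor H → HasK4Minor G := by
  rintro ⟨S, hne, hconn, hdisj, hedges⟩
  classical
  set T : Fin 4 → Set V := fun i => φ '' S i ∪ {z | z = v ∧ w₀ ∈ S i} with hT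
  have hTmem : ∀ i x, x ∈ S i → φ x ∈ T i := fun i x hx => Or.inl ⟨x, hx, rfl⟩
  have hvT : ∀ i, w₀ ∈ S i → v ∈ T i := fun i h => Or.inr ⟨rfl, h⟩
  -- reachability transfer
  have hreach : ∀ i x y, ReachIn H (S i) x y → ReachIn G (T i) (φ x) (φ y) := by
    intro i x y h
    induction h with
    | refl hx => exact .refl (hTmem i _ hx)
    | @cons x y z hx hxy h ih =>
      rcases hedge x y hxy with hg | ⟨rfl, hr⟩ | ⟨rfl, hr⟩
      · exact .cons (hTmem i _ hx) hg ih
      · exact .cons (hTmem i _ hx) hvw.symm (.cons (hvT i hx) hr ih)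
      · exact .cons (hTmem i _ hx) hr.symm (.cons (hvT i h.mem_left) hvw ih)
  refine ⟨T, ?_, ?_, ?_, ?_⟩
  · intro i
    obtain ⟨x, hx⟩ := hne i
    exact ⟨φ x, hTmem i x hx⟩
  · intro i
    rw [connIn_iff]
    obtain ⟨⟨x0, hx0⟩, hr⟩ := (connIn_iff H (S i)).mp (hconn i)
    constructor
    · exact ⟨φ x0, hTmem i x0 hx0⟩
    · have main : ∀ x ∈ T i, ReachIn G (T i) x (φ x0) := by
        intro x hx
        rcases hx with ⟨a, ha, rfl⟩ | ⟨rfl, hw⟩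
        · exact hreach i a x0 (hr a ha x0 hx0)
        · exact .cons (hvT i hw) hvw (hreach i w₀ x0 (hr w₀ hw x0 hx0))
      intro x hx y hy
      exact (main x hx).trans (main y hy).symm
  · intro i j hij
    have hd := hdisj hij
    rw [Set.disjoint_left]
    rintro x (⟨a, ha, rfl⟩ | ⟨rfl, hw⟩)
    · rintro (⟨b, hb, hba⟩ | ⟨hav, hw⟩)
      · exact hd.ne_of_mem ha hb (hinj hba.symm)
      · exact hv ⟨a, hav⟩
    · rintro (⟨b, hb, hba⟩ | ⟨-, hw'⟩)
      · exact hv ⟨b, hba⟩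
      · exact hd.ne_of_mem hw hw' rfl
  · intro i j hij
    obtain ⟨a, ha, b, hb, hab⟩ := hedges hij
    rcases hedge a b hab with hg | ⟨rfl, hr⟩ | ⟨rfl, hr⟩
    · exact ⟨φ a, hTmem i a ha, φ b, hTmem j b hb, hg⟩
    · exact ⟨v, hvT i ha, φ b, hTmem j b hb, hr⟩
    · exact ⟨φ a, hTmem i a ha, v, hvT j hb, hr.symm⟩

end Lift
section NoK4
variable {V : Type*}

/-- Ordered 2-tree structure on `Fin n` (with the identity enumeration). -/
def OrdTT (n : ℕ) (T : SimpleGraph (Fin n)) : Prop :=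
  ∃ _hn : 2 ≤ n, T.Adj ⟨0, by omega⟩ ⟨1, by omega⟩ ∧
    ∀ i : Fin n, 2 ≤ (i : ℕ) →
      ∃ j l : Fin n, j < i ∧ l < i ∧ j ≠ l ∧ T.Adj j l ∧
        ∀ m : Fin n, m < i → (T.Adj m i ↔ m = j ∨ m = l)

/-- Cleaning a walk: if `v`'s only neighbours are `j` and `l`, which are adjacent,
then reachability within `S` between vertices other than `v` yields reachability in
`S \ {v}`. -/
lemma reachIn_avoid {G : SimpleGraph V} {S : Set V} {v j l : V}
    (hnb : ∀ x, G.Adj v x → x = j ∨ x = l) (hjl : G.Adj j l) :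
    ∀ {x z : V}, ReachIn G S x z → z ≠ v →
      ((x ≠ v → ReachIn G (S \ {v}) x z) ∧
       (∀ w, w ≠ v → w ∈ S → G.Adj v w → x = v → ReachIn G (S \ {v}) w z)) := by
  intro x z h
  induction h with
  | @refl x hx =>
    intro hz
    refine ⟨fun hxv => .refl ⟨hx, hxv⟩, fun w hw hwS hvw hxv => absurd (hxv ▸ rfl) hz⟩
  | @cons x y z hx hxy h ih =>
    intro hz
    have IH := ih hz
    constructor
    · intro hxv
      by_cases hy : y = v
      · subst hy
        exact IH.2 x hxv hx hxy.symm rfl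
      · exact .cons ⟨hx, hxv⟩ hxy (IH.1 hy)
    · intro w hw hwS hvw hxv
      have hvy : G.Adj v y := hxv ▸ hxy
      have hyv : y ≠ v := hvy.ne'
      have hry : ReachIn G (S \ {v}) y z := IH.1 hyv
      by_cases hwy : w = y
      · exact hwy ▸ hry
      · have hadj : G.Adj w y := by
          rcases hnb y hvy with rfl | rfl <;> rcases hnb w hvw with rfl | rfl
          · exact absurd rfl hwy
          · exact hjl.symm
          · exact hjl
          · exact absurd rfl hwy
        exact .cons ⟨hwS, hw⟩ hadj hry

/-- If `v`'s only neighbours are the adjacent pair `j`,`l`, a `K₄` minor can be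
chosen avoiding `v`. -/
lemma hasK4_avoid {G : SimpleGraph V} {v j l : V}
    (hnb : ∀ x, G.Adj v x → x = j ∨ x = l) (hjl : G.Adj j l) :
    HasK4Minor G → ∃ S : Fin 4 → Set V,
      (∀ i, (S i).Nonempty) ∧
      (∀ i, ∀ x ∈ S i, ∀ y ∈ S i, ReachIn G (S i) x y) ∧
      (Pairwise fun i k => Disjoint (S i) (S k)) ∧
      (Pairwise fun i k => ∃ a ∈ S i, ∃ b ∈ S k, G.Adj a b) ∧
      (∀ i, ∀ x ∈ S i, x ≠ v) := by
  classical
  rintro ⟨S, hne, hconn, hdisj, hedges⟩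
  have hr : ∀ i, ∀ x ∈ S i, ∀ y ∈ S i, ReachIn G (S i) x y :=
    fun i => ((connIn_iff G (S i)).mp (hconn i)).2
  by_cases hvS : ∃ i0, v ∈ S i0
  · obtain ⟨i0, hv0⟩ := hvS
    have hvonly : ∀ k, k ≠ i0 → v ∉ S k := by
      intro k hk hvk
      exact (hdisj hk).ne_of_mem hvk hv0 rfl
    by_cases hsing : ∀ u ∈ S i0, u = v
    · -- singleton case: pigeonhole contradiction
      exfalso
      have key : ∀ k, k ≠ i0 → ∃ b, b ∈ S k ∧ (b = j ∨ b = l) := by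
        intro k hk
        obtain ⟨a, ha, b, hb, hab⟩ := hedges (Ne.symm hk)
        have := hsing a ha
        subst this
        exact ⟨b, hb, hnb b hab⟩
      obtain ⟨i1, i2, i3, h1, h2, h3, h12, h13, h23⟩ :
          ∃ i1 i2 i3 : Fin 4, i1 ≠ i0 ∧ i2 ≠ i0 ∧ i3 ≠ i0 ∧ i1 ≠ i2 ∧ i1 ≠ i3 ∧ i2 ≠ i3 := by
        fin_cases i0 <;> decide
      obtain ⟨b1, hb1, e1⟩ := key i1 h1
      obtain ⟨b2, hb2, e2⟩ := key i2 h2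
      obtain ⟨b3, hb3, e3⟩ := key i3 h3
      have n12 : b1 ≠ b2 := (hdisj h12).ne_of_mem hb1 hb2
      have n13 : b1 ≠ b3 := (hdisj h13).ne_of_mem hb1 hb3
      have n23 : b2 ≠ b3 := (hdisj h23).ne_of_mem hb2 hb3
      rcases e1 with rfl | rfl <;> rcases e2 with rfl | rfl <;>
        rcases e3 with rfl | rfl <;>
        first | exact n12 rfl | exact n13 rfl | exact n23 rfl
    · push_neg at hsing
      obtain ⟨u, hu, huv⟩ := hsing
      -- the neighbour of v inside S i0
      have hw : ∃ w, w ∈ S i0 ∧ w ≠ v ∧ G.Adj v w := by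
        have := hr i0 v hv0 u hu
        cases this with
        | refl hx => exact absurd rfl huv
        | @cons x y z hx hxy h => exact ⟨y, h.mem_left, hxy.ne', hxy⟩
      obtain ⟨w, hwS, hwv, hvw⟩ := hw
      refine ⟨fun i => S i \ {v}, ?_, ?_, ?_, ?_, ?_⟩
      · intro i
        by_cases hi : i = i0
        · exact ⟨u, by subst hi; exact ⟨hu, huv⟩⟩
        · obtain ⟨x, hx⟩ := hne i
          exact ⟨x, hx, fun hxx => hvonly i hi (hxx ▸ hx)⟩
      · intro i x hx y hy
        exact ((reachIn_avoid hnb hjl (hr i x hx.1 y hy.1) hy.2).1) hx.2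
      · intro i k hik
        exact ((hdisj hik).mono Set.diff_subset Set.diff_subset)
      · intro i k hik
        obtain ⟨a, ha, b, hb, hab⟩ := hedges hik
        by_cases hav : a = v
        · have hvSi : v ∈ S i := hav ▸ ha
          have hvb : G.Adj v b := hav ▸ hab
          have hii0 : i = i0 := by
            by_contra hii0
            exact hvonly i hii0 hvSi
          subst hii0
          have hbv : b ≠ v := fun hbv => hvonly k hik.symm (hbv ▸ hb)
          have hbjl := hnb b hvb
          have hwb : w ≠ b := (hdisj hik).ne_of_mem hwS hb
          have hadj : G.Adj w b := by
            rcases hnb w hvw with rfl | rfl <;> rcases hbjl with rfl | rfl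
            · exact absurd rfl hwb
            · exact hjl
            · exact hjl.symm
            · exact absurd rfl hwb
          exact ⟨w, ⟨hwS, hwv⟩, b, ⟨hb, hbv⟩, hadj⟩
        · by_cases hbv : b = v
          · have hvSk : v ∈ S k := hbv ▸ hb
            have hva : G.Adj v a := hbv ▸ hab.symm
            have hki0 : k = i0 := by
              by_contra hki0
              exact hvonly k hki0 hvSk
            subst hki0
            have hav' : a ≠ v := fun h => hvonly i hik (h ▸ ha)
            have hajl := hnb a hva
            have hwa : w ≠ a := (hdisj hik.symm).ne_of_mem hwS ha
            have hadj : G.Adj a w := by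
              rcases hnb w hvw with rfl | rfl <;> rcases hajl with rfl | rfl
              · exact absurd rfl hwa
              · exact hjl.symm
              · exact hjl
              · exact absurd rfl hwa
            exact ⟨a, ⟨ha, hav'⟩, w, ⟨hwS, hwv⟩, hadj⟩
          · exact ⟨a, ⟨ha, hav⟩, b, ⟨hb, hbv⟩, hab⟩
      · intro i x hx
        exact hx.2
  · push_neg at hvS
    refine ⟨S, hne, hr, hdisj, hedges, ?_⟩
    intro i x hx hxv
    exact hvS i (hxv ▸ hx)

end NoK4
section NoK4Main

lemma noK4_ordTT : ∀ n (T : SimpleGraph (Fin n)), OrdTT n T → ¬ HasK4Minor T := by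
  intro n
  induction n using Nat.strong_induction_on with
  | _ n ih =>
  intro T hT hK4
  obtain ⟨hn, hbase, hstep⟩ := hT
  by_cases h3 : n ≤ 3
  · obtain ⟨S, hne, -, hdisj, -⟩ := hK4
    choose a ha using hne
    have hinj : Function.Injective a := by
      intro i k hik
      by_contra hne'
      exact (hdisj hne').ne_of_mem (ha i) (ha k) hik
    have hcard := Fintype.card_le_of_injective a hinj
    simp only [Fintype.card_fin] at hcard
    omega
  · push_neg at h3
    obtain ⟨m, rfl⟩ : ∃ m, n = m + 1 := ⟨n - 1, by omega⟩
    have hm3 : 3 ≤ m := by omega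
    set v : Fin (m+1) := Fin.last m with hvdef
    have hv2 : 2 ≤ ((v : Fin (m+1)) : ℕ) := by
      simp only [hvdef, Fin.val_last]; omega
    obtain ⟨j, l, hjv, hlv, hjlne, hjl, hcov⟩ := hstep v hv2
    have hcast : ∀ (a : Fin (m+1)), a ≠ v → ∃ a' : Fin m, Fin.castSucc a' = a := by
      intro a ha
      have hne' : (a : ℕ) ≠ m := by
        intro h
        exact ha (Fin.ext (by simp [hvdef, Fin.val_last, h]))
      have : (a : ℕ) < m := by have := a.isLt; omega
      exact ⟨⟨a.val, this⟩, Fin.ext (by simp)⟩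
    have hnb : ∀ x, T.Adj v x → x = j ∨ x = l := by
      intro x hx
      have hxv : x ≠ v := hx.ne'
      have hxlt : x < v := by
        rw [Fin.lt_def]
        have hne' : (x : ℕ) ≠ m := by
          intro h
          exact hxv (Fin.ext (by simp [hvdef, Fin.val_last, h]))
        have := x.isLt
        simp only [hvdef, Fin.val_last]
        omega
      exact (hcov x hxlt).mp hx.symm
    obtain ⟨S, hne, hreach, hdisj, hedges, havoid⟩ := hasK4_avoid hnb hjl hK4
    set T' := T.comap (Fin.castSucc) with hT'
    have hadj' : ∀ (a b : Fin m), T'.Adj a b ↔ T.Adj (Fin.castSucc a) (Fin.castSucc b) :=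
      fun a b => Iff.rfl
    have hOrd' : OrdTT m T' := by
      refine ⟨by omega, ?_, ?_⟩
      · have e0 : Fin.castSucc (⟨0, by omega⟩ : Fin m) = (⟨0, by omega⟩ : Fin (m+1)) :=
          Fin.ext (by simp)
        have e1 : Fin.castSucc (⟨1, by omega⟩ : Fin m) = (⟨1, by omega⟩ : Fin (m+1)) :=
          Fin.ext (by simp)
        rw [hadj', e0, e1]
        exact hbase
      · intro i hi2
        have hi2' : 2 ≤ ((Fin.castSucc i : Fin (m+1)) : ℕ) := by simpa using hi2
        obtain ⟨j₁, l₁, hj₁, hl₁, hjl₁, hadj₁, hcov₁⟩ := hstep (Fin.castSucc i) hi2'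
        have hj₁v : j₁ ≠ v := by
          intro h
          rw [h] at hj₁
          exact absurd (lt_trans hj₁ (Fin.castSucc_lt_last i)) (lt_irrefl _)
        have hl₁v : l₁ ≠ v := by
          intro h
          rw [h] at hl₁
          exact absurd (lt_trans hl₁ (Fin.castSucc_lt_last i)) (lt_irrefl _)
        obtain ⟨j', hj'⟩ := hcast j₁ hj₁v
        obtain ⟨l', hl'⟩ := hcast l₁ hl₁v
        refine ⟨j', l', ?_, ?_, ?_, ?_, ?_⟩
        · rw [← Fin.castSucc_lt_castSucc_iff, hj']; exact hj₁
        · rw [← Fin.castSucc_lt_castSucc_iff, hl']; exact hl₁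
        · intro h; rw [← hj', ← hl', h] at hjl₁; exact hjl₁ rfl
        · rw [hadj', hj', hl']; exact hadj₁
        · intro m' hm'
          have hlt : Fin.castSucc m' < Fin.castSucc i := by
            rw [Fin.castSucc_lt_castSucc_iff]; exact hm'
          have := hcov₁ (Fin.castSucc m') hlt
          rw [← hj', ← hl', Fin.castSucc_inj, Fin.castSucc_inj] at this
          exact this
    apply ih m (by omega) T' hOrd'
    set S' : Fin 4 → Set (Fin m) := fun i => {x | Fin.castSucc x ∈ S i} with hS'
    have htrans : ∀ i x y, ReachIn T (S i) x y → ∀ (x' y' : Fin m),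
        Fin.castSucc x' = x → Fin.castSucc y' = y → ReachIn T' (S' i) x' y' := by
      intro i x y h
      induction h with
      | @refl x hx =>
        intro x' y' hx' hy'
        have : x' = y' := Fin.castSucc_injective m (hx'.trans hy'.symm)
        subst this
        exact .refl (show Fin.castSucc x' ∈ S i from hx' ▸ hx)
      | @cons x y z hx hxy h ihh =>
        intro x' z' hx' hz'
        obtain ⟨y', hy'⟩ := hcast y (havoid i y h.mem_left)
        refine .cons (show Fin.castSucc x' ∈ S i from hx' ▸ hx) ?_ (ihh y' z' hy' hz')
        rw [hadj', hx', hy']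
        exact hxy
    refine ⟨S', ?_, ?_, ?_, ?_⟩
    · intro i
      obtain ⟨x, hx⟩ := hne i
      obtain ⟨x', hx'⟩ := hcast x (havoid i x hx)
      exact ⟨x', show Fin.castSucc x' ∈ S i from hx' ▸ hx⟩
    · intro i
      rw [connIn_iff]
      obtain ⟨x, hx⟩ := hne i
      obtain ⟨x', hx'⟩ := hcast x (havoid i x hx)
      refine ⟨⟨x', show Fin.castSucc x' ∈ S i from hx' ▸ hx⟩, ?_⟩
      intro a ha b hb
      exact htrans i _ _ (hreach i _ ha _ hb) a b rfl rfl
    · intro i k hik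
      rw [Set.disjoint_left]
      intro x hx hx'
      exact (hdisj hik).ne_of_mem hx hx' rfl
    · intro i k hik
      obtain ⟨a, ha, b, hb, hab⟩ := hedges hik
      obtain ⟨a', ha'⟩ := hcast a (havoid i a ha)
      obtain ⟨b', hb'⟩ := hcast b (havoid k b hb)
      refine ⟨a', show Fin.castSucc a' ∈ S i from ha' ▸ ha,
              b', show Fin.castSucc b' ∈ S k from hb' ▸ hb, ?_⟩
      rw [hadj', ha', hb']
      exact hab

/-- 2-trees have no `K₄` minor. -/
lemma noK4_of_isTwoTree {V : Type*} {G : SimpleGraph V} (h : IsTwoTree G) :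
    ¬ HasK4Minor G := by
  obtain ⟨n, hn, e, hbase, hstep⟩ := h
  intro hK4
  have hOrd : OrdTT n (G.comap e) := ⟨hn, hbase, hstep⟩
  apply noK4_ordTT n (G.comap e) hOrd
  refine hK4.mono e.symm e.symm.injective ?_
  intro a b hab
  show G.Adj (e (e.symm a)) (e (e.symm b))
  simpa using hab

end NoK4Main
section TwoTreeConstr

lemma fin_castSucc_of_lt {m : ℕ} {a : Fin (m+1)} (h : (a : ℕ) < m) :
    ∃ a' : Fin m, Fin.castSucc a' = a :=
  ⟨⟨a.val, h⟩, Fin.ext (by simp)⟩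

/-- Adding an apex over the edge `xy` of `T`. -/
def apexGraph {m : ℕ} (T : SimpleGraph (Fin m)) (x y : Fin m) : SimpleGraph (Fin (m+1)) where
  Adj p q :=
    (∃ p' q' : Fin m, p = Fin.castSucc p' ∧ q = Fin.castSucc q' ∧ T.Adj p' q') ∨
    (p = Fin.last m ∧ (q = Fin.castSucc x ∨ q = Fin.castSucc y)) ∨
    (q = Fin.last m ∧ (p = Fin.castSucc x ∨ p = Fin.castSucc y))
  symm := by
    constructor
    rintro p q (⟨p', q', rfl, rfl, h⟩ | ⟨rfl, h⟩ | ⟨rfl, h⟩)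
    · exact Or.inl ⟨q', p', rfl, rfl, h.symm⟩
    · exact Or.inr (Or.inr ⟨rfl, h⟩)
    · exact Or.inr (Or.inl ⟨rfl, h⟩)
  loopless := by
    constructor
    rintro p (⟨p', q', h1, h2, h⟩ | ⟨rfl, h | h⟩ | ⟨rfl, h | h⟩)
    · exact T.loopless.irrefl _ ((Fin.castSucc_injective m (h1.symm.trans h2)) ▸ h)
    · exact (Fin.castSucc_lt_last x).ne' h
    · exact (Fin.castSucc_lt_last y).ne' h
    · exact (Fin.castSucc_lt_last x).ne' h
    · exact (Fin.castSucc_lt_last y).ne' h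

lemma apexGraph_adj_castSucc {m : ℕ} {T : SimpleGraph (Fin m)} {x y a b : Fin m} :
    (apexGraph T x y).Adj (Fin.castSucc a) (Fin.castSucc b) ↔ T.Adj a b := by
  constructor
  · rintro (⟨p', q', h1, h2, h⟩ | ⟨h, -⟩ | ⟨h, -⟩)
    · rwa [Fin.castSucc_injective m h1, Fin.castSucc_injective m h2]
    · exact absurd h (Fin.castSucc_lt_last a).ne
    · exact absurd h (Fin.castSucc_lt_last b).ne
  · intro h
    exact Or.inl ⟨a, b, rfl, rfl, h⟩

lemma apexGraph_adj_last {m : ℕ} {T : SimpleGraph (Fin m)} {x y : Fin m} {p : Fin (m+1)} :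
    (apexGraph T x y).Adj p (Fin.last m) ↔ (p = Fin.castSucc x ∨ p = Fin.castSucc y) := by
  constructor
  · rintro (⟨p', q', h1, h2, h⟩ | ⟨-, h | h⟩ | ⟨-, h⟩)
    · exact absurd h2.symm (Fin.castSucc_lt_last q').ne
    · exact absurd h.symm (Fin.castSucc_lt_last x).ne
    · exact absurd h.symm (Fin.castSucc_lt_last y).ne
    · exact h
  · intro h
    exact Or.inr (Or.inr ⟨rfl, h⟩)

lemma isTwoTree_apexGraph {m : ℕ} {T : SimpleGraph (Fin m)} {x y : Fin m}
    (hT : IsTwoTree T) (hxy : T.Adj x y) : IsTwoTree (apexGraph T x y) := by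
  obtain ⟨n, hn, e, hbase, hstep⟩ := hT
  refine ⟨n + 1, by omega, ?_⟩
  refine ⟨⟨Fin.lastCases (Fin.last m) (fun i => Fin.castSucc (e i)),
          Fin.lastCases (Fin.last n) (fun j => Fin.castSucc (e.symm j)), ?_, ?_⟩, ?_, ?_⟩
  · intro i
    induction i using Fin.lastCases with
    | last => simp
    | cast i => simp
  · intro j
    induction j using Fin.lastCases with
    | last => simp
    | cast j => simp
  · have c0 : (⟨0, by omega⟩ : Fin (n+1)) = Fin.castSucc (⟨0, by omega⟩ : Fin n) :=
      Fin.ext (by simp)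
    have c1 : (⟨1, by omega⟩ : Fin (n+1)) = Fin.castSucc (⟨1, by omega⟩ : Fin n) :=
      Fin.ext (by simp)
    show (apexGraph T x y).Adj _ _
    rw [c0, c1]
    simp only [Equiv.coe_fn_mk, Fin.lastCases_castSucc]
    exact apexGraph_adj_castSucc.mpr hbase
  · intro i hi2
    induction i using Fin.lastCases with
    | last =>
      refine ⟨Fin.castSucc (e.symm x), Fin.castSucc (e.symm y),
        Fin.castSucc_lt_last _, Fin.castSucc_lt_last _, ?_, ?_, ?_⟩
      · intro h
        exact hxy.ne (e.symm.injective (Fin.castSucc_injective n h))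
      · simp only [Equiv.coe_fn_mk, Fin.lastCases_castSucc]
        rw [Equiv.apply_symm_apply, Equiv.apply_symm_apply]
        exact apexGraph_adj_castSucc.mpr hxy
      · intro m' hm'
        have hm'l : (m' : ℕ) < n := by
          have := hm'
          rw [Fin.lt_def] at this
          simpa using this
        obtain ⟨m'', rfl⟩ := fin_castSucc_of_lt hm'l
        simp only [Equiv.coe_fn_mk, Fin.lastCases_castSucc, Fin.lastCases_last]
        rw [apexGraph_adj_last]
        simp only [Fin.castSucc_inj]
        constructor
        · rintro (h | h)
          · exact Or.inl (by rw [← h, Equiv.symm_apply_apply])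
          · exact Or.inr (by rw [← h, Equiv.symm_apply_apply])
        · rintro (h | h)
          · exact Or.inl (by rw [h, Equiv.apply_symm_apply])
          · exact Or.inr (by rw [h, Equiv.apply_symm_apply])
    | cast i' =>
      have hi2' : 2 ≤ (i' : ℕ) := by simpa using hi2
      obtain ⟨j, l, hj, hl, hne, hadj, hcov⟩ := hstep i' hi2'
      refine ⟨Fin.castSucc j, Fin.castSucc l, ?_, ?_, ?_, ?_, ?_⟩
      · rwa [Fin.castSucc_lt_castSucc_iff]
      · rwa [Fin.castSucc_lt_castSucc_iff]
      · intro h; exact hne (Fin.castSucc_injective n h)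
      · simp only [Equiv.coe_fn_mk, Fin.lastCases_castSucc]
        exact apexGraph_adj_castSucc.mpr hadj
      · intro m' hm'
        have hm'l : (m' : ℕ) < n := by
          rw [Fin.lt_def] at hm'
          have := i'.isLt
          simp only [Fin.coe_castSucc] at hm'
          omega
        obtain ⟨m'', rfl⟩ := fin_castSucc_of_lt hm'l
        simp only [Equiv.coe_fn_mk, Fin.lastCases_castSucc]
        rw [apexGraph_adj_castSucc]
        simp only [Fin.castSucc_inj]
        exact hcov m'' (by rwa [← Fin.castSucc_lt_castSucc_iff])

lemma isTwoTree_top3 : IsTwoTree (⊤ : SimpleGraph (Fin 3)) := by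
  refine ⟨3, by omega, Equiv.refl _, ?_, ?_⟩ <;> decide

lemma twoTree_exists_adj {m : ℕ} {T : SimpleGraph (Fin m)} (hT : IsTwoTree T) (p : Fin m) :
    ∃ q, T.Adj p q := by
  obtain ⟨n, hn, e, hbase, hstep⟩ := hT
  set i := e.symm p with hi
  have hp : e i = p := e.apply_symm_apply p
  by_cases h2 : 2 ≤ (i : ℕ)
  · obtain ⟨j, l, hj, hl, hne, hadj, hcov⟩ := hstep i h2
    have := (hcov j hj).mpr (Or.inl rfl)
    exact ⟨e j, hp ▸ this.symm⟩
  · push_neg at h2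
    by_cases h0 : (i : ℕ) = 0
    · have : i = ⟨0, by omega⟩ := Fin.ext h0
      exact ⟨e ⟨1, by omega⟩, hp ▸ (this ▸ hbase : T.Adj (e i) _)⟩
    · have : i = ⟨1, by omega⟩ := Fin.ext (show (i : ℕ) = 1 by omega)
      exact ⟨e ⟨0, by omega⟩, hp ▸ (this ▸ hbase.symm : T.Adj (e i) _)⟩

lemma twoTree_exists_edge {m : ℕ} {T : SimpleGraph (Fin m)} (hT : IsTwoTree T) :
    ∃ p q, T.Adj p q := by
  obtain ⟨n, hn, e, hbase, -⟩ := hT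
  exact ⟨_, _, hbase⟩

/-- Every graph on at most 3 vertices embeds in a 2-tree. -/
lemma embed_small {V : Type*} [Fintype V] (G : SimpleGraph V) (h : Fintype.card V ≤ 3) :
    ∃ (m : ℕ) (T : SimpleGraph (Fin m)) (f : V → Fin m),
      IsTwoTree T ∧ Function.Injective f ∧ ∀ a b, G.Adj a b → T.Adj (f a) (f b) := by
  have : Nonempty (V ↪ Fin 3) := by
    rw [Function.Embedding.nonempty_iff_card_le]
    simpa using h
  obtain ⟨f⟩ := this
  exact ⟨3, ⊤, f, isTwoTree_top3, f.injective, fun a b hab => by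
    simp only [SimpleGraph.top_adj]
    exact fun hh => hab.ne (f.injective hh)⟩

end TwoTreeConstr
section Degree
variable {V : Type*}

/-- `v` has at most 2 neighbours in `G`. -/
def SmallAt (G : SimpleGraph V) (v : V) : Prop :=
  ∃ s : Finset V, s.card ≤ 2 ∧ ∀ u, G.Adj v u → u ∈ s

lemma subtype_ne {P : V → Prop} {a b : V} (ha : P a) (hb : P b) (h : a ≠ b) :
    (⟨a, ha⟩ : {x // P x}) ≠ ⟨b, hb⟩ := fun hh => h (congrArg Subtype.val hh)

/-- In a partial 2-tree there is a vertex with at most two neighbours. -/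
lemma smallAt_of_embed [Fintype V] [Nonempty V] (G : SimpleGraph V)
    (h : ∃ (m : ℕ) (T : SimpleGraph (Fin m)) (f : V → Fin m),
        IsTwoTree T ∧ Function.Injective f ∧ ∀ a b, G.Adj a b → T.Adj (f a) (f b)) :
    ∃ v, SmallAt G v := by
  classical
  obtain ⟨m, T, f, hT, hinj, hhom⟩ := h
  obtain ⟨n, hn, e, hbase, hstep⟩ := hT
  set pos : V → Fin n := fun x => e.symm (f x) with hpos
  obtain ⟨v, -, hvmax⟩ :=
    Finset.exists_max_image Finset.univ (fun x => (pos x : ℕ)) ⟨Classical.arbitrary V, by simp⟩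
  have hlt : ∀ u, G.Adj v u → pos u < pos v := by
    intro u hu
    have h1 : (pos u : ℕ) ≤ (pos v : ℕ) := hvmax u (by simp)
    have h2 : pos u ≠ pos v := by
      intro hh
      exact hu.ne' (hinj (by
        have := congrArg e hh
        simpa [hpos] using this))
    rw [Fin.lt_def]
    exact lt_of_le_of_ne h1 (fun hh => h2 (Fin.ext hh))
  have hfe : ∀ u, f u = e (pos u) := by
    intro u; simp [hpos]
  refine ⟨v, ?_⟩
  by_cases h2 : 2 ≤ (pos v : ℕ)
  · obtain ⟨j, l, hj, hl, hne, hadj, hcov⟩ := hstep (pos v) h2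
    refine ⟨Finset.univ.filter (fun u => f u = e j ∨ f u = e l), ?_, ?_⟩
    · refine le_trans (Finset.card_le_card_of_injOn (t := {e j, e l}) f ?_ hinj.injOn) ?_
      · intro u hu
        simp only [Finset.mem_coe, Finset.mem_filter] at hu
        rcases hu.2 with h | h <;> simp [h]
      · exact le_trans (Finset.card_insert_le _ _) (by simp)
    · intro u hu
      have hadj' : T.Adj (e (pos u)) (e (pos v)) := by
        rw [← hfe, ← hfe]
        exact (hhom v u hu).symm
      have := (hcov (pos u) (hlt u hu)).mp hadj'
      simp only [Finset.mem_filter, Finset.mem_univ, true_and]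
      rcases this with h | h
      · exact Or.inl (by rw [hfe, h])
      · exact Or.inr (by rw [hfe, h])
  · push_neg at h2
    refine ⟨Finset.univ.filter (fun u => f u = e ⟨0, by omega⟩), ?_, ?_⟩
    · refine le_trans (Finset.card_le_card_of_injOn (t := {e ⟨0, by omega⟩}) f ?_ hinj.injOn) ?_
      · intro u hu
        simp only [Finset.mem_coe, Finset.mem_filter] at hu
        simp [hu.2]
      · simp
    · intro u hu
      have hltu := hlt u hu
      rw [Fin.lt_def] at hltu
      have h0 : (pos u : ℕ) = 0 := by omega
      simp only [Finset.mem_filter, Finset.mem_univ, true_and]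
      rw [hfe, show pos u = ⟨0, by omega⟩ from Fin.ext h0]

lemma not_smallAt_three [Fintype V] {G : SimpleGraph V} {v : V} (h : ¬ SmallAt G v) :
    ∃ a b c, a ≠ b ∧ a ≠ c ∧ b ≠ c ∧ G.Adj v a ∧ G.Adj v b ∧ G.Adj v c := by
  classical
  set N := Finset.univ.filter (fun u => G.Adj v u) with hN
  have hmem : ∀ u, G.Adj v u → u ∈ N := by
    intro u hu; simp [hN, hu]
  have hcard : 3 ≤ N.card := by
    by_contra hc
    push_neg at hc
    exact h ⟨N, by omega, hmem⟩
  obtain ⟨t, htN, htcard⟩ := Finset.exists_subset_card_eq hcard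
  obtain ⟨a, b, c, hab, hac, hbc, rfl⟩ := Finset.card_eq_three.mp htcard
  have hmem' : ∀ u ∈ ({a, b, c} : Finset V), G.Adj v u := by
    intro u hu
    have := htN hu
    simp [hN] at this
    exact this
  exact ⟨a, b, c, hab, hac, hbc, hmem' a (by simp), hmem' b (by simp), hmem' c (by simp)⟩

lemma smallAt_contra {G : SimpleGraph V} {x a b c : V} (h : SmallAt G x)
    (hab : a ≠ b) (hac : a ≠ c) (hbc : b ≠ c)
    (ha : G.Adj x a) (hb : G.Adj x b) (hc : G.Adj x c) : False := by
  classical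
  obtain ⟨s, hcard, hcov⟩ := h
  have hsub : ({a, b, c} : Finset V) ⊆ s := by
    intro u hu
    simp only [Finset.mem_insert, Finset.mem_singleton] at hu
    rcases hu with rfl | rfl | rfl
    · exact hcov _ ha
    · exact hcov _ hb
    · exact hcov _ hc
  have h3 : ({a, b, c} : Finset V).card = 3 := by
    rw [Finset.card_insert_of_notMem (by simp [hab, hac]),
        Finset.card_insert_of_notMem (by simp [hbc]), Finset.card_singleton]
  have := Finset.card_le_card hsub
  omega

/-- A 4-clique yields a `K₄` minor. -/
lemma hasK4_of_clique {G : SimpleGraph V} {a b c d : V}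
    (hab : G.Adj a b) (hac : G.Adj a c) (had : G.Adj a d)
    (hbc : G.Adj b c) (hbd : G.Adj b d) (hcd : G.Adj c d) : HasK4Minor G := by
  refine ⟨fun i => {![a, b, c, d] i}, fun i => ⟨_, rfl⟩, ?_, ?_, ?_⟩
  · intro i
    rw [connIn_iff]
    refine ⟨⟨_, rfl⟩, ?_⟩
    rintro x rfl y rfl
    exact .refl rfl
  · intro i j hij
    rw [Set.disjoint_singleton]
    fin_cases i <;> fin_cases j <;>
      first
        | exact absurd rfl hij
        | exact hab.ne | exact hac.ne | exact had.ne | exact hbc.ne | exact hbd.ne | exact hcd.ne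
        | exact hab.ne' | exact hac.ne' | exact had.ne' | exact hbc.ne' | exact hbd.ne' | exact hcd.ne'
  · intro i j hij
    refine ⟨![a,b,c,d] i, rfl, ![a,b,c,d] j, rfl, ?_⟩
    fin_cases i <;> fin_cases j <;>
      first
        | exact absurd rfl hij
        | exact hab | exact hac | exact had | exact hbc | exact hbd | exact hcd
        | exact hab.symm | exact hac.symm | exact had.symm | exact hbc.symm | exact hbd.symm | exact hcd.symm

end Degree

section Contractions
variable {V : Type*}

/-- Delete `v` and contract it into `w` (i.e. `w` inherits `v`'s neighbours). -/
def delContract (G : SimpleGraph V) (v : V) (w : {x : V // x ≠ v}) :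
    SimpleGraph {x : V // x ≠ v} where
  Adj x y := x ≠ y ∧ (G.Adj ↑x ↑y ∨ (x = w ∧ G.Adj v ↑y) ∨ (y = w ∧ G.Adj v ↑x))
  symm := by
    constructor
    rintro x y ⟨hne, h | ⟨h1, h2⟩ | ⟨h1, h2⟩⟩
    · exact ⟨hne.symm, Or.inl h.symm⟩
    · exact ⟨hne.symm, Or.inr (Or.inr ⟨h1, h2⟩)⟩
    · exact ⟨hne.symm, Or.inr (Or.inl ⟨h1, h2⟩)⟩
  loopless := ⟨fun x ⟨hne, _⟩ => hne rfl⟩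

lemma val_not_mem_range {P : V → Prop} {v : V} (hv : ¬ P v) :
    v ∉ Set.range (Subtype.val : {x // P x} → V) := by
  rintro ⟨⟨x, hx⟩, rfl⟩
  exact hv hx

lemma delContract_noK4 {G : SimpleGraph V} {v : V} {w : {x : V // x ≠ v}}
    (hvw : G.Adj v ↑w) (hG : ¬ HasK4Minor G) : ¬ HasK4Minor (delContract G v w) := by
  intro h
  refine hG (h.lift Subtype.val Subtype.val_injective v
    (val_not_mem_range (by simp)) w hvw ?_)
  rintro x y ⟨hne, h | ⟨h1, h2⟩ | ⟨h1, h2⟩⟩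
  · exact Or.inl h
  · exact Or.inr (Or.inl ⟨h1, h2⟩)
  · exact Or.inr (Or.inr ⟨h1, h2⟩)

/-- Delete `v` and `a`, and add the edge `bc`. -/
def delTwoAdd (G : SimpleGraph V) (v a : V) (b c : {x : V // x ≠ v ∧ x ≠ a}) :
    SimpleGraph {x : V // x ≠ v ∧ x ≠ a} where
  Adj x y := x ≠ y ∧ (G.Adj ↑x ↑y ∨ (x = b ∧ y = c) ∨ (x = c ∧ y = b))
  symm := by
    constructor
    rintro x y ⟨hne, h | ⟨h1, h2⟩ | ⟨h1, h2⟩⟩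
    · exact ⟨hne.symm, Or.inl h.symm⟩
    · exact ⟨hne.symm, Or.inr (Or.inr ⟨h2, h1⟩)⟩
    · exact ⟨hne.symm, Or.inr (Or.inl ⟨h2, h1⟩)⟩
  loopless := ⟨fun x ⟨hne, _⟩ => hne rfl⟩

lemma delTwoAdd_noK4 {G : SimpleGraph V} {v a : V} {b c : {x : V // x ≠ v ∧ x ≠ a}}
    (hvb : G.Adj v ↑b) (hvc : G.Adj v ↑c) (hG : ¬ HasK4Minor G) :
    ¬ HasK4Minor (delTwoAdd G v a b c) := by
  intro h
  refine hG (h.lift Subtype.val Subtype.val_injective v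
    (val_not_mem_range (by simp)) b hvb ?_)
  rintro x y ⟨hne, h | ⟨h1, h2⟩ | ⟨h1, h2⟩⟩
  · exact Or.inl h
  · exact Or.inr (Or.inl ⟨h1, h2 ▸ hvc⟩)
  · exact Or.inr (Or.inr ⟨h2, h1 ▸ hvc⟩)

/-- Delete `v` and make its neighbourhood a clique. -/
def delClique (G : SimpleGraph V) (v : V) : SimpleGraph {x : V // x ≠ v} where
  Adj x y := x ≠ y ∧ (G.Adj ↑x ↑y ∨ (G.Adj v ↑x ∧ G.Adj v ↑y))
  symm := by
    constructor
    rintro x y ⟨hne, h | ⟨h1, h2⟩⟩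
    · exact ⟨hne.symm, Or.inl h.symm⟩
    · exact ⟨hne.symm, Or.inr ⟨h2, h1⟩⟩
  loopless := ⟨fun x ⟨hne, _⟩ => hne rfl⟩

lemma delClique_noK4 {G : SimpleGraph V} {v : V} {u w : {x : V // x ≠ v}}
    (hvu : G.Adj v ↑u)
    (hcov : ∀ z, G.Adj v z → z = ↑u ∨ z = ↑w)
    (hG : ¬ HasK4Minor G) : ¬ HasK4Minor (delClique G v) := by
  intro h
  refine hG (h.lift Subtype.val Subtype.val_injective v
    (val_not_mem_range (by simp)) u hvu ?_)
  rintro x y ⟨hne, h | ⟨h1, h2⟩⟩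
  · exact Or.inl h
  · rcases hcov _ h1 with hx | hx <;> rcases hcov _ h2 with hy | hy
    · exact absurd (Subtype.ext (hx.trans hy.symm)) hne
    · exact Or.inr (Or.inl ⟨Subtype.ext hx, h2⟩)
    · exact Or.inr (Or.inr ⟨Subtype.ext hy, h1⟩)
    · exact absurd (Subtype.ext (hx.trans hy.symm)) hne

end Contractions
section MinDegree

universe u
variable {V : Type u}

lemma two_ne {α : Type*} {z1 z2 z3 v : α} (h12 : z1 ≠ z2) (h13 : z1 ≠ z3) (h23 : z2 ≠ z3)
    {P : α → Prop} (h1 : P z1) (h2 : P z2) (h3 : P z3) :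
    ∃ s t, s ≠ t ∧ P s ∧ P t ∧ s ≠ v ∧ t ≠ v := by
  by_cases e1 : z1 = v
  · exact ⟨z2, z3, h23, h2, h3, fun h => h12 (e1.trans h.symm), fun h => h13 (e1.trans h.symm)⟩
  · by_cases e2 : z2 = v
    · exact ⟨z1, z3, h13, h1, h3, e1, fun h => h23 (e2.trans h.symm)⟩
    · exact ⟨z1, z2, h12, h1, h2, e1, e2⟩

lemma three_avoid {α : Type*} {z1 z2 z3 v a : α} (h12 : z1 ≠ z2) (h13 : z1 ≠ z3) (h23 : z2 ≠ z3)
    {P : α → Prop} (h1 : P z1) (h2 : P z2) (h3 : P z3) :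
    ∃ z, P z ∧ z ≠ v ∧ z ≠ a := by
  by_cases e1 : z1 = v
  · by_cases e2 : z2 = a
    · exact ⟨z3, h3, fun h => h13 (e1.trans h.symm), fun h => h23 (e2.trans h.symm)⟩
    · exact ⟨z2, h2, fun h => h12 (e1.trans h.symm), e2⟩
  · by_cases e1a : z1 = a
    · by_cases e2 : z2 = v
      · exact ⟨z3, h3, fun h => h23 (e2.trans h.symm), fun h => h13 (e1a.trans h.symm)⟩
      · exact ⟨z2, h2, e2, fun h => h12 (e1a.trans h.symm)⟩
    · exact ⟨z1, h1, e1, e1a⟩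

lemma delContract_adj {G : SimpleGraph V} {v : V} {w a b : {x : V // x ≠ v}} :
    (delContract G v w).Adj a b ↔
      a ≠ b ∧ (G.Adj ↑a ↑b ∨ (a = w ∧ G.Adj v ↑b) ∨ (b = w ∧ G.Adj v ↑a)) := Iff.rfl

lemma delTwoAdd_adj {G : SimpleGraph V} {v a : V} {b c x y : {z : V // z ≠ v ∧ z ≠ a}} :
    (delTwoAdd G v a b c).Adj x y ↔
      x ≠ y ∧ (G.Adj ↑x ↑y ∨ (x = b ∧ y = c) ∨ (x = c ∧ y = b)) := Iff.rfl

/-- A degree-3 vertex `v` with neighbourhood `{w,p,q}` where `w` is isolated inside the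
neighbourhood leads to a contradiction (contract `v` into `w`). -/
lemma claimA [Fintype V] {G : SimpleGraph V}
    (hG : ¬ HasK4Minor G)
    (hsmall : ∀ (W : Type u) [Fintype W] (H : SimpleGraph W),
      Fintype.card W < Fintype.card V → ¬HasK4Minor H → Nonempty W → ∃ w, SmallAt H w)
    (hbig : ∀ x : V, ¬ SmallAt G x)
    (v w p q : V)
    (hwp : w ≠ p) (hwq : w ≠ q) (hpq : p ≠ q)
    (hvw : G.Adj v w) (hvp : G.Adj v p) (hvq : G.Adj v q)
    (hcov : ∀ u, G.Adj v u → u = w ∨ u = p ∨ u = q)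
    (hnwp : ¬ G.Adj w p) (hnwq : ¬ G.Adj w q) : False := by
  classical
  have hwv : w ≠ v := hvw.ne'
  have hpv : p ≠ v := hvp.ne'
  have hqv : q ≠ v := hvq.ne'
  set w' : {x : V // x ≠ v} := ⟨w, hwv⟩ with hw'
  set K := delContract G v w' with hK
  have hK4 : ¬ HasK4Minor K := delContract_noK4 hvw hG
  have hcardlt : Fintype.card {x : V // x ≠ v} < Fintype.card V :=
    Fintype.card_lt_of_injective_of_notMem Subtype.val Subtype.val_injective
      (b := v) (val_not_mem_range (by simp))
  obtain ⟨x, hxsm⟩ := hsmall _ K hcardlt hK4 ⟨w'⟩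
  by_cases hxw : x = w'
  · -- x = w' : neighbours p, q and a genuine neighbour of w
    obtain ⟨z1, z2, z3, h12, h13, h23, hz1, hz2, hz3⟩ := not_smallAt_three (hbig w)
    obtain ⟨z, -, -, hwz, -, hzv, -⟩ :=
      two_ne (v := v) h12 h13 h23 hz1 hz2 hz3
    have hzw : z ≠ w := fun h => (G.loopless.irrefl w) (h ▸ hwz)
    have hzp : z ≠ p := fun h => hnwp (h ▸ hwz)
    have hzq : z ≠ q := fun h => hnwq (h ▸ hwz)
    refine smallAt_contra (hxw ▸ hxsm)
      (a := (⟨p, hpv⟩ : {x // x ≠ v})) (b := ⟨q, hqv⟩) (c := ⟨z, hzv⟩)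
      (subtype_ne _ _ hpq) (subtype_ne _ _ hzp.symm) (subtype_ne _ _ hzq.symm) ?_ ?_ ?_
    · exact ⟨subtype_ne _ _ hwp, Or.inr (Or.inl ⟨rfl, hvp⟩)⟩
    · exact ⟨subtype_ne _ _ hwq, Or.inr (Or.inl ⟨rfl, hvq⟩)⟩
    · exact ⟨subtype_ne _ _ hzw.symm, Or.inl hwz⟩
  · by_cases hvx : G.Adj v ↑x
    · -- ↑x ∈ {p, q}
      have hnxw : ¬ G.Adj ↑x w := by
        rcases hcov ↑x hvx with h | h | h
        · exact absurd (Subtype.ext h) hxw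
        · rw [h]; exact fun hh => hnwp hh.symm
        · rw [h]; exact fun hh => hnwq hh.symm
      obtain ⟨z1, z2, z3, h12, h13, h23, hz1, hz2, hz3⟩ := not_smallAt_three (hbig ↑x)
      obtain ⟨s, t, hst, hxs, hxt, hsv, htv⟩ := two_ne (v := v) h12 h13 h23 hz1 hz2 hz3
      have hsw : s ≠ w := fun h => hnxw (h ▸ hxs)
      have htw : t ≠ w := fun h => hnxw (h ▸ hxt)
      refine smallAt_contra hxsm
        (a := (⟨s, hsv⟩ : {x // x ≠ v})) (b := ⟨t, htv⟩) (c := w')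
        (subtype_ne _ _ hst) (subtype_ne _ _ hsw) (subtype_ne _ _ htw) ?_ ?_ ?_
      · exact ⟨fun h => hxs.ne (congrArg Subtype.val h), Or.inl hxs⟩
      · exact ⟨fun h => hxt.ne (congrArg Subtype.val h), Or.inl hxt⟩
      · exact ⟨hxw, Or.inr (Or.inr ⟨rfl, hvx⟩)⟩
    · -- no neighbour of x is v
      obtain ⟨z1, z2, z3, h12, h13, h23, hz1, hz2, hz3⟩ := not_smallAt_three (hbig ↑x)
      have hnv : ∀ z, G.Adj ↑x z → z ≠ v := fun z hz h => hvx ((h ▸ hz).symm)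
      refine smallAt_contra hxsm
        (a := (⟨z1, hnv z1 hz1⟩ : {x // x ≠ v})) (b := ⟨z2, hnv z2 hz2⟩) (c := ⟨z3, hnv z3 hz3⟩)
        (subtype_ne _ _ h12) (subtype_ne _ _ h13) (subtype_ne _ _ h23) ?_ ?_ ?_
      · exact ⟨fun h => hz1.ne (congrArg Subtype.val h), Or.inl hz1⟩
      · exact ⟨fun h => hz2.ne (congrArg Subtype.val h), Or.inl hz2⟩
      · exact ⟨fun h => hz3.ne (congrArg Subtype.val h), Or.inl hz3⟩

end MinDegree
section MinDegree2

universe u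
variable {V : Type u}

/-- The "diamond" configuration: `N(v) = {a,b,c}`, `ab, ac ∈ E`, `bc ∉ E`,
`N(a) ⊆ {v,b,c}`, and `b` has a unique neighbour outside `{v,a}`. -/
lemma claimGamma [Fintype V] {G : SimpleGraph V}
    (hG : ¬ HasK4Minor G)
    (hsmall : ∀ (W : Type u) [Fintype W] (H : SimpleGraph W),
      Fintype.card W < Fintype.card V → ¬HasK4Minor H → Nonempty W → ∃ w, SmallAt H w)
    (hbig : ∀ x : V, ¬ SmallAt G x)
    (v a b c : V)
    (hva : G.Adj v a) (hvb : G.Adj v b) (hvc : G.Adj v c)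
    (hcov : ∀ u, G.Adj v u → u = a ∨ u = b ∨ u = c)
    (hab : G.Adj a b) (hac : G.Adj a c) (hbc : ¬ G.Adj b c)
    (hacov : ∀ z, G.Adj a z → z = v ∨ z = b ∨ z = c)
    (hbone : ∀ z z', G.Adj b z → G.Adj b z' → z ≠ v → z ≠ a → z' ≠ v → z' ≠ a → z = z') :
    False := by
  classical
  -- find the third neighbour z of b
  obtain ⟨z1, z2, z3, h12, h13, h23, hz1, hz2, hz3⟩ := not_smallAt_three (hbig b)
  obtain ⟨z, hbz, hzv, hza⟩ := three_avoid (v := v) (a := a) h12 h13 h23 hz1 hz2 hz3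
  have hcovb : ∀ u, G.Adj b u → u = v ∨ u = a ∨ u = z := by
    intro u hu
    by_cases h1 : u = v
    · exact Or.inl h1
    by_cases h2 : u = a
    · exact Or.inr (Or.inl h2)
    exact Or.inr (Or.inr (hbone u z hu hbz h1 h2 hzv hza))
  have hzb : z ≠ b := hbz.ne'
  have hzc : z ≠ c := fun h => hbc (h ▸ hbz)
  have hnvz : ¬ G.Adj v z := by
    intro h
    rcases hcov z h with h' | h' | h'
    · exact hza h'
    · exact hzb h'
    · exact hzc h'
  have hnaz : ¬ G.Adj a z := by
    intro h
    rcases hacov z h with h' | h' | h'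
    · exact hzv h'
    · exact hzb h'
    · exact hzc h'
  exact claimA hG hsmall hbig b z v a hzv hza hva.ne hbz hvb.symm hab.symm
    (fun u hu => by
      rcases hcovb u hu with h | h | h
      · exact Or.inr (Or.inl h)
      · exact Or.inr (Or.inr h)
      · exact Or.inl h)
    (fun h => hnvz h.symm) (fun h => hnaz h.symm)

/-- Two edges in the neighbourhood of a degree-3 vertex lead to a contradiction. -/
lemma claimB [Fintype V] {G : SimpleGraph V}
    (hG : ¬ HasK4Minor G)
    (hsmall : ∀ (W : Type u) [Fintype W] (H : SimpleGraph W),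
      Fintype.card W < Fintype.card V → ¬HasK4Minor H → Nonempty W → ∃ w, SmallAt H w)
    (hbig : ∀ x : V, ¬ SmallAt G x)
    (v a b c : V)
    (habn : a ≠ b) (hacn : a ≠ c) (hbcn : b ≠ c)
    (hva : G.Adj v a) (hvb : G.Adj v b) (hvc : G.Adj v c)
    (hcov : ∀ u, G.Adj v u → u = a ∨ u = b ∨ u = c)
    (hab : G.Adj a b) (hac : G.Adj a c) (hbc : ¬ G.Adj b c) : False := by
  classical
  have hav : a ≠ v := hva.ne'
  have hbv : b ≠ v := hvb.ne'
  have hcv : c ≠ v := hvc.ne'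
  by_cases hx : ∃ z, G.Adj a z ∧ z ≠ v ∧ z ≠ b ∧ z ≠ c
  · -- case α : `a` has an extra neighbour; contract `v` into `b`
    obtain ⟨z, haz, hzv, hzb, hzc⟩ := hx
    set b' : {x : V // x ≠ v} := ⟨b, hbv⟩ with hb'
    set K := delContract G v b' with hKdef
    have hK4 : ¬ HasK4Minor K := delContract_noK4 hvb hG
    have hcardlt : Fintype.card {x : V // x ≠ v} < Fintype.card V :=
      Fintype.card_lt_of_injective_of_notMem Subtype.val Subtype.val_injective
        (b := v) (val_not_mem_range (by simp))
    obtain ⟨x, hxsm⟩ := hsmall _ K hcardlt hK4 ⟨b'⟩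
    by_cases hxb : x = b'
    · -- neighbours: c (routed), two genuine neighbours of b
      obtain ⟨z1, z2, z3, h12, h13, h23, hz1, hz2, hz3⟩ := not_smallAt_three (hbig b)
      obtain ⟨s, t, hst, hbs, hbt, hsv, htv⟩ := two_ne (v := v) h12 h13 h23 hz1 hz2 hz3
      have hsc : s ≠ c := fun h => hbc (h ▸ hbs)
      have htc : t ≠ c := fun h => hbc (h ▸ hbt)
      refine smallAt_contra (hxb ▸ hxsm)
        (a := (⟨c, hcv⟩ : {x // x ≠ v})) (b := ⟨s, hsv⟩) (c := ⟨t, htv⟩)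
        (subtype_ne _ _ (Ne.symm hsc)) (subtype_ne _ _ (Ne.symm htc)) (subtype_ne _ _ hst)
        ?_ ?_ ?_
      · exact ⟨subtype_ne _ _ hbcn, Or.inr (Or.inl ⟨rfl, hvc⟩)⟩
      · exact ⟨subtype_ne _ _ hbs.ne, Or.inl hbs⟩
      · exact ⟨subtype_ne _ _ hbt.ne, Or.inl hbt⟩
    · by_cases hxc : (↑x : V) = c
      · -- neighbours: b' (routed), two genuine neighbours of c
        obtain ⟨z1, z2, z3, h12, h13, h23, hz1, hz2, hz3⟩ := not_smallAt_three (hbig c)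
        obtain ⟨s, t, hst, hcs, hct, hsv, htv⟩ := two_ne (v := v) h12 h13 h23 hz1 hz2 hz3
        have hsb : s ≠ b := fun h => hbc ((h ▸ hcs).symm)
        have htb : t ≠ b := fun h => hbc ((h ▸ hct).symm)
        refine smallAt_contra hxsm
          (a := b') (b := (⟨s, hsv⟩ : {x // x ≠ v})) (c := ⟨t, htv⟩)
          (fun h => hsb (congrArg Subtype.val h).symm) (fun h => htb (congrArg Subtype.val h).symm)
          (subtype_ne _ _ hst) ?_ ?_ ?_
        · exact ⟨hxb, Or.inr (Or.inr ⟨rfl, hxc ▸ hvc⟩)⟩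
        · exact ⟨fun h => hcs.ne (hxc ▸ congrArg Subtype.val h), Or.inl (hxc ▸ hcs)⟩
        · exact ⟨fun h => hct.ne (hxc ▸ congrArg Subtype.val h), Or.inl (hxc ▸ hct)⟩
      · by_cases hvx : G.Adj v ↑x
        · -- then ↑x = a ; neighbours b, c, z all genuine
          have hxa : (↑x : V) = a := by
            rcases hcov ↑x hvx with h | h | h
            · exact h
            · exact absurd (Subtype.ext h) hxb
            · exact absurd h hxc
          have hzvl : z ≠ v := hzv
          refine smallAt_contra hxsm
            (a := (⟨b, hbv⟩ : {x // x ≠ v})) (b := ⟨c, hcv⟩) (c := ⟨z, hzvl⟩)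
            (subtype_ne _ _ hbcn) (subtype_ne _ _ (Ne.symm hzb)) (subtype_ne _ _ (Ne.symm hzc))
            ?_ ?_ ?_
          · exact ⟨fun h => habn (hxa ▸ congrArg Subtype.val h), Or.inl (by rw [hxa]; exact hab)⟩
          · exact ⟨fun h => hacn (hxa ▸ congrArg Subtype.val h), Or.inl (by rw [hxa]; exact hac)⟩
          · exact ⟨fun h => haz.ne (hxa ▸ congrArg Subtype.val h), Or.inl (by rw [hxa]; exact haz)⟩
        · obtain ⟨z1, z2, z3, h12, h13, h23, hz1, hz2, hz3⟩ := not_smallAt_three (hbig ↑x)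
          have hnv : ∀ u, G.Adj ↑x u → u ≠ v := fun u hu h => hvx ((h ▸ hu).symm)
          refine smallAt_contra hxsm
            (a := (⟨z1, hnv z1 hz1⟩ : {x // x ≠ v})) (b := ⟨z2, hnv z2 hz2⟩)
            (c := ⟨z3, hnv z3 hz3⟩)
            (subtype_ne _ _ h12) (subtype_ne _ _ h13) (subtype_ne _ _ h23) ?_ ?_ ?_
          · exact ⟨fun h => hz1.ne (congrArg Subtype.val h), Or.inl hz1⟩
          · exact ⟨fun h => hz2.ne (congrArg Subtype.val h), Or.inl hz2⟩
          · exact ⟨fun h => hz3.ne (congrArg Subtype.val h), Or.inl hz3⟩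
  · -- case β : N(a) ⊆ {v, b, c}
    have hacov : ∀ z, G.Adj a z → z = v ∨ z = b ∨ z = c := by
      intro z hz
      by_contra hcon
      push_neg at hcon
      exact hx ⟨z, hz, hcon.1, hcon.2.1, hcon.2.2⟩
    set b2 : {x : V // x ≠ v ∧ x ≠ a} := ⟨b, hbv, Ne.symm habn⟩ with hb2
    set c2 : {x : V // x ≠ v ∧ x ≠ a} := ⟨c, hcv, Ne.symm hacn⟩ with hc2
    set H2 := delTwoAdd G v a b2 c2 with hH2
    have hK4 : ¬ HasK4Minor H2 := delTwoAdd_noK4 hvb hvc hG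
    have hcardlt : Fintype.card {x : V // x ≠ v ∧ x ≠ a} < Fintype.card V :=
      Fintype.card_lt_of_injective_of_notMem Subtype.val Subtype.val_injective
        (b := v) (val_not_mem_range (by simp))
    obtain ⟨x, hxsm⟩ := hsmall _ H2 hcardlt hK4 ⟨b2⟩
    by_cases hxb : x = b2
    · -- uniqueness of the extra neighbour of b, then the diamond configuration
      have hbone : ∀ z z', G.Adj b z → G.Adj b z' → z ≠ v → z ≠ a → z' ≠ v → z' ≠ a →
          z = z' := by
        intro z z' hz hz' hzv hza hz'v hz'a
        by_contra hne'
        have hzc : z ≠ c := fun h => hbc (h ▸ hz)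
        have hz'c : z' ≠ c := fun h => hbc (h ▸ hz')
        refine smallAt_contra (hxb ▸ hxsm)
          (a := (⟨z, hzv, hza⟩ : {x // x ≠ v ∧ x ≠ a})) (b := ⟨z', hz'v, hz'a⟩) (c := c2)
          (subtype_ne _ _ hne') (subtype_ne _ _ hzc) (subtype_ne _ _ hz'c) ?_ ?_ ?_
        · exact ⟨subtype_ne _ _ hz.ne, Or.inl hz⟩
        · exact ⟨subtype_ne _ _ hz'.ne, Or.inl hz'⟩
        · exact ⟨subtype_ne _ _ hbcn, Or.inr (Or.inl ⟨rfl, rfl⟩)⟩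
      exact claimGamma hG hsmall hbig v a b c hva hvb hvc hcov hab hac hbc hacov hbone
    · by_cases hxc : x = c2
      · -- symmetric: uniqueness of the extra neighbour of c
        have hcone : ∀ z z', G.Adj c z → G.Adj c z' → z ≠ v → z ≠ a → z' ≠ v → z' ≠ a →
            z = z' := by
          intro z z' hz hz' hzv hza hz'v hz'a
          by_contra hne'
          have hzb : z ≠ b := fun h => hbc ((h ▸ hz).symm)
          have hz'b : z' ≠ b := fun h => hbc ((h ▸ hz').symm)
          refine smallAt_contra (hxc ▸ hxsm)
            (a := (⟨z, hzv, hza⟩ : {x // x ≠ v ∧ x ≠ a})) (b := ⟨z', hz'v, hz'a⟩) (c := b2)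
            (subtype_ne _ _ hne') (subtype_ne _ _ hzb) (subtype_ne _ _ hz'b) ?_ ?_ ?_
          · exact ⟨subtype_ne _ _ hz.ne, Or.inl hz⟩
          · exact ⟨subtype_ne _ _ hz'.ne, Or.inl hz'⟩
          · exact ⟨subtype_ne _ _ (Ne.symm hbcn), Or.inr (Or.inr ⟨rfl, rfl⟩)⟩
        exact claimGamma hG hsmall hbig v a c b hva hvc hvb
          (fun u hu => by rcases hcov u hu with h | h | h
                          · exact Or.inl h
                          · exact Or.inr (Or.inr h)
                          · exact Or.inr (Or.inl h))
          hac hab (fun h => hbc h.symm)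
          (fun z hz => by rcases hacov z hz with h | h | h
                          · exact Or.inl h
                          · exact Or.inr (Or.inr h)
                          · exact Or.inr (Or.inl h))
          hcone
      · -- x avoids v, a, b, c : all three neighbours genuine
        have hxa : (↑x : V) ≠ a := x.2.2
        have hxv : (↑x : V) ≠ v := x.2.1
        have hxbv : (↑x : V) ≠ b := fun h => hxb (Subtype.ext h)
        have hxcv : (↑x : V) ≠ c := fun h => hxc (Subtype.ext h)
        have hnvx : ¬ G.Adj v ↑x := by
          intro h
          rcases hcov ↑x h with h' | h' | h'
          · exact hxa h'
          · exact hxbv h'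
          · exact hxcv h'
        have hnax : ¬ G.Adj a ↑x := by
          intro h
          rcases hacov ↑x h with h' | h' | h'
          · exact hxv h'
          · exact hxbv h'
          · exact hxcv h'
        obtain ⟨z1, z2, z3, h12, h13, h23, hz1, hz2, hz3⟩ := not_smallAt_three (hbig ↑x)
        have hmk : ∀ u, G.Adj ↑x u → (u ≠ v ∧ u ≠ a) := by
          intro u hu
          constructor
          · intro h; exact hnvx ((h ▸ hu).symm)
          · intro h; exact hnax ((h ▸ hu).symm)
        refine smallAt_contra hxsm
          (a := (⟨z1, hmk z1 hz1⟩ : {x // x ≠ v ∧ x ≠ a})) (b := ⟨z2, hmk z2 hz2⟩)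
          (c := ⟨z3, hmk z3 hz3⟩)
          (subtype_ne _ _ h12) (subtype_ne _ _ h13) (subtype_ne _ _ h23) ?_ ?_ ?_
        · exact ⟨fun h => hz1.ne (congrArg Subtype.val h), Or.inl hz1⟩
        · exact ⟨fun h => hz2.ne (congrArg Subtype.val h), Or.inl hz2⟩
        · exact ⟨fun h => hz3.ne (congrArg Subtype.val h), Or.inl hz3⟩

end MinDegree2
section ExistsSmall
universe u
variable {V : Type u}

lemma exists_smallAt [Fintype V] {G : SimpleGraph V}
    (hG : ¬ HasK4Minor G) (h4 : 4 ≤ Fintype.card V)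
    (hsmall : ∀ (W : Type u) [Fintype W] (H : SimpleGraph W),
      Fintype.card W < Fintype.card V → ¬HasK4Minor H → Nonempty W → ∃ w, SmallAt H w) :
    ∃ v, SmallAt G v := by
  classical
  by_contra hbig0
  push_neg at hbig0
  have hbig : ∀ x : V, ¬ SmallAt G x := hbig0
  haveI hVne : Nonempty V := Fintype.card_pos_iff.mp (by omega)
  set w0 := Classical.arbitrary V with hw0
  set H := SimpleGraph.comap (Subtype.val : {x : V // x ≠ w0} → V) G with hH
  have hK4H : ¬ HasK4Minor H := fun h =>
    hG (h.mono Subtype.val Subtype.val_injective (fun a b hab => hab))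
  have hcardlt : Fintype.card {x : V // x ≠ w0} < Fintype.card V :=
    Fintype.card_lt_of_injective_of_notMem Subtype.val Subtype.val_injective
      (b := w0) (val_not_mem_range (by simp))
  have hneW : Nonempty {x : V // x ≠ w0} := by
    obtain ⟨x, hx⟩ := Fintype.exists_ne_of_one_lt_card (by omega) w0
    exact ⟨⟨x, hx⟩⟩
  obtain ⟨u', s, hs2, hscov⟩ := hsmall _ H hcardlt hK4H hneW
  set v := (↑u' : V) with hv
  obtain ⟨a, b, c, h12, h13, h23, ha, hb, hc⟩ := not_smallAt_three (hbig v)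
  have hcov : ∀ u, G.Adj v u → u = a ∨ u = b ∨ u = c := by
    set s' : Finset V := insert w0 (s.image Subtype.val) with hs'
    have hcover : ∀ u, G.Adj v u → u ∈ s' := by
      intro u hu
      by_cases h : u = w0
      · simp [hs', h]
      · have hadj : H.Adj u' ⟨u, h⟩ := hu
        have hmem := hscov _ hadj
        rw [hs']
        rw [Finset.mem_insert]
        exact Or.inr (Finset.mem_image.mpr ⟨⟨u, h⟩, hmem, rfl⟩)
    have hscard : s'.card ≤ 3 := by
      refine le_trans (Finset.card_insert_le _ _) ?_
      have := Finset.card_image_le (f := Subtype.val) (s := s)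
      omega
    have hsub : ({a, b, c} : Finset V) ⊆ s' := by
      intro u hu
      simp only [Finset.mem_insert, Finset.mem_singleton] at hu
      rcases hu with rfl | rfl | rfl
      · exact hcover _ ha
      · exact hcover _ hb
      · exact hcover _ hc
    have h3 : ({a, b, c} : Finset V).card = 3 := by
      rw [Finset.card_insert_of_notMem (by simp [h12, h13]),
          Finset.card_insert_of_notMem (by simp [h23]), Finset.card_singleton]
    have heq : ({a, b, c} : Finset V) = s' :=
      Finset.eq_of_subset_of_card_le hsub (by omega)
    intro u hu
    have := hcover u hu
    rw [← heq] at this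
    simpa using this
  by_cases hab : G.Adj a b <;> by_cases hac : G.Adj a c <;> by_cases hbc : G.Adj b c
  · exact hG (hasK4_of_clique ha hb hc hab hac hbc)
  · exact claimB hG hsmall hbig v a b c h12 h13 h23 ha hb hc hcov hab hac hbc
  · exact claimB hG hsmall hbig v b a c (Ne.symm h12) h23 h13 hb ha hc
      (fun u hu => by rcases hcov u hu with h | h | h <;> tauto) hab.symm hbc hac
  · exact claimA hG hsmall hbig v c a b (Ne.symm h13) (Ne.symm h23) h12 hc ha hb
      (fun u hu => by rcases hcov u hu with h | h | h <;> tauto)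
      (fun h => hac h.symm) (fun h => hbc h.symm)
  · exact claimB hG hsmall hbig v c a b (Ne.symm h13) (Ne.symm h23) h12 hc ha hb
      (fun u hu => by rcases hcov u hu with h | h | h <;> tauto) hac.symm hbc.symm hab
  · exact claimA hG hsmall hbig v b a c (Ne.symm h12) h23 h13 hb ha hc
      (fun u hu => by rcases hcov u hu with h | h | h <;> tauto)
      (fun h => hab h.symm) hbc
  · exact claimA hG hsmall hbig v a b c h12 h13 h23 ha hb hc hcov hab hac
  · exact claimA hG hsmall hbig v a b c h12 h13 h23 ha hb hc hcov hab hac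

end ExistsSmall
section Main
universe u
variable {V : Type u}

lemma extend_inj {v : V} {m : ℕ} (f : {x : V // x ≠ v} → Fin m) (hinj : Function.Injective f)
    (g : V → Fin (m+1)) (hgv : g v = Fin.last m)
    (hgx : ∀ z (h : z ≠ v), g z = Fin.castSucc (f ⟨z, h⟩)) : Function.Injective g := by
  intro x y hxy
  by_cases hx : x = v <;> by_cases hy : y = v
  · rw [hx, hy]
  · subst hx
    rw [hgv, hgx y hy] at hxy
    exact absurd hxy.symm (Fin.castSucc_lt_last _).ne
  · subst hy
    rw [hgv, hgx x hx] at hxy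
    exact absurd hxy (Fin.castSucc_lt_last _).ne
  · rw [hgx x hx, hgx y hy] at hxy
    have := hinj (Fin.castSucc_injective m hxy)
    exact congrArg Subtype.val this

lemma extend_hom {v : V} {m : ℕ} {G : SimpleGraph V} {T : SimpleGraph (Fin m)}
    (f : {x : V // x ≠ v} → Fin m) (x y : Fin m)
    (g : V → Fin (m+1)) (hgv : g v = Fin.last m)
    (hgx : ∀ z (h : z ≠ v), g z = Fin.castSucc (f ⟨z, h⟩))
    (hmain : ∀ (p q : {x : V // x ≠ v}), G.Adj ↑p ↑q → T.Adj (f p) (f q))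
    (hnbr : ∀ q (h : q ≠ v), G.Adj v q → f ⟨q, h⟩ = x ∨ f ⟨q, h⟩ = y) :
    ∀ a b, G.Adj a b → (apexGraph T x y).Adj (g a) (g b) := by
  intro a b hab
  by_cases ha : a = v
  · rw [ha] at hab ⊢
    have hb : b ≠ v := fun h => G.loopless.irrefl v (by rw [h] at hab; exact hab)
    rw [hgv, hgx b hb]
    refine ((apexGraph_adj_last).mpr ?_).symm
    rcases hnbr b hb hab with h | h
    · exact Or.inl (by rw [h])
    · exact Or.inr (by rw [h])
  · by_cases hb : b = v
    · rw [hb] at hab ⊢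
      rw [hgv, hgx a ha]
      refine (apexGraph_adj_last).mpr ?_
      rcases hnbr a ha hab.symm with h | h
      · exact Or.inl (by rw [h])
      · exact Or.inr (by rw [h])
    · rw [hgx a ha, hgx b hb]
      exact apexGraph_adj_castSucc.mpr (hmain ⟨a, ha⟩ ⟨b, hb⟩ hab)

lemma embedAux : ∀ (n : ℕ) (V : Type u) [Fintype V] (G : SimpleGraph V),
    Fintype.card V ≤ n → ¬ HasK4Minor G →
    ∃ (m : ℕ) (T : SimpleGraph (Fin m)) (f : V → Fin m),
      IsTwoTree T ∧ Function.Injective f ∧ ∀ a b, G.Adj a b → T.Adj (f a) (f b) := by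
  intro n
  induction n with
  | zero =>
    intro V _ G hcard hG
    exact embed_small G (by omega)
  | succ n ih =>
    intro V _ G hcard hG
    classical
    by_cases h3 : Fintype.card V ≤ 3
    · exact embed_small G h3
    · push_neg at h3
      have hsmall : ∀ (W : Type u) [Fintype W] (H : SimpleGraph W),
          Fintype.card W < Fintype.card V → ¬HasK4Minor H → Nonempty W → ∃ w, SmallAt H w := by
        intro W _ H hlt hH hne
        haveI := hne
        exact smallAt_of_embed H (ih W H (by omega) hH)
      obtain ⟨v, s, hs2, hscov⟩ := exists_smallAt hG h3 hsmall
      have hcard' : Fintype.card {x : V // x ≠ v} ≤ n := by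
        have := Fintype.card_lt_of_injective_of_notMem (Subtype.val : {x : V // x ≠ v} → V)
          Subtype.val_injective (b := v) (val_not_mem_range (fun h => h rfl))
        omega
      by_cases htwo : ∃ u w : V, u ≠ w ∧ G.Adj v u ∧ G.Adj v w
      · obtain ⟨u, w, huw, hvu, hvw⟩ := htwo
        have hcov : ∀ z, G.Adj v z → z = u ∨ z = w := by
          intro z hz
          by_contra hcon
          push_neg at hcon
          exact smallAt_contra ⟨s, hs2, hscov⟩ (a := u) (b := w) (c := z)
            huw (Ne.symm hcon.1) (Ne.symm hcon.2) hvu hvw hz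
        set u' : {x : V // x ≠ v} := ⟨u, hvu.ne'⟩ with hu'
        set w' : {x : V // x ≠ v} := ⟨w, hvw.ne'⟩ with hw'
        set K := delClique G v with hKdef
        have hK4 : ¬ HasK4Minor K :=
          delClique_noK4 (u := u') (w := w') hvu (fun z hz => hcov z hz) hG
        obtain ⟨m, T, f, hT, hinj, hhom⟩ := ih _ K hcard' hK4
        have hadjK : K.Adj u' w' := ⟨subtype_ne _ _ huw, Or.inr ⟨hvu, hvw⟩⟩
        have hTadj : T.Adj (f u') (f w') := hhom _ _ hadjK
        refine ⟨m + 1, apexGraph T (f u') (f w'),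
          fun x => if h : x = v then Fin.last m else Fin.castSucc (f ⟨x, h⟩),
          isTwoTree_apexGraph hT hTadj,
          extend_inj f hinj _ (by exact dif_pos rfl) (fun z h => by simp only [dif_neg h]), ?_⟩
        refine extend_hom f _ _ _ (by exact dif_pos rfl) (fun z h => by simp only [dif_neg h]) ?_ ?_
        · intro p q hpq
          exact hhom _ _ ⟨subtype_ne _ _ hpq.ne, Or.inl hpq⟩
        · intro q h hvq
          rcases hcov q hvq with hq | hq
          · exact Or.inl (congrArg f (Subtype.ext hq))
          · exact Or.inr (congrArg f (Subtype.ext hq))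
      · have huniq : ∀ u w, G.Adj v u → G.Adj v w → u = w := by
          intro u w hu hw
          by_contra h
          exact htwo ⟨u, w, h, hu, hw⟩
        set K := SimpleGraph.comap (Subtype.val : {x : V // x ≠ v} → V) G with hKdef
        have hK4 : ¬ HasK4Minor K := fun h =>
          hG (h.mono Subtype.val Subtype.val_injective (fun a b hab => hab))
        obtain ⟨m, T, f, hT, hinj, hhom⟩ := ih _ K hcard' hK4
        by_cases hnbr : ∃ u, G.Adj v u
        · obtain ⟨u, hvu⟩ := hnbr
          set u' : {x : V // x ≠ v} := ⟨u, hvu.ne'⟩ with hu'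
          obtain ⟨y, hy⟩ := twoTree_exists_adj hT (f u')
          refine ⟨m + 1, apexGraph T (f u') y,
            fun x => if h : x = v then Fin.last m else Fin.castSucc (f ⟨x, h⟩),
            isTwoTree_apexGraph hT hy,
            extend_inj f hinj _ (by exact dif_pos rfl) (fun z h => by simp only [dif_neg h]), ?_⟩
          refine extend_hom f _ _ _ (by exact dif_pos rfl) (fun z h => by simp only [dif_neg h]) ?_ ?_
          · intro p q hpq
            exact hhom _ _ hpq
          · intro q h hvq
            exact Or.inl (congrArg f (Subtype.ext (huniq q u hvq hvu)))
        · obtain ⟨p₀, q₀, hpq₀⟩ := twoTree_exists_edge hT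
          refine ⟨m + 1, apexGraph T p₀ q₀,
            fun x => if h : x = v then Fin.last m else Fin.castSucc (f ⟨x, h⟩),
            isTwoTree_apexGraph hT hpq₀,
            extend_inj f hinj _ (by exact dif_pos rfl) (fun z h => by simp only [dif_neg h]), ?_⟩
          refine extend_hom f _ _ _ (by exact dif_pos rfl) (fun z h => by simp only [dif_neg h]) ?_ ?_
          · intro p q hpq
            exact hhom _ _ hpq
          · intro q h hvq
            exact absurd ⟨q, hvq⟩ hnbr

end Main

/-- A (finite) graph is `K₄`-minor-free iff it is a subgraph of some 2-tree. -/
theorem K4MinorFree_iff_partialTwoTree {V : Type*} [Fintype V] (G : SimpleGraph V) :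
    ¬ HasK4Minor G ↔
      ∃ (m : ℕ) (T : SimpleGraph (Fin m)) (f : V → Fin m),
        IsTwoTree T ∧ Function.Injective f ∧
        ∀ a b, G.Adj a b → T.Adj (f a) (f b) := by
  constructor
  · intro hG
    exact embedAux (Fintype.card V) V G le_rfl hG
  · rintro ⟨m, T, f, hT, hinj, hhom⟩ hK4
    exact noK4_of_isTwoTree hT (hK4.mono f hinj hhom)
end

section
/- The projective hypercube PC(2k), defined as the Cayley graph on ℤ₂^{2k} with connection set {e_1, …, e_{2k}, J} (where e_i are the standard basis vectors and J is the all-ones vector), has diameter at most k; moreover, every pair of vertices of PC(2k) lies on a common cycle of length 2k+1. -/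
open SimpleGraph

/-- The projective hypercube `PC(2k)`: the Cayley graph on `ℤ₂^{2k}` with connection
set consisting of the `2k` standard basis vectors and the all-ones vector. -/
def PC (k : ℕ) : SimpleGraph (Fin (2*k) → ZMod 2) :=
  SimpleGraph.fromRel fun x y =>
    (∃ i : Fin (2*k), y = x + fun j => if j = i then 1 else 0) ∨
    y = x + fun _ => 1

namespace PCproof

variable {k : ℕ}

/-- standard basis vector -/
def e (i : Fin (2*k)) : Fin (2*k) → ZMod 2 := fun j => if j = i then 1 else 0

/-- all-ones vector -/
def Jv (k : ℕ) : Fin (2*k) → ZMod 2 := fun _ => 1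

lemma zmod2_add_self : ∀ a : ZMod 2, a + a = 0 := by decide

lemma add_self' (a : Fin (2*k) → ZMod 2) : a + a = 0 := by
  funext j; exact zmod2_add_self (a j)

lemma e_ne_zero (i : Fin (2*k)) : e i ≠ 0 := by
  intro h
  have := congrFun h i
  simp [e] at this

lemma adj_e (x : Fin (2*k) → ZMod 2) (i : Fin (2*k)) : (PC k).Adj x (x + e i) := by
  refine ⟨?_, Or.inl (Or.inl ⟨i, rfl⟩)⟩
  intro h
  exact e_ne_zero i (by simpa using (left_eq_add.mp h))

lemma Jv_ne_zero (hk : 1 ≤ k) : Jv k ≠ 0 := by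
  intro h
  have := congrFun h ⟨0, by omega⟩
  simp [Jv] at this

lemma adj_J (hk : 1 ≤ k) (x : Fin (2*k) → ZMod 2) : (PC k).Adj x (x + Jv k) := by
  refine ⟨?_, Or.inl (Or.inr rfl)⟩
  intro h
  exact Jv_ne_zero hk (by simpa using (left_eq_add.mp h))

/-- Walk from `x` adding basis vectors indexed by the list `L`. -/
def pathE (x : Fin (2*k) → ZMod 2) :
    (L : List (Fin (2*k))) → (PC k).Walk x (x + (L.map e).sum)
  | [] => SimpleGraph.Walk.nil.copy rfl (by simp)
  | i :: L => SimpleGraph.Walk.cons (adj_e x i)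
      ((pathE (x + e i) L).copy rfl (by simp [add_assoc]))

lemma length_pathE (x : Fin (2*k) → ZMod 2) (L : List (Fin (2*k))) :
    (pathE x L).length = L.length := by
  induction L generalizing x with
  | nil => simp [pathE]
  | cons i L ih => simp [pathE, ih]

lemma mem_support_pathE {x v : Fin (2*k) → ZMod 2} {L : List (Fin (2*k))} :
    v ∈ (pathE x L).support ↔ ∃ P, P <+: L ∧ v = x + (P.map e).sum := by
  induction L generalizing x with
  | nil =>
    simp only [pathE, SimpleGraph.Walk.support_copy, SimpleGraph.Walk.support_nil,
      List.mem_singleton]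
    constructor
    · rintro rfl; exact ⟨[], List.prefix_refl _, by simp⟩
    · rintro ⟨P, hP, rfl⟩
      have : P = [] := List.prefix_nil.mp hP
      simp [this]
  | cons i L ih =>
    simp only [pathE, SimpleGraph.Walk.support_cons, SimpleGraph.Walk.support_copy,
      List.mem_cons]
    constructor
    · rintro (rfl | hv)
      · exact ⟨[], ⟨i :: L, rfl⟩, by simp⟩
      · obtain ⟨P, hP, rfl⟩ := ih.mp hv
        exact ⟨i :: P, (List.cons_prefix_cons).mpr ⟨rfl, hP⟩, by simp [add_assoc]⟩
    · rintro ⟨P, hP, rfl⟩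
      cases P with
      | nil => left; simp
      | cons a P =>
        obtain ⟨rfl, hP'⟩ := (List.cons_prefix_cons).mp hP
        right
        exact ih.mpr ⟨P, hP', by simp [add_assoc]⟩

lemma sum_e_apply {L : List (Fin (2*k))} (hL : L.Nodup) (j : Fin (2*k)) :
    ((L.map e).sum) j = if j ∈ L then 1 else 0 := by
  induction L with
  | nil => simp
  | cons i L ih =>
    have hiL : i ∉ L := (List.nodup_cons.mp hL).1
    have hL' : L.Nodup := (List.nodup_cons.mp hL).2
    simp only [List.map_cons, List.sum_cons, Pi.add_apply, ih hL', List.mem_cons]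
    by_cases hji : j = i
    · subst hji
      simp [e, hiL]
    · simp [e, hji]

lemma sum_e_ne_zero {L : List (Fin (2*k))} (hL : L.Nodup) (hne : L ≠ []) :
    (L.map e).sum ≠ 0 := by
  intro h
  obtain ⟨i, L', rfl⟩ := List.exists_cons_of_ne_nil hne
  have := congrFun h i
  rw [sum_e_apply hL i] at this
  simp at this

lemma nodup_support_pathE {x : Fin (2*k) → ZMod 2} {L : List (Fin (2*k))}
    (hL : L.Nodup) : (pathE x L).support.Nodup := by
  induction L generalizing x with
  | nil => simp [pathE]
  | cons i L ih =>
    have hiL : i ∉ L := (List.nodup_cons.mp hL).1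
    have hL' : L.Nodup := (List.nodup_cons.mp hL).2
    simp only [pathE, SimpleGraph.Walk.support_cons, SimpleGraph.Walk.support_copy,
      List.nodup_cons]
    refine ⟨?_, ih hL'⟩
    intro hx
    obtain ⟨P, hP, hxeq⟩ := mem_support_pathE.mp hx
    have h0 : e i + (P.map e).sum = 0 := by
      have := hxeq
      rw [add_assoc] at this
      exact left_eq_add.mp this
    have hnodup : (i :: P).Nodup := by
      refine List.nodup_cons.mpr ⟨fun hiP => hiL (hP.subset hiP), hP.sublist.nodup hL'⟩
    exact sum_e_ne_zero hnodup (by simp) (by simpa using h0)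

lemma edges_pathE {x : Fin (2*k) → ZMod 2} {L : List (Fin (2*k))} {E}
    (hE : E ∈ (pathE x L).edges) : ∃ p i, E = s(p, p + e i) := by
  induction L generalizing x with
  | nil => simp [pathE] at hE
  | cons i L ih =>
    simp only [pathE, SimpleGraph.Walk.edges_cons, SimpleGraph.Walk.edges_copy,
      List.mem_cons] at hE
    rcases hE with rfl | hE
    · exact ⟨x, i, rfl⟩
    · exact ih hE

lemma eq_of_add_eq_zero' {a b : Fin (2*k) → ZMod 2} (h : a + b = 0) : a = b := by
  calc a = a + b + b := by rw [add_assoc, add_self', add_zero]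
    _ = b := by rw [h, zero_add]

lemma e_ne_Jv (hk : 1 ≤ k) (i : Fin (2*k)) : e i ≠ Jv k := by
  intro h
  have h2 : 2 ≤ 2*k := by omega
  set j : Fin (2*k) := ⟨if (i : ℕ) = 0 then 1 else 0, by split <;> omega⟩ with hj
  have hji : j ≠ i := by
    intro hh
    have := congrArg Fin.val hh
    simp only [hj] at this
    split at this <;> omega
  have := congrFun h j
  simp [e, Jv, if_neg hji] at this

lemma J_edge_notMem (hk : 1 ≤ k) {x x' : Fin (2*k) → ZMod 2} {L : List (Fin (2*k))} :
    s(x, x + Jv k) ∉ (pathE x' L).edges := by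
  intro h
  obtain ⟨p, i, hpi⟩ := edges_pathE h
  rw [Sym2.eq_iff] at hpi
  rcases hpi with ⟨rfl, h2⟩ | ⟨h1, h2⟩
  · exact e_ne_Jv hk i (add_left_cancel h2).symm
  · subst h1
    rw [add_assoc] at h2
    have h0 : e i + Jv k = 0 := add_eq_left.mp h2
    exact e_ne_Jv hk i (eq_of_add_eq_zero' h0)

end PCproof

/-- Every pair of vertices of `PC(2k)` lies on a common `(2k+1)`-cycle, and the
diameter of `PC(2k)` is at most `k`. -/
theorem PC_common_cycle_and_diam (k : ℕ) (hk : 1 ≤ k) (x y : Fin (2*k) → ZMod 2) :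
    (∃ (v : Fin (2*k) → ZMod 2) (w : (PC k).Walk v v),
      w.IsCycle ∧ w.length = 2*k+1 ∧ x ∈ w.support ∧ y ∈ w.support) ∧
    (PC k).dist x y ≤ k := by
  classical
  open PCproof in
  set d : Fin (2*k) → ZMod 2 := x + y with hd
  have hz : ∀ a : ZMod 2, a = 0 ∨ a = 1 := by decide
  have hy : y = x + d := by
    rw [hd, ← add_assoc, add_self', zero_add]
  set S : Finset (Fin (2*k)) := Finset.filter (fun j => d j = 1) Finset.univ with hS
  have hmemS : ∀ j, j ∈ S ↔ d j = 1 := by intro j; simp [hS]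
  have hsum_S : ((S.toList.map e)).sum = d := by
    funext j
    rw [sum_e_apply (Finset.nodup_toList S) j]
    rcases hz (d j) with h | h <;>
      simp [Finset.mem_toList, hmemS, h]
  have hsum_Sc : ((Sᶜ.toList.map e)).sum = Jv k + d := by
    funext j
    rw [sum_e_apply (Finset.nodup_toList _) j]
    rcases hz (d j) with h | h <;>
      simp [Finset.mem_toList, Finset.mem_compl, hmemS, h, Jv] <;> decide
  set L : List (Fin (2*k)) := S.toList ++ Sᶜ.toList with hL
  have hLnodup : L.Nodup := by
    refine List.Nodup.append (Finset.nodup_toList _) (Finset.nodup_toList _) ?_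
    intro a ha hb
    rw [Finset.mem_toList] at ha hb
    exact (Finset.mem_compl.mp hb) ha
  have hsum_L : ((L.map e)).sum = Jv k := by
    funext j
    rw [sum_e_apply hLnodup j, if_pos]
    · rfl
    · rw [hL, List.mem_append, Finset.mem_toList, Finset.mem_toList]
      by_cases h : j ∈ S
      · exact Or.inl h
      · exact Or.inr (Finset.mem_compl.mpr h)
  have hlen_L : L.length = 2*k := by
    rw [hL, List.length_append, Finset.length_toList, Finset.length_toList]
    have := Finset.card_add_card_compl S
    rw [Fintype.card_fin] at this
    omega
  constructor
  · -- the common cycle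
    refine ⟨x, SimpleGraph.Walk.cons (adj_J hk x)
      (((pathE x L).copy rfl (by rw [hsum_L])).reverse), ?_, ?_, ?_, ?_⟩
    · rw [SimpleGraph.Walk.cons_isCycle_iff]
      constructor
      · exact (SimpleGraph.Walk.IsPath.mk'
          (by simpa using nodup_support_pathE hLnodup)).reverse
      · simp only [SimpleGraph.Walk.edges_reverse, SimpleGraph.Walk.edges_copy,
          List.mem_reverse]
        exact J_edge_notMem hk
    · simp [SimpleGraph.Walk.length_reverse, length_pathE, hlen_L]
    · simp
    · simp only [SimpleGraph.Walk.support_cons, SimpleGraph.Walk.support_reverse,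
        SimpleGraph.Walk.support_copy, List.mem_cons, List.mem_reverse]
      right
      exact mem_support_pathE.mpr ⟨S.toList, List.prefix_append _ _,
        by rw [hsum_S, ← hy]⟩
  · -- the distance bound
    by_cases hSk : S.card ≤ k
    · have hle := SimpleGraph.dist_le ((pathE x S.toList).copy rfl
        (by rw [hsum_S, ← hy]))
      rw [SimpleGraph.Walk.length_copy, length_pathE, Finset.length_toList] at hle
      omega
    · have hcard : Sᶜ.card + 1 ≤ k := by
        have := Finset.card_add_card_compl S
        rw [Fintype.card_fin] at this
        omega
      have hv2 : (x + Jv k) + ((Sᶜ.toList.map e)).sum = y := by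
        rw [hsum_Sc, hy, add_assoc, ← add_assoc (Jv k), add_self', zero_add]
      have hle := SimpleGraph.dist_le (SimpleGraph.Walk.cons (adj_J hk x)
        ((pathE (x + Jv k) Sᶜ.toList).copy rfl hv2))
      rw [SimpleGraph.Walk.length_cons, SimpleGraph.Walk.length_copy,
        length_pathE, Finset.length_toList] at hle
      omega
end

section
/- The projective hypercube PC(2k) is distance-transitive: if u, v, x, y are vertices of PC(2k) with d(u,v) = d(x,y), then there is a graph automorphism of PC(2k) sending u to x and v to y. -/
open SimpleGraph

namespace PCAux
variable {k : ℕ}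

abbrev V (k : ℕ) := Fin (2*k) → ZMod 2

def E (i : Fin (2*k)) : V k := fun j => if j = i then 1 else 0
def Jv (k : ℕ) : V k := fun _ => 1

lemma z2 : ∀ c : ZMod 2, c + c = 0 := by decide

lemma addself (v : V k) : v + v = 0 := by
  funext j; exact z2 (v j)

lemma PC_adj (hk : 1 ≤ k) (a b : V k) :
    (PC k).Adj a b ↔ ((∃ i, b = a + E i) ∨ b = a + Jv k) := by
  have hsym : ∀ x y : V k, ((∃ i, y = x + E i) ∨ y = x + Jv k) ↔
      ((∃ i, x = y + E i) ∨ x = y + Jv k) := by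
    intro x y
    constructor <;>
    · rintro (⟨i, rfl⟩ | rfl)
      · exact Or.inl ⟨i, by rw [add_assoc, addself, add_zero]⟩
      · exact Or.inr (by rw [add_assoc, addself, add_zero])
  have hne : ∀ x y : V k, ((∃ i, y = x + E i) ∨ y = x + Jv k) → x ≠ y := by
    rintro x y (⟨i, rfl⟩ | rfl)
    · intro hxy
      have := congrFun hxy i
      simp [E] at this
    · intro hxy
      have := congrFun hxy ⟨0, by omega⟩
      simp [Jv] at this
  rw [PC]
  rw [SimpleGraph.fromRel_adj]
  show (a ≠ b ∧ (((∃ i, b = a + E i) ∨ b = a + Jv k) ∨ ((∃ i, a = b + E i) ∨ a = b + Jv k))) ↔ _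
  constructor
  · rintro ⟨-, h | h⟩
    · exact h
    · exact (hsym b a).mp h
  · intro h
    exact ⟨hne a b h, Or.inl h⟩


def wt (v : V k) : ℕ := (Finset.univ.filter fun i => v i = 1).card

lemma z2cases : ∀ c : ZMod 2, c = 0 ∨ c = 1 := by decide

lemma wt_le (v : V k) : wt v ≤ 2*k := by
  classical
  calc (Finset.univ.filter fun i => v i = 1).card ≤ Finset.univ.card :=
        Finset.card_le_card (Finset.filter_subset _ _)
    _ = 2*k := by simp

lemma wt_zero_iff (v : V k) : wt v = 0 ↔ v = 0 := by
  classical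
  rw [wt, Finset.card_eq_zero, Finset.filter_eq_empty_iff]
  constructor
  · intro h; funext i
    rcases z2cases (v i) with h0 | h1
    · exact h0
    · exact absurd h1 (h (Finset.mem_univ i))
  · rintro rfl i _; simp

lemma wt_pos_exists (v : V k) (h : 0 < wt v) : ∃ i, v i = 1 := by
  classical
  obtain ⟨i, hi⟩ := Finset.card_pos.mp h
  exact ⟨i, (Finset.mem_filter.mp hi).2⟩

lemma wt_compl (v : V k) : wt v + wt (v + Jv k) = 2*k := by
  classical
  have : (Finset.univ.filter fun i => (v + Jv k) i = 1) =
      (Finset.univ.filter fun i => v i = 1)ᶜ := by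
    ext i
    simp only [Finset.mem_filter, Finset.mem_compl, Finset.mem_univ, true_and]
    show v i + 1 = 1 ↔ ¬ v i = 1
    revert v; intro v; generalize v i = c; revert c; decide
  rw [wt, wt, this, Finset.card_add_card_compl]
  simp

lemma wt_add_E (v : V k) (i : Fin (2*k)) :
    (v i = 1 ∧ wt (v + E i) + 1 = wt v) ∨ (v i = 0 ∧ wt (v + E i) = wt v + 1) := by
  classical
  have hA : ∀ c : ZMod 2, c + 1 = 1 ↔ ¬ c = 1 := by decide
  have hB : ∀ c : ZMod 2, c + 0 = 1 ↔ c = 1 := by decide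
  have hmem : ∀ j, ((v + E i) j = 1 ↔ (if j = i then ¬ v j = 1 else v j = 1)) := by
    intro j
    show v j + (if j = i then 1 else 0) = 1 ↔ _
    by_cases hj : j = i
    · rw [if_pos hj, if_pos hj]; exact hA (v j)
    · rw [if_neg hj, if_neg hj]; exact hB (v j)
  rcases z2cases (v i) with h0 | h1
  · right
    refine ⟨h0, ?_⟩
    have hns : ¬ v i = 1 := by rw [h0]; decide
    have hset : (Finset.univ.filter fun j => (v + E i) j = 1) =
        insert i (Finset.univ.filter fun j => v j = 1) := by
      ext j
      simp only [Finset.mem_filter, Finset.mem_insert, Finset.mem_univ, true_and, hmem]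
      by_cases hj : j = i
      · subst hj; simp [hns]
      · simp [hj]
    rw [wt, wt, hset, Finset.card_insert_of_notMem (by simp [hns])]
  · left
    refine ⟨h1, ?_⟩
    have hset : (Finset.univ.filter fun j => (v + E i) j = 1) =
        (Finset.univ.filter fun j => v j = 1).erase i := by
      ext j
      simp only [Finset.mem_filter, Finset.mem_erase, Finset.mem_univ, true_and, hmem]
      by_cases hj : j = i
      · subst hj; simp [h1]
      · simp [hj]
    rw [wt, wt, hset, Finset.card_erase_add_one (by simp [h1])]


lemma one_ne_zero' : (1 : ZMod 2) ≠ 0 := by decide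

lemma exists_walk_wt (hk : 1 ≤ k) : ∀ (n : ℕ) (a b : V k), wt (a + b) = n →
    ∃ W : (PC k).Walk a b, W.length = n := by
  intro n
  induction n with
  | zero =>
    intro a b h
    have h0 : a + b = 0 := (wt_zero_iff _).mp h
    have hba : b = a := by
      have h2 : a + (a + b) = a + 0 := by rw [h0]
      rwa [← add_assoc, addself, zero_add, add_zero] at h2
    subst hba
    exact ⟨SimpleGraph.Walk.nil, rfl⟩
  | succ n ih =>
    intro a b h
    have hpos : 0 < wt (a + b) := by omega
    obtain ⟨i, hi⟩ := wt_pos_exists _ hpos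
    have hadj : (PC k).Adj a (a + E i) := (PC_adj hk _ _).mpr (Or.inl ⟨i, rfl⟩)
    have hco : (a + E i) + b = (a + b) + E i := by
      rw [add_right_comm]
    have hw : wt ((a + E i) + b) = n := by
      rw [hco]
      rcases wt_add_E (a + b) i with ⟨_, he⟩ | ⟨h0, _⟩
      · omega
      · rw [hi] at h0; exact absurd h0 one_ne_zero'
    obtain ⟨W, hW⟩ := ih (a + E i) b hw
    exact ⟨SimpleGraph.Walk.cons hadj W, by simp [hW]⟩

lemma dist_le_wt (hk : 1 ≤ k) (a b : V k) : (PC k).dist a b ≤ wt (a + b) := by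
  obtain ⟨W, hW⟩ := exists_walk_wt hk (wt (a + b)) a b rfl
  simpa [hW] using SimpleGraph.dist_le W

lemma dist_le_co (hk : 1 ≤ k) (a b : V k) :
    (PC k).dist a b ≤ 2*k + 1 - wt (a + b) := by
  have hadj : (PC k).Adj a (a + Jv k) := (PC_adj hk _ _).mpr (Or.inr rfl)
  have hco : (a + Jv k) + b = (a + b) + Jv k := by rw [add_right_comm]
  obtain ⟨W, hW⟩ := exists_walk_wt hk (wt ((a + Jv k) + b)) (a + Jv k) b rfl
  have hle := SimpleGraph.dist_le (SimpleGraph.Walk.cons hadj W)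
  have hcompl := wt_compl (a + b)
  have hbd := wt_le (a + b)
  rw [SimpleGraph.Walk.length_cons, hW, hco] at hle
  omega

lemma pc_reachable (hk : 1 ≤ k) (a b : V k) : (PC k).Reachable a b := by
  obtain ⟨W, _⟩ := exists_walk_wt hk (wt (a + b)) a b rfl
  exact ⟨W⟩

lemma min_le_walk_length (hk : 1 ≤ k) {a b : V k} (W : (PC k).Walk a b) :
    min (wt (a + b)) (2*k + 1 - wt (a + b)) ≤ W.length := by
  induction W with
  | nil =>
    have : wt (0 : V k) = 0 := (wt_zero_iff 0).mpr rfl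
    simp [addself, this]
  | @cons a c b h p ih =>
    rw [SimpleGraph.Walk.length_cons]
    have hbd1 := wt_le (a + b)
    have hbd2 := wt_le (c + b)
    rcases (PC_adj hk a c).mp h with ⟨i, rfl⟩ | rfl
    · have hco : (a + E i) + b = (a + b) + E i := by rw [add_right_comm]
      rw [hco] at ih hbd2
      rcases wt_add_E (a + b) i with ⟨_, he⟩ | ⟨_, he⟩ <;> omega
    · have hco : (a + Jv k) + b = (a + b) + Jv k := by rw [add_right_comm]
      rw [hco] at ih hbd2
      have hcompl := wt_compl (a + b)
      omega

lemma dist_eq (hk : 1 ≤ k) (a b : V k) :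
    (PC k).dist a b = min (wt (a + b)) (2*k + 1 - wt (a + b)) := by
  refine le_antisymm (le_min (dist_le_wt hk a b) (dist_le_co hk a b)) ?_
  obtain ⟨W, hW⟩ := (pc_reachable hk a b).exists_walk_length_eq_dist
  rw [← hW]
  exact min_le_walk_length hk W


/-! ### Automorphisms -/

def mkIso (f : V k ≃ V k)
    (hf : ∀ u v, (PC k).Adj u v → (PC k).Adj (f u) (f v))
    (hg : ∀ u v, (PC k).Adj u v → (PC k).Adj (f.symm u) (f.symm v)) :
    PC k ≃g PC k :=
  { f with
    map_rel_iff' := by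
      intro u v
      constructor
      · intro h
        have h2 := hg _ _ h
        simpa using h2
      · exact hf u v }

@[simp] lemma mkIso_apply (f : V k ≃ V k) (hf hg) (v : V k) : mkIso f hf hg v = f v := rfl

/-- translation -/
def addEquiv (a : V k) : V k ≃ V k where
  toFun v := v + a
  invFun v := v + a
  left_inv v := by show v + a + a = v; rw [add_assoc, addself, add_zero]
  right_inv v := by show v + a + a = v; rw [add_assoc, addself, add_zero]

lemma adj_add (hk : 1 ≤ k) (a u v : V k) (h : (PC k).Adj u v) :
    (PC k).Adj (u + a) (v + a) := by
  rw [PC_adj hk] at h ⊢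
  rcases h with ⟨i, rfl⟩ | rfl
  · exact Or.inl ⟨i, by rw [add_right_comm]⟩
  · exact Or.inr (by rw [add_right_comm])

def transIso (hk : 1 ≤ k) (a : V k) : PC k ≃g PC k :=
  mkIso (addEquiv a) (adj_add hk a) (adj_add hk a)

@[simp] lemma transIso_apply (hk : 1 ≤ k) (a v : V k) : transIso hk a v = v + a := rfl

/-- coordinate permutation -/
def permEquiv (σ : Equiv.Perm (Fin (2*k))) : V k ≃ V k where
  toFun v := fun j => v (σ j)
  invFun v := fun j => v (σ.symm j)
  left_inv v := by funext j; simp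
  right_inv v := by funext j; simp

lemma adj_perm (hk : 1 ≤ k) (σ : Equiv.Perm (Fin (2*k))) (u v : V k)
    (h : (PC k).Adj u v) : (PC k).Adj (permEquiv σ u) (permEquiv σ v) := by
  rw [PC_adj hk] at h ⊢
  rcases h with ⟨i, rfl⟩ | rfl
  · refine Or.inl ⟨σ.symm i, ?_⟩
    funext j
    show u (σ j) + (if σ j = i then 1 else 0) = u (σ j) + (if j = σ.symm i then 1 else 0)
    congr 1
    simp [Equiv.eq_symm_apply]
  · exact Or.inr rfl

lemma adj_perm_symm (hk : 1 ≤ k) (σ : Equiv.Perm (Fin (2*k))) (u v : V k)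
    (h : (PC k).Adj u v) : (PC k).Adj ((permEquiv σ).symm u) ((permEquiv σ).symm v) := by
  have h2 := adj_perm hk σ.symm u v h
  convert h2 using 2 <;> rfl

def permIso (hk : 1 ≤ k) (σ : Equiv.Perm (Fin (2*k))) : PC k ≃g PC k :=
  mkIso (permEquiv σ) (adj_perm hk σ) (adj_perm_symm hk σ)

@[simp] lemma permIso_apply (hk : 1 ≤ k) (σ : Equiv.Perm (Fin (2*k))) (v : V k) :
    permIso hk σ v = fun j => v (σ j) := rfl

/-- the "fold" map swapping `E i` and `J` -/
def Tmap (i : Fin (2*k)) (v : V k) : V k :=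
  fun j => v j + v i * ((if j = i then 1 else 0) + 1)

lemma Tmap_invol (i : Fin (2*k)) (v : V k) : Tmap i (Tmap i v) = v := by
  have hTi : Tmap i v i = v i := by
    show v i + v i * ((if i = i then 1 else 0) + 1) = v i
    rw [if_pos rfl]
    generalize v i = c; revert c; decide
  funext j
  show Tmap i v j + Tmap i v i * ((if j = i then 1 else 0) + 1) = v j
  rw [hTi]
  show v j + v i * ((if j = i then 1 else 0) + 1) + v i * ((if j = i then 1 else 0) + 1) = v j
  by_cases hj : j = i
  · subst hj; rw [if_pos rfl]; generalize v j = c; revert c; decide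
  · rw [if_neg hj]; generalize v j = c; generalize v i = d; revert c d; decide

def TEquiv (i : Fin (2*k)) : V k ≃ V k where
  toFun := Tmap i
  invFun := Tmap i
  left_inv := Tmap_invol i
  right_inv := Tmap_invol i

lemma adj_T (hk : 1 ≤ k) (i : Fin (2*k)) (u v : V k) (h : (PC k).Adj u v) :
    (PC k).Adj (Tmap i u) (Tmap i v) := by
  rw [PC_adj hk] at h ⊢
  rcases h with ⟨l, rfl⟩ | rfl
  · by_cases hl : l = i
    · subst hl
      refine Or.inr ?_
      funext j
      show (u j + (if j = l then 1 else 0)) + (u l + (if l = l then 1 else 0)) * ((if j = l then 1 else 0) + 1)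
          = (u j + u l * ((if j = l then 1 else 0) + 1)) + 1
      rw [if_pos rfl]
      by_cases hj : j = l
      · subst hj; rw [if_pos rfl]; generalize u j = c; revert c; decide
      · rw [if_neg hj]; generalize u j = c; generalize u l = d; revert c d; decide
    · refine Or.inl ⟨l, ?_⟩
      funext j
      show (u j + (if j = l then 1 else 0)) + (u i + (if i = l then 1 else 0)) * ((if j = i then 1 else 0) + 1)
          = (u j + u i * ((if j = i then 1 else 0) + 1)) + (if j = l then 1 else 0)
      rw [if_neg (fun hh : i = l => hl hh.symm)]
      by_cases hj1 : j = i
      · have hj2 : ¬ j = l := by rw [hj1]; exact fun hh => hl hh.symm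
        rw [if_pos hj1, if_neg hj2]
        generalize u j = c; generalize u i = d; revert c d; decide
      · rw [if_neg hj1]
        by_cases hj2 : j = l
        · rw [if_pos hj2]; generalize u j = c; generalize u i = d; revert c d; decide
        · rw [if_neg hj2]; generalize u j = c; generalize u i = d; revert c d; decide
  · refine Or.inl ⟨i, ?_⟩
    funext j
    show (u j + 1) + (u i + 1) * ((if j = i then 1 else 0) + 1)
        = (u j + u i * ((if j = i then 1 else 0) + 1)) + (if j = i then 1 else 0)
    by_cases hj : j = i
    · rw [if_pos hj]
      rw [hj]
      generalize u i = d; revert d; decide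
    · rw [if_neg hj]
      generalize u j = c; generalize u i = d; revert c d; decide

def TIso (hk : 1 ≤ k) (i : Fin (2*k)) : PC k ≃g PC k :=
  mkIso (TEquiv i) (adj_T hk i) (adj_T hk i)

@[simp] lemma TIso_apply (hk : 1 ≤ k) (i : Fin (2*k)) (v : V k) : TIso hk i v = Tmap i v := rfl


lemma exists_perm_finset (s t : Finset (Fin (2*k))) (h : s.card = t.card) :
    ∃ σ : Equiv.Perm (Fin (2*k)), ∀ j, (j ∈ s ↔ σ j ∈ t) := by
  classical
  have hc : sᶜ.card = tᶜ.card := by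
    rw [Finset.card_compl, Finset.card_compl, h]
  let e1 : {x // x ∈ s} ≃ {x // x ∈ t} := Finset.equivOfCardEq h
  let e2 : {x // ¬ x ∈ s} ≃ {x // ¬ x ∈ t} :=
    ((Equiv.subtypeEquivRight (fun x => (Finset.mem_compl).symm)).trans
      (Finset.equivOfCardEq hc)).trans
      (Equiv.subtypeEquivRight (fun x => Finset.mem_compl))
  refine ⟨(Equiv.sumCompl (· ∈ s)).symm.trans ((e1.sumCongr e2).trans
      (Equiv.sumCompl (· ∈ t))), ?_⟩
  intro j
  by_cases hj : j ∈ s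
  · simp only [Equiv.trans_apply, Equiv.sumCompl_symm_apply_of_pos hj,
      Equiv.sumCongr_apply, Sum.map_inl, Equiv.sumCompl_apply_inl]
    exact ⟨fun _ => (e1 ⟨j, hj⟩).2, fun _ => hj⟩
  · simp only [Equiv.trans_apply, Equiv.sumCompl_symm_apply_of_neg hj,
      Equiv.sumCongr_apply, Sum.map_inr, Equiv.sumCompl_apply_inr]
    exact ⟨fun h' => absurd h' hj, fun h' => absurd h' (e2 ⟨j, hj⟩).2⟩

lemma wt_perm (σ : Equiv.Perm (Fin (2*k))) (v : V k) :
    wt (fun j => v (σ j)) = wt v := by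
  classical
  refine Finset.card_bij (fun j _ => σ j) ?_ ?_ ?_
  · intro a ha
    simp only [Finset.mem_filter, Finset.mem_univ, true_and] at ha ⊢
    exact ha
  · intro a _ b _ hab
    exact σ.injective hab
  · intro b hb
    refine ⟨σ.symm b, ?_, by simp⟩
    simp only [Finset.mem_filter, Finset.mem_univ, true_and] at hb ⊢
    simpa using hb

lemma exists_perm_eq (v' y' : V k) (h : wt v' = wt y') :
    ∃ σ : Equiv.Perm (Fin (2*k)), (fun j => v' (σ j)) = y' := by
  classical
  obtain ⟨σ, hσ⟩ := exists_perm_finset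
    (Finset.univ.filter fun i => y' i = 1) (Finset.univ.filter fun i => v' i = 1) h.symm
  refine ⟨σ, ?_⟩
  funext j
  have hj := hσ j
  simp only [Finset.mem_filter, Finset.mem_univ, true_and] at hj
  rcases z2cases (y' j) with h0 | h1
  · rcases z2cases (v' (σ j)) with h0' | h1'
    · rw [h0, h0']
    · exact absurd (hj.mpr h1') (by rw [h0]; decide)
  · rw [h1, hj.mp h1]

lemma Tmap_zero (i : Fin (2*k)) : Tmap i (0 : V k) = 0 := by
  funext j
  show (0:ZMod 2) + 0 * ((if j = i then 1 else 0) + 1) = 0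
  rw [zero_mul, add_zero]

lemma Tmap_eq_of_one (i : Fin (2*k)) (v : V k) (hv : v i = 1) :
    Tmap i v = (v + E i) + Jv k := by
  funext j
  show v j + v i * ((if j = i then 1 else 0) + 1) = (v j + (if j = i then 1 else 0)) + 1
  rw [hv]
  generalize v j = c
  by_cases hj : j = i
  · rw [if_pos hj]; revert c; decide
  · rw [if_neg hj]; revert c; decide

lemma wt_Tmap_of_one (i : Fin (2*k)) (v : V k) (hv : v i = 1) :
    wt (Tmap i v) + wt v = 2*k + 1 := by
  rw [Tmap_eq_of_one i v hv]
  rcases wt_add_E v i with ⟨_, he⟩ | ⟨h0, _⟩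
  · have hc := wt_compl (v + E i)
    omega
  · rw [hv] at h0; exact absurd h0 one_ne_zero'

lemma exists_fix0 (hk : 1 ≤ k) (v' y' : V k)
    (h : min (wt v') (2*k + 1 - wt v') = min (wt y') (2*k + 1 - wt y')) :
    ∃ φ : PC k ≃g PC k, φ 0 = 0 ∧ φ v' = y' := by
  have hv := wt_le v'
  have hy := wt_le y'
  have hcase : wt v' = wt y' ∨ wt v' + wt y' = 2*k + 1 := by omega
  rcases hcase with heq | hco
  · obtain ⟨σ, hσ⟩ := exists_perm_eq v' y' heq
    exact ⟨permIso hk σ, by funext j; rfl, hσ⟩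
  · have hpos : 0 < wt v' := by omega
    obtain ⟨i, hi⟩ := wt_pos_exists v' hpos
    have hwt : wt (Tmap i v') = wt y' := by
      have := wt_Tmap_of_one i v' hi
      omega
    obtain ⟨σ, hσ⟩ := exists_perm_eq (Tmap i v') y' hwt
    refine ⟨(TIso hk i).trans (permIso hk σ), ?_, ?_⟩
    · show permIso hk σ (TIso hk i 0) = 0
      rw [TIso_apply, Tmap_zero]
      funext j; rfl
    · show permIso hk σ (TIso hk i v') = y'
      rw [TIso_apply, permIso_apply]
      exact hσ

end PCAux

/-- `PC(2k)` is distance-transitive. -/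
theorem PC_distanceTransitive (k : ℕ) (hk : 1 ≤ k) (u v x y : Fin (2*k) → ZMod 2)
    (h : (PC k).dist u v = (PC k).dist x y) :
    ∃ φ : PC k ≃g PC k, φ u = x ∧ φ v = y := by
  rw [PCAux.dist_eq hk, PCAux.dist_eq hk] at h
  obtain ⟨ψ, hψ0, hψ⟩ := PCAux.exists_fix0 hk (u + v) (x + y) h
  refine ⟨((PCAux.transIso hk u).trans ψ).trans (PCAux.transIso hk x), ?_, ?_⟩
  · show PCAux.transIso hk x (ψ (PCAux.transIso hk u u)) = x
    rw [PCAux.transIso_apply, PCAux.transIso_apply, PCAux.addself, hψ0, zero_add]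
  · show PCAux.transIso hk x (ψ (PCAux.transIso hk u v)) = y
    rw [PCAux.transIso_apply, PCAux.transIso_apply, add_comm v u, hψ, add_comm x y,
      add_assoc, PCAux.addself, add_zero]
end
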